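/- arXiv:1408.3064 — 7 statements merged into one kernel-verified Lean document; each statement's English description precedes it below -/
import Mathlib

section
/- Let N be a positive integer, let a_0, a_1, …, a_{N−1} be complex numbers, and let H be an integer with 0 ≤ H ≤ N−1. Then |(1/N) Σ_{n=0}^{N−1} a_n|² ≤ (N+H)/(N²(H+1)) · Σ_{n=0}^{N−1} |a_n|² + 2(N+H)/(N²(H+1)²) · Σ_{h=1}^{H} (H+1−h) · Re( Σ_{n=0}^{N−h−1} a_n · conj(a_{n+h}) ). -/
open Finset

section VDCaux

/-- Decomposition of a double sum over a square into diagonal and off-diagonal parts. -/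
lemma vdc_pair_decomp {M : Type*} [AddCommMonoid M] (K : ℕ) (f : ℕ → ℕ → M) :
    ∑ m ∈ Finset.range K, ∑ m' ∈ Finset.range K, f m m'
      = (∑ m ∈ Finset.range K, f m m)
        + ∑ h ∈ Finset.Icc 1 (K - 1), ∑ m ∈ Finset.range (K - h), (f m (m + h) + f (m + h) m) := by
  classical
  rw [← Finset.sum_product']
  set s := Finset.range K ×ˢ Finset.range K with hs
  rw [← Finset.sum_filter_add_sum_filter_not s (fun p => p.1 = p.2) (fun p => f p.1 p.2),
    ← Finset.sum_filter_add_sum_filter_not (s.filter (fun p => ¬p.1 = p.2))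
      (fun p => p.1 < p.2) (fun p => f p.1 p.2), Finset.filter_filter, Finset.filter_filter]
  have e1 : s.filter (fun p => ¬p.1 = p.2 ∧ p.1 < p.2) = s.filter (fun p => p.1 < p.2) :=
    Finset.filter_congr (fun p _ => by omega)
  have e2 : s.filter (fun p => ¬p.1 = p.2 ∧ ¬p.1 < p.2) = s.filter (fun p => p.2 < p.1) :=
    Finset.filter_congr (fun p _ => by omega)
  rw [e1, e2]
  have ediag : ∑ p ∈ s.filter (fun p => p.1 = p.2), f p.1 p.2 = ∑ m ∈ Finset.range K, f m m := by
    apply Finset.sum_nbij' (fun p => p.1) (fun m => (m, m))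
    · rintro ⟨x, y⟩ hp
      simp only [hs, Finset.mem_filter, Finset.mem_product, Finset.mem_range] at hp ⊢
      omega
    · intro m hm
      simp only [Finset.mem_range] at hm
      simp [hs, hm]
    · rintro ⟨x, y⟩ hp
      simp only [hs, Finset.mem_filter, Finset.mem_product, Finset.mem_range] at hp
      simp [hp.2]
    · intro m hm; rfl
    · rintro ⟨x, y⟩ hp
      simp only [hs, Finset.mem_filter, Finset.mem_product, Finset.mem_range] at hp
      simp [hp.2]
  have elt : ∑ p ∈ s.filter (fun p => p.1 < p.2), f p.1 p.2
      = ∑ h ∈ Finset.Icc 1 (K - 1), ∑ m ∈ Finset.range (K - h), f m (m + h) := by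
    rw [← Finset.sum_sigma (Finset.Icc 1 (K - 1)) (fun h => Finset.range (K - h))
      (fun q => f q.2 (q.2 + q.1))]
    apply Finset.sum_nbij' (fun p => ⟨p.2 - p.1, p.1⟩) (fun q => (q.2, q.2 + q.1))
    · rintro ⟨x, y⟩ hp
      simp only [hs, Finset.mem_filter, Finset.mem_product, Finset.mem_range] at hp
      simp only [Finset.mem_sigma, Finset.mem_Icc, Finset.mem_range]
      omega
    · rintro ⟨h, m⟩ hq
      simp only [Finset.mem_sigma, Finset.mem_Icc, Finset.mem_range] at hq
      simp only [hs, Finset.mem_filter, Finset.mem_product, Finset.mem_range]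
      omega
    · rintro ⟨x, y⟩ hp
      simp only [hs, Finset.mem_filter, Finset.mem_product, Finset.mem_range] at hp
      dsimp only
      simp only [Prod.mk.injEq, true_and, and_true]
      omega
    · rintro ⟨h, m⟩ hq
      simp [Nat.add_sub_cancel_left]
    · rintro ⟨x, y⟩ hp
      simp only [hs, Finset.mem_filter, Finset.mem_product, Finset.mem_range] at hp
      simp only []
      congr 1
      omega
  have egt : ∑ p ∈ s.filter (fun p => p.2 < p.1), f p.1 p.2
      = ∑ h ∈ Finset.Icc 1 (K - 1), ∑ m ∈ Finset.range (K - h), f (m + h) m := by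
    rw [← Finset.sum_sigma (Finset.Icc 1 (K - 1)) (fun h => Finset.range (K - h))
      (fun q => f (q.2 + q.1) q.2)]
    apply Finset.sum_nbij' (fun p => ⟨p.1 - p.2, p.2⟩) (fun q => (q.2 + q.1, q.2))
    · rintro ⟨x, y⟩ hp
      simp only [hs, Finset.mem_filter, Finset.mem_product, Finset.mem_range] at hp
      simp only [Finset.mem_sigma, Finset.mem_Icc, Finset.mem_range]
      omega
    · rintro ⟨h, m⟩ hq
      simp only [Finset.mem_sigma, Finset.mem_Icc, Finset.mem_range] at hq
      simp only [hs, Finset.mem_filter, Finset.mem_product, Finset.mem_range]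
      omega
    · rintro ⟨x, y⟩ hp
      simp only [hs, Finset.mem_filter, Finset.mem_product, Finset.mem_range] at hp
      dsimp only
      simp only [Prod.mk.injEq, true_and, and_true]
      omega
    · rintro ⟨h, m⟩ hq
      simp [Nat.add_sub_cancel_left]
    · rintro ⟨x, y⟩ hp
      simp only [hs, Finset.mem_filter, Finset.mem_product, Finset.mem_range] at hp
      simp only []
      congr 1
      omega
  rw [ediag, elt, egt, ← Finset.sum_add_distrib]
  congr 1
  exact Finset.sum_congr rfl fun h _ => (Finset.sum_add_distrib).symm

end VDCaux

section VDCaux2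

open Complex in
/-- Summing the product of two shifted window indicators. -/
lemma vdc_c1 (N H m m' : ℕ) (hm : m < N) (a : ℕ → ℂ) :
    ∑ n ∈ Finset.range (N + H),
        ((if n ∈ Finset.Icc m (m + H) then a m else 0) *
          (starRingEnd ℂ) (if n ∈ Finset.Icc m' (m' + H) then a m' else 0))
      = ((min (m + H) (m' + H) + 1 - max m m' : ℕ) : ℂ) * (a m * (starRingEnd ℂ) (a m')) := by
  have hint : Finset.Icc m (m + H) ∩ Finset.Icc m' (m' + H)
      = Finset.Icc (max m m') (min (m + H) (m' + H)) := by
    ext x; simp only [Finset.mem_inter, Finset.mem_Icc]; omega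
  have step : ∀ n, (if n ∈ Finset.Icc m (m + H) then a m else 0) *
        (starRingEnd ℂ) (if n ∈ Finset.Icc m' (m' + H) then a m' else 0)
      = (if n ∈ Finset.Icc m (m + H) ∩ Finset.Icc m' (m' + H)
          then a m * (starRingEnd ℂ) (a m') else 0) := by
    intro n
    by_cases h1 : n ∈ Finset.Icc m (m + H) <;> by_cases h2 : n ∈ Finset.Icc m' (m' + H) <;>
      simp [Finset.mem_inter, h1, h2]
  rw [Finset.sum_congr rfl (fun n _ => step n), Finset.sum_ite_mem]
  have hsub : Finset.range (N + H) ∩ (Finset.Icc m (m + H) ∩ Finset.Icc m' (m' + H))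
      = Finset.Icc m (m + H) ∩ Finset.Icc m' (m' + H) := by
    apply Finset.inter_eq_right.mpr
    intro x hx
    simp only [Finset.mem_inter, Finset.mem_Icc] at hx
    simp only [Finset.mem_range]
    omega
  rw [hsub, Finset.sum_const, hint, Nat.card_Icc, nsmul_eq_mul]

end VDCaux2

/-- The expansion of `∑ |b n|²` for the van der Corput window sums. -/
lemma vdc_main (N H : ℕ) (hN : 1 ≤ N) (hH : H ≤ N - 1) (a : ℕ → ℂ) :
    ∑ n ∈ Finset.range (N + H),
        ‖∑ m ∈ Finset.range N, (if n ∈ Finset.Icc m (m + H) then a m else 0)‖ ^ 2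
      = ((H : ℝ) + 1) * ∑ m ∈ Finset.range N, ‖a m‖ ^ 2
        + 2 * ∑ h ∈ Finset.Icc 1 H, ((H : ℝ) + 1 - (h : ℝ)) *
            (∑ n ∈ Finset.range (N - h), a n * (starRingEnd ℂ) (a (n + h))).re := by
  have habs : ∀ z : ℂ, ‖z‖ ^ 2 = (z * (starRingEnd ℂ) z).re := by
    intro z; rw [Complex.mul_conj]; simp [Complex.sq_norm]
  have hre : ∀ (k : ℕ) (z : ℂ), (((k : ℕ) : ℂ) * z).re = (k : ℝ) * z.re := by
    intro k z; simp [Complex.mul_re]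
  have hsymm : ∀ z w : ℂ, (z * (starRingEnd ℂ) w).re = (w * (starRingEnd ℂ) z).re := by
    intro z w; simp [Complex.mul_re]; ring
  -- expand the square of the window sums
  have hexp : ∑ n ∈ Finset.range (N + H),
        ((∑ m ∈ Finset.range N, (if n ∈ Finset.Icc m (m + H) then a m else 0)) *
          (starRingEnd ℂ) (∑ m ∈ Finset.range N, (if n ∈ Finset.Icc m (m + H) then a m else 0)))
      = ∑ m ∈ Finset.range N, ∑ m' ∈ Finset.range N,
          ((min (m + H) (m' + H) + 1 - max m m' : ℕ) : ℂ) * (a m * (starRingEnd ℂ) (a m')) := by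
    have h1 : ∀ n, ((∑ m ∈ Finset.range N, (if n ∈ Finset.Icc m (m + H) then a m else 0)) *
          (starRingEnd ℂ) (∑ m ∈ Finset.range N, (if n ∈ Finset.Icc m (m + H) then a m else 0)))
        = ∑ m ∈ Finset.range N, ∑ m' ∈ Finset.range N,
            ((if n ∈ Finset.Icc m (m + H) then a m else 0) *
              (starRingEnd ℂ) (if n ∈ Finset.Icc m' (m' + H) then a m' else 0)) := by
      intro n
      rw [map_sum, Finset.sum_mul_sum]
    rw [Finset.sum_congr rfl fun n _ => h1 n, Finset.sum_comm]
    refine Finset.sum_congr rfl fun m hm => ?_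
    rw [Finset.sum_comm]
    exact Finset.sum_congr rfl fun m' _ => vdc_c1 N H m m' (Finset.mem_range.mp hm) a
  calc ∑ n ∈ Finset.range (N + H),
        ‖∑ m ∈ Finset.range N, (if n ∈ Finset.Icc m (m + H) then a m else 0)‖ ^ 2
      = (∑ n ∈ Finset.range (N + H),
          ((∑ m ∈ Finset.range N, (if n ∈ Finset.Icc m (m + H) then a m else 0)) *
            (starRingEnd ℂ) (∑ m ∈ Finset.range N,
              (if n ∈ Finset.Icc m (m + H) then a m else 0)))).re := by
        rw [Complex.re_sum]
        exact Finset.sum_congr rfl fun n _ => habs _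
    _ = (∑ m ∈ Finset.range N, (((min (m + H) (m + H) + 1 - max m m : ℕ) : ℂ) *
            (a m * (starRingEnd ℂ) (a m))).re)
        + ∑ h ∈ Finset.Icc 1 (N - 1), ∑ m ∈ Finset.range (N - h),
            ((((min (m + H) (m + h + H) + 1 - max m (m + h) : ℕ) : ℂ) *
                (a m * (starRingEnd ℂ) (a (m + h)))).re
              + (((min (m + h + H) (m + H) + 1 - max (m + h) m : ℕ) : ℂ) *
                (a (m + h) * (starRingEnd ℂ) (a m))).re) := by
        rw [hexp, vdc_pair_decomp N
          (fun m m' => ((min (m + H) (m' + H) + 1 - max m m' : ℕ) : ℂ) *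
            (a m * (starRingEnd ℂ) (a m'))), Complex.add_re, Complex.re_sum, Complex.re_sum]
        congr 1
        refine Finset.sum_congr rfl fun h _ => ?_
        rw [Complex.re_sum]
        exact Finset.sum_congr rfl fun m _ => Complex.add_re _ _
    _ = ((H : ℝ) + 1) * ∑ m ∈ Finset.range N, ‖a m‖ ^ 2
        + ∑ h ∈ Finset.Icc 1 (N - 1), ((H + 1 - h : ℕ) : ℝ) * (2 *
            (∑ n ∈ Finset.range (N - h), a n * (starRingEnd ℂ) (a (n + h))).re) := by
        congr 1
        · have : ∀ m, (((min (m + H) (m + H) + 1 - max m m : ℕ) : ℂ) *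
              (a m * (starRingEnd ℂ) (a m))).re = ((H : ℝ) + 1) * ‖a m‖ ^ 2 := by
            intro m
            have e : min (m + H) (m + H) + 1 - max m m = H + 1 := by omega
            rw [e, hre, habs]
            push_cast
            ring
          rw [Finset.sum_congr rfl fun m _ => this m, ← Finset.mul_sum]
        · refine Finset.sum_congr rfl fun h hh => ?_
          have hcongr : ∀ m, ((((min (m + H) (m + h + H) + 1 - max m (m + h) : ℕ) : ℂ) *
                (a m * (starRingEnd ℂ) (a (m + h)))).re
              + (((min (m + h + H) (m + H) + 1 - max (m + h) m : ℕ) : ℂ) *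
                (a (m + h) * (starRingEnd ℂ) (a m))).re)
              = ((H + 1 - h : ℕ) : ℝ) * (2 * (a m * (starRingEnd ℂ) (a (m + h))).re) := by
            intro m
            have e1 : min (m + H) (m + h + H) + 1 - max m (m + h) = H + 1 - h := by omega
            have e2 : min (m + h + H) (m + H) + 1 - max (m + h) m = H + 1 - h := by omega
            rw [e1, e2, hre, hre, hsymm (a (m + h)) (a m)]
            ring
          rw [Finset.sum_congr rfl fun m _ => hcongr m, ← Finset.mul_sum, ← Finset.mul_sum,
            ← Complex.re_sum]
    _ = ((H : ℝ) + 1) * ∑ m ∈ Finset.range N, ‖a m‖ ^ 2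
        + 2 * ∑ h ∈ Finset.Icc 1 H, ((H : ℝ) + 1 - (h : ℝ)) *
            (∑ n ∈ Finset.range (N - h), a n * (starRingEnd ℂ) (a (n + h))).re := by
        congr 1
        rw [← Finset.sum_subset (Finset.Icc_subset_Icc_right hH)
          (fun h _ hh => by
            have : H + 1 - h = 0 := by
              simp only [Finset.mem_Icc] at *
              omega
            rw [this]
            simp), Finset.mul_sum]
        refine Finset.sum_congr rfl fun h hh => ?_
        have hhH : h ≤ H + 1 := by
          simp only [Finset.mem_Icc] at hh
          omega
        rw [Nat.cast_sub hhH]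
        push_cast
        ring

/-- Each `a m` is counted exactly `H + 1` times among the window sums. -/
lemma vdc_sum_b (N H : ℕ) (hN : 1 ≤ N) (hH : H ≤ N - 1) (a : ℕ → ℂ) :
    ∑ n ∈ Finset.range (N + H),
        ∑ m ∈ Finset.range N, (if n ∈ Finset.Icc m (m + H) then a m else 0)
      = ((H : ℂ) + 1) * ∑ m ∈ Finset.range N, a m := by
  rw [Finset.sum_comm, Finset.mul_sum]
  refine Finset.sum_congr rfl fun m hm => ?_
  rw [Finset.sum_ite_mem]
  have hsub : Finset.range (N + H) ∩ Finset.Icc m (m + H) = Finset.Icc m (m + H) := by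
    apply Finset.inter_eq_right.mpr
    intro x hx
    simp only [Finset.mem_Icc] at hx
    simp only [Finset.mem_range] at hm ⊢
    omega
  rw [hsub, Finset.sum_const, Nat.card_Icc, nsmul_eq_mul]
  have e : m + H + 1 - m = H + 1 := by omega
  rw [e]
  push_cast
  ring


/-- van der Corput's inequality: for complex numbers `a_0, …, a_{N-1}` and `0 ≤ H ≤ N-1`,
`|(1/N) ∑_{n<N} a_n|² ≤ (N+H)/(N²(H+1)) ∑_{n<N} |a_n|²
  + 2(N+H)/(N²(H+1)²) ∑_{h=1}^H (H+1-h) Re(∑_{n=0}^{N-h-1} a_n conj(a_{n+h}))`. -/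
theorem van_der_corput_inequality (N H : ℕ) (hN : 1 ≤ N) (hH : H ≤ N - 1) (a : ℕ → ℂ) :
    ‖(N : ℂ)⁻¹ * ∑ n ∈ Finset.range N, a n‖ ^ 2 ≤
      ((N : ℝ) + H) / ((N : ℝ) ^ 2 * ((H : ℝ) + 1)) * ∑ n ∈ Finset.range N, ‖a n‖ ^ 2
      + 2 * ((N : ℝ) + H) / ((N : ℝ) ^ 2 * ((H : ℝ) + 1) ^ 2) *
          ∑ h ∈ Finset.Icc 1 H, ((H : ℝ) + 1 - (h : ℝ)) *
            (∑ n ∈ Finset.range (N - h), a n * (starRingEnd ℂ) (a (n + h))).re := by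
  set S := ∑ n ∈ Finset.range N, a n with hS
  set Q := ∑ n ∈ Finset.range N, ‖a n‖ ^ 2 with hQ
  set R := ∑ h ∈ Finset.Icc 1 H, ((H : ℝ) + 1 - (h : ℝ)) *
      (∑ n ∈ Finset.range (N - h), a n * (starRingEnd ℂ) (a (n + h))).re with hR
  have hn : (0 : ℝ) < (N : ℝ) := by exact_mod_cast hN
  have hk : (0 : ℝ) < (H : ℝ) + 1 := by positivity
  -- Cauchy–Schwarz on the window sums
  have key : ((H : ℝ) + 1) ^ 2 * ‖S‖ ^ 2
      ≤ ((N : ℝ) + H) * (((H : ℝ) + 1) * Q + 2 * R) := by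
    have h1 : (((H : ℝ) + 1) * ‖S‖) ^ 2
        = ‖∑ n ∈ Finset.range (N + H),
            ∑ m ∈ Finset.range N, (if n ∈ Finset.Icc m (m + H) then a m else 0)‖ ^ 2 := by
      rw [vdc_sum_b N H hN hH a, norm_mul]
      have e : ((H : ℂ) + 1) = (((H : ℝ) + 1 : ℝ) : ℂ) := by push_cast; ring
      rw [e, Complex.norm_of_nonneg hk.le]
    have h3 : ‖∑ n ∈ Finset.range (N + H),
          ∑ m ∈ Finset.range N, (if n ∈ Finset.Icc m (m + H) then a m else 0)‖
        ≤ ∑ n ∈ Finset.range (N + H),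
            ‖∑ m ∈ Finset.range N, (if n ∈ Finset.Icc m (m + H) then a m else 0)‖ := by
      simpa using norm_sum_le (Finset.range (N + H))
        (fun n => ∑ m ∈ Finset.range N, (if n ∈ Finset.Icc m (m + H) then a m else 0))
    have h4 : (∑ n ∈ Finset.range (N + H),
          ‖∑ m ∈ Finset.range N, (if n ∈ Finset.Icc m (m + H) then a m else 0)‖) ^ 2
        ≤ ((N : ℝ) + H) * ∑ n ∈ Finset.range (N + H),
            ‖∑ m ∈ Finset.range N, (if n ∈ Finset.Icc m (m + H) then a m else 0)‖ ^ 2 := by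
      have := sq_sum_le_card_mul_sum_sq (s := Finset.range (N + H))
        (f := fun n => ‖∑ m ∈ Finset.range N,
          (if n ∈ Finset.Icc m (m + H) then a m else 0)‖)
      simpa [Finset.card_range] using this
    have h5 := vdc_main N H hN hH a
    calc ((H : ℝ) + 1) ^ 2 * ‖S‖ ^ 2 = (((H : ℝ) + 1) * ‖S‖) ^ 2 := by ring
      _ = _ := h1
      _ ≤ (∑ n ∈ Finset.range (N + H), ‖∑ m ∈ Finset.range N,
            (if n ∈ Finset.Icc m (m + H) then a m else 0)‖) ^ 2 := by
          apply pow_le_pow_left₀ (norm_nonneg _) h3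
      _ ≤ ((N : ℝ) + H) * ∑ n ∈ Finset.range (N + H),
            ‖∑ m ∈ Finset.range N, (if n ∈ Finset.Icc m (m + H) then a m else 0)‖ ^ 2 :=
          h4
      _ = ((N : ℝ) + H) * (((H : ℝ) + 1) * Q + 2 * R) := by rw [h5]
  have expand : ((N : ℝ) + H) / ((N : ℝ) ^ 2 * ((H : ℝ) + 1)) * Q
        + 2 * ((N : ℝ) + H) / ((N : ℝ) ^ 2 * ((H : ℝ) + 1) ^ 2) * R
      = (((N : ℝ) + H) * (((H : ℝ) + 1) * Q + 2 * R)) / ((N : ℝ) ^ 2 * ((H : ℝ) + 1) ^ 2) := by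
    field_simp
  have lhs_eq : ‖(N : ℂ)⁻¹ * S‖ ^ 2
      = (((H : ℝ) + 1) ^ 2 * ‖S‖ ^ 2) / ((N : ℝ) ^ 2 * ((H : ℝ) + 1) ^ 2) := by
    rw [norm_mul, norm_inv, Complex.norm_natCast]
    field_simp
  rw [expand, lhs_eq]
  exact div_le_div_of_nonneg_right key (by positivity) |>.trans_eq rfl
end

section
/- Let (X, F, μ, T) be an invertible measure-preserving system on a probability space, let a, b ∈ ℤ, let g, h ∈ L^∞(μ), and let p be a polynomial with real coefficients. Then ∫ sup_{N ≥ 1} sup_{t ∈ ℝ} |(1/N) Σ_{n=1}^{N} g(T^{an}x) h(T^{bn}x) e^{2πi p(n) t}| dμ(x) ≤ 2 ‖h‖_∞ ‖g‖_{L²(μ)}. -/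
open MeasureTheory Filter Finset

set_option linter.unusedSectionVars false

namespace MaxErgAux
open Set
open scoped ENNReal NNReal

variable {X : Type*} [MeasurableSpace X] {μ : Measure X}

/-- Running maximum of the Birkhoff sums `A 1, ..., A N` and `0`. -/
noncomputable def maxSum (S : X → X) (f : X → ℝ) : ℕ → X → ℝ
  | 0 => fun _ => 0
  | (N + 1) => fun x => max (maxSum S f N x) (birkhoffSum S f (N + 1) x)

variable {S : X → X} {f : X → ℝ}

lemma maxSum_nonneg (N : ℕ) (x : X) : 0 ≤ maxSum S f N x := by
  induction N with
  | zero => exact le_refl 0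
  | succ N ih => exact le_trans ih (le_max_left _ _)

lemma maxSum_mono {M N : ℕ} (h : M ≤ N) (x : X) : maxSum S f M x ≤ maxSum S f N x := by
  induction N with
  | zero => simp_all [Nat.le_zero.mp h]
  | succ N ih =>
    rcases Nat.le_succ_iff.mp h with h' | h'
    · exact le_trans (ih h') (le_max_left _ _)
    · subst h'; exact le_refl _

lemma measurable_birkhoffSum (hS : Measurable S) (hf : Measurable f) (n : ℕ) :
    Measurable fun x => birkhoffSum S f n x := by
  unfold birkhoffSum
  exact Finset.measurable_sum _ fun k _ => hf.comp (hS.iterate k)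

lemma measurable_maxSum (hS : Measurable S) (hf : Measurable f) (N : ℕ) :
    Measurable (maxSum S f N) := by
  induction N with
  | zero => exact measurable_const
  | succ N ih => exact ih.max (measurable_birkhoffSum hS hf (N + 1))

lemma birkhoffSum_le_maxSum {n N : ℕ} (h : n ≤ N) (x : X) :
    birkhoffSum S f n x ≤ maxSum S f N x := by
  induction N with
  | zero => simp [Nat.le_zero.mp h, birkhoffSum, maxSum]
  | succ N ih =>
    rcases Nat.le_succ_iff.mp h with h' | h'
    · exact le_trans (ih h') (le_max_left _ _)
    · subst h'; exact le_max_right _ _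

lemma maxSum_attained {N : ℕ} {x : X} (h : 0 < maxSum S f N x) :
    ∃ n, 1 ≤ n ∧ n ≤ N ∧ maxSum S f N x = birkhoffSum S f n x := by
  induction N with
  | zero => exact absurd h (lt_irrefl 0)
  | succ N ih =>
    rcases le_total (birkhoffSum S f (N + 1) x) (maxSum S f N x) with h' | h'
    · have hm : maxSum S f (N + 1) x = maxSum S f N x := max_eq_left h'
      rw [hm] at h ⊢
      obtain ⟨n, h1, h2, h3⟩ := ih h
      exact ⟨n, h1, h2.trans (Nat.le_succ N), h3⟩
    · have hm : maxSum S f (N + 1) x = birkhoffSum S f (N + 1) x := max_eq_right h'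
      exact ⟨N + 1, Nat.succ_le_succ (Nat.zero_le N), le_refl _, hm⟩

lemma maxSum_le_add {N : ℕ} {x : X} (h : 0 < maxSum S f N x) :
    maxSum S f N x ≤ f x + maxSum S f N (S x) := by
  obtain ⟨n, h1, h2, h3⟩ := maxSum_attained h
  obtain ⟨m, rfl⟩ : ∃ m, n = m + 1 := ⟨n - 1, (Nat.succ_pred_eq_of_pos h1).symm⟩
  rw [h3, birkhoffSum_succ']
  exact (add_le_add_iff_left _).mpr (birkhoffSum_le_maxSum (le_trans (Nat.le_succ m) h2) (S x))

lemma abs_birkhoffSum_le {C : ℝ} (hC : ∀ x, |f x| ≤ C) (n : ℕ) (x : X) :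
    |birkhoffSum S f n x| ≤ n * C := by
  calc |birkhoffSum S f n x| ≤ ∑ k ∈ Finset.range n, |f (S^[k] x)| :=
        Finset.abs_sum_le_sum_abs _ _
    _ ≤ ∑ _k ∈ Finset.range n, C := Finset.sum_le_sum fun k _ => hC _
    _ = n * C := by simp [mul_comm]

lemma abs_maxSum_le {C : ℝ} (hC0 : 0 ≤ C) (hC : ∀ x, |f x| ≤ C) (N : ℕ) (x : X) :
    |maxSum S f N x| ≤ N * C := by
  rw [abs_of_nonneg (maxSum_nonneg N x)]
  induction N with
  | zero => simp [maxSum]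
  | succ N ih =>
    refine max_le (le_trans ih ?_) (le_trans (le_abs_self _)
      (abs_birkhoffSum_le hC (N + 1) x))
    have : (N : ℝ) ≤ (N : ℝ) + 1 := by linarith
    push_cast
    nlinarith

lemma integrable_of_bdd [IsFiniteMeasure μ] {u : X → ℝ} (hu : Measurable u) {C : ℝ}
    (h : ∀ x, |u x| ≤ C) : Integrable u μ :=
  ⟨hu.aestronglyMeasurable,
    HasFiniteIntegral.of_bounded (C := C) (ae_of_all _ fun x => by simpa using h x)⟩

/-- Hopf's maximal ergodic lemma, finite level. -/
lemma hopf_step [IsFiniteMeasure μ] (hS : MeasurePreserving S μ μ) (hf : Measurable f)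
    {C : ℝ} (hfC : ∀ x, |f x| ≤ C) (N : ℕ) :
    0 ≤ ∫ x in {x | 0 < maxSum S f N x}, f x ∂μ := by
  rcases isEmpty_or_nonempty X with hX | hX
  · simp [μ.eq_zero_of_isEmpty]
  have hC0 : 0 ≤ C := le_trans (abs_nonneg _) (hfC (Classical.arbitrary X))
  set M := maxSum S f N with hM
  have hM_meas : Measurable M := measurable_maxSum hS.measurable hf N
  have hE : MeasurableSet {x | 0 < M x} := measurableSet_lt measurable_const hM_meas
  set E := {x | 0 < M x} with hEdef
  have hM_int : Integrable M μ := integrable_of_bdd hM_meas (abs_maxSum_le hC0 hfC N)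
  have hMS_meas : Measurable fun x => M (S x) := hM_meas.comp hS.measurable
  have hMS_int : Integrable (fun x => M (S x)) μ :=
    integrable_of_bdd hMS_meas fun x => abs_maxSum_le hC0 hfC N (S x)
  have hf_int : Integrable f μ := integrable_of_bdd hf hfC
  have h1 : ∫ x in E, (M x - M (S x)) ∂μ ≤ ∫ x in E, f x ∂μ := by
    refine setIntegral_mono_on ((hM_int.sub hMS_int).integrableOn) (hf_int.integrableOn) hE ?_
    intro x hx
    have := maxSum_le_add (hx : 0 < M x)
    linarith
  have h2 : ∫ x in E, (M x - M (S x)) ∂μ = ∫ x in E, M x ∂μ - ∫ x in E, M (S x) ∂μ :=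
    integral_sub hM_int.integrableOn hMS_int.integrableOn
  have h3 : ∫ x in E, M x ∂μ = ∫ x, M x ∂μ := by
    rw [← integral_indicator hE]
    congr 1
    funext x
    by_cases hx : x ∈ E
    · simp [hx]
    · have : M x = 0 := le_antisymm (not_lt.mp hx) (maxSum_nonneg N x)
      simp [hx, this]
  have h4 : ∫ x in E, M (S x) ∂μ ≤ ∫ x, M (S x) ∂μ :=
    setIntegral_le_integral hMS_int (ae_of_all _ fun x => maxSum_nonneg N (S x))
  have h5 : ∫ x, M (S x) ∂μ = ∫ x, M x ∂μ := by
    rw [← integral_map hS.measurable.aemeasurable hM_meas.aestronglyMeasurable, hS.map_eq]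
  linarith

/-- Hopf's maximal ergodic lemma. -/
lemma hopf [IsFiniteMeasure μ] (hS : MeasurePreserving S μ μ) (hf : Measurable f)
    {C : ℝ} (hfC : ∀ x, |f x| ≤ C) :
    0 ≤ ∫ x in ⋃ N, {x | 0 < maxSum S f N x}, f x ∂μ := by
  have hf_int : Integrable f μ := integrable_of_bdd hf hfC
  refine ge_of_tendsto (tendsto_setIntegral_of_monotone
    (fun N => measurableSet_lt measurable_const (measurable_maxSum hS.measurable hf N))
    (fun i j hij x hx => lt_of_lt_of_le hx (maxSum_mono hij x))
    hf_int.integrableOn) (Eventually.of_forall fun N => hopf_step hS hf hfC N)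

lemma birkhoffSum_sub_const (S : X → X) (F : X → ℝ) (t : ℝ) (n : ℕ) (x : X) :
    birkhoffSum S (fun y => F y - t) n x = birkhoffSum S F n x - n * t := by
  unfold birkhoffSum
  rw [Finset.sum_sub_distrib, Finset.sum_const, Finset.card_range, nsmul_eq_mul]

/-- Weak type (1,1)-style maximal inequality on the level set. -/
lemma weak_aux [IsFiniteMeasure μ] (hS : MeasurePreserving S μ μ) {F : X → ℝ}
    (hF : Measurable F) (hF0 : ∀ x, 0 ≤ F x) {C : ℝ} (hC0 : 0 ≤ C) (hFC : ∀ x, F x ≤ C)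
    {t : ℝ} (ht : 0 < t) :
    t * (μ {x | ∃ n : ℕ, t * ((n : ℝ) + 1) < birkhoffSum S F (n + 1) x}).toReal
      ≤ ∫ x in {x | ∃ n : ℕ, t * ((n : ℝ) + 1) < birkhoffSum S F (n + 1) x}, F x ∂μ := by
  set f : X → ℝ := fun y => F y - t with hfdef
  have hf : Measurable f := hF.sub measurable_const
  have hfC : ∀ x, |f x| ≤ C + t := fun x => by
    rw [abs_le]; constructor
    · have := hF0 x; simp only [hfdef]; linarith
    · have := hFC x; simp only [hfdef]; linarith
  have hE : {x | ∃ n : ℕ, t * ((n : ℝ) + 1) < birkhoffSum S F (n + 1) x}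
      = ⋃ N, {x | 0 < maxSum S f N x} := by
    ext x
    simp only [Set.mem_setOf_eq, Set.mem_iUnion]
    constructor
    · rintro ⟨n, hn⟩
      refine ⟨n + 1, lt_of_lt_of_le ?_ (birkhoffSum_le_maxSum le_rfl x)⟩
      rw [birkhoffSum_sub_const]
      push_cast
      linarith
    · rintro ⟨N, hN⟩
      obtain ⟨n, h1, _, h3⟩ := maxSum_attained hN
      obtain ⟨m, rfl⟩ : ∃ m, n = m + 1 := ⟨n - 1, (Nat.succ_pred_eq_of_pos h1).symm⟩
      rw [h3, birkhoffSum_sub_const] at hN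
      refine ⟨m, ?_⟩
      push_cast at hN ⊢
      linarith
  have hF_int : Integrable F μ :=
    integrable_of_bdd hF fun x => abs_le.mpr ⟨by linarith [hF0 x], hFC x⟩
  have h0 := hopf hS hf hfC
  rw [hE]
  set E := ⋃ N, {x | 0 < maxSum S f N x} with hEdef
  have hEm : MeasurableSet E :=
    MeasurableSet.iUnion fun N =>
      measurableSet_lt measurable_const (measurable_maxSum hS.measurable hf N)
  have hsub : ∫ x in E, f x ∂μ = ∫ x in E, F x ∂μ - (μ E).toReal * t := by
    have h1 : ∫ x in E, f x ∂μ = ∫ x in E, F x ∂μ - ∫ _x in E, t ∂μ :=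
      integral_sub hF_int.integrableOn (integrableOn_const (measure_lt_top μ E).ne)
    rw [h1, setIntegral_const, smul_eq_mul, measureReal_def]
  rw [hsub] at h0
  linarith

lemma ofReal_ciSup {a : ℕ → ℝ} (hbd : BddAbove (Set.range a)) :
    ENNReal.ofReal (⨆ n, a n) = ⨆ n, ENNReal.ofReal (a n) := by
  refine le_antisymm ?_ (iSup_le fun n => ENNReal.ofReal_le_ofReal (le_ciSup hbd n))
  rw [le_iSup_iff]
  intro b hb
  rcases eq_or_ne b ⊤ with rfl | hb'
  · exact le_top
  · have hab : ∀ n, a n ≤ b.toReal := fun n => by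
      rcases le_or_gt (a n) 0 with h | h
      · exact h.trans ENNReal.toReal_nonneg
      · exact (ENNReal.ofReal_le_iff_le_toReal hb').mp (hb n)
    calc ENNReal.ofReal (⨆ n, a n) ≤ ENNReal.ofReal b.toReal :=
          ENNReal.ofReal_le_ofReal (ciSup_le hab)
      _ = b := ENNReal.ofReal_toReal hb'

/-- Dominated maximal ergodic inequality with constant 2 in `L¹`-vs-`L²` form. -/
lemma core [IsProbabilityMeasure μ] (hS : MeasurePreserving S μ μ) {F : X → ℝ}
    (hF : Measurable F) (hF0 : ∀ x, 0 ≤ F x) {C : ℝ} (hC0 : 0 ≤ C) (hFC : ∀ x, F x ≤ C) :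
    ∫⁻ x, (⨆ n : ℕ, ENNReal.ofReal (birkhoffSum S F (n + 1) x / ((n : ℝ) + 1))) ∂μ
      ≤ 2 * (∫⁻ x, ENNReal.ofReal (F x ^ 2) ∂μ) ^ (1/2 : ℝ) := by
  set B := ∫⁻ x, ENNReal.ofReal (F x ^ 2) ∂μ with hBdef
  have hB_le : B ≤ ENNReal.ofReal (C ^ 2) := by
    calc B ≤ ∫⁻ _x, ENNReal.ofReal (C ^ 2) ∂μ :=
          lintegral_mono fun x => ENNReal.ofReal_le_ofReal (by nlinarith [hF0 x, hFC x])
      _ = ENNReal.ofReal (C ^ 2) := by simp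
  have hB_ne : B ≠ ⊤ := (hB_le.trans_lt ENNReal.ofReal_lt_top).ne
  have hA0 : ∀ (n : ℕ) (x : X), 0 ≤ birkhoffSum S F n x := fun n x =>
    Finset.sum_nonneg fun k _ => hF0 _
  have hAC : ∀ (n : ℕ) (x : X), birkhoffSum S F n x ≤ n * C := fun n x => by
    calc birkhoffSum S F n x ≤ ∑ _k ∈ Finset.range n, C :=
          Finset.sum_le_sum fun k _ => hFC _
      _ = n * C := by simp [mul_comm]
  have hbdd : ∀ x, BddAbove (Set.range fun n : ℕ => birkhoffSum S F (n + 1) x / ((n : ℝ) + 1)) := by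
    intro x
    refine ⟨C, ?_⟩
    rintro r ⟨n, rfl⟩
    rw [div_le_iff₀ (by positivity)]
    calc birkhoffSum S F (n + 1) x ≤ ((n : ℝ) + 1) * C := by
          have := hAC (n + 1) x; push_cast at this ⊢; linarith
      _ = C * ((n : ℝ) + 1) := mul_comm _ _
  set Mstar : X → ℝ := fun x => ⨆ n : ℕ, birkhoffSum S F (n + 1) x / ((n : ℝ) + 1) with hMdef
  have hM0 : ∀ x, 0 ≤ Mstar x := fun x =>
    le_trans (div_nonneg (hA0 1 x) (by norm_num)) (le_ciSup (hbdd x) 0)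
  have hM_meas : Measurable Mstar :=
    Measurable.iSup fun n => (measurable_birkhoffSum hS.measurable hF (n + 1)).div_const _
  have hint_eq : ∀ x, (⨆ n : ℕ, ENNReal.ofReal (birkhoffSum S F (n + 1) x / ((n : ℝ) + 1)))
      = ENNReal.ofReal (Mstar x) := fun x => (ofReal_ciSup (hbdd x)).symm
  rw [lintegral_congr hint_eq,
    lintegral_eq_lintegral_meas_lt μ (ae_of_all _ hM0) hM_meas.aemeasurable]
  -- pointwise bound on the distribution function
  have hkey : ∀ s : ℝ, s ∈ Set.Ioi (0:ℝ) →
      μ {x | s < Mstar x} ≤ min 1 (B / (ENNReal.ofReal s) ^ 2) := by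
    intro s hs
    rw [Set.mem_Ioi] at hs
    have hEeq : {x | s < Mstar x}
        = {x | ∃ n : ℕ, s * ((n : ℝ) + 1) < birkhoffSum S F (n + 1) x} := by
      ext x
      simp only [Set.mem_setOf_eq, hMdef, lt_ciSup_iff (hbdd x)]
      constructor
      · rintro ⟨n, hn⟩; exact ⟨n, by rwa [lt_div_iff₀ (by positivity)] at hn⟩
      · rintro ⟨n, hn⟩; exact ⟨n, by rwa [lt_div_iff₀ (by positivity)]⟩
    rw [hEeq]
    refine le_min prob_le_one ?_
    set E := {x | ∃ n : ℕ, s * ((n : ℝ) + 1) < birkhoffSum S F (n + 1) x} with hEdef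
    have hEm : MeasurableSet E := by
      have : E = ⋃ n : ℕ, {x | s * ((n : ℝ) + 1) < birkhoffSum S F (n + 1) x} := by
        ext x; simp [hEdef]
      rw [this]
      exact MeasurableSet.iUnion fun n =>
        measurableSet_lt measurable_const (measurable_birkhoffSum hS.measurable hF (n + 1))
    set m := μ E with hm
    have hm_ne : m ≠ ⊤ := (measure_lt_top μ E).ne
    rcases eq_or_ne m 0 with hm0 | hm0
    · rw [hm0]; exact zero_le
    have hF_int : Integrable F μ :=
      integrable_of_bdd hF fun x => abs_le.mpr ⟨by linarith [hF0 x], hFC x⟩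
    -- weak type inequality in ℝ≥0∞
    have h1 : ENNReal.ofReal s * m ≤ ∫⁻ x in E, ENNReal.ofReal (F x) ∂μ := by
      have hw := weak_aux hS hF hF0 hC0 hFC hs
      have h := ENNReal.ofReal_le_ofReal hw
      rwa [ENNReal.ofReal_mul hs.le, ENNReal.ofReal_toReal hm_ne,
        ofReal_integral_eq_lintegral_ofReal hF_int.integrableOn
          (ae_of_all _ fun x => hF0 x)] at h
    have h2 : ∫⁻ x in E, ENNReal.ofReal (F x) ∂μ ≤ B ^ (1/2:ℝ) * m ^ (1/2:ℝ) := by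
      have hconj : Real.HolderConjugate 2 2 := Real.HolderConjugate.two_two
      have hhold := ENNReal.lintegral_mul_le_Lp_mul_Lq (μ.restrict E) hconj
        (f := fun x => ENNReal.ofReal (F x)) (g := fun _ => 1)
        (ENNReal.measurable_ofReal.comp hF).aemeasurable aemeasurable_const
      simp only [Pi.mul_apply, mul_one, ENNReal.one_rpow] at hhold
      refine hhold.trans ?_
      gcongr
      · calc ∫⁻ x in E, ENNReal.ofReal (F x) ^ (2:ℝ) ∂μ
            = ∫⁻ x in E, ENNReal.ofReal (F x ^ 2) ∂μ := by
              refine lintegral_congr fun x => ?_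
              rw [ENNReal.rpow_two, ← ENNReal.ofReal_pow (hF0 x)]
          _ ≤ B := setLIntegral_le_lintegral _ _
      · exact le_of_eq (setLIntegral_one E)
    have hhalf : m = m ^ (1/2:ℝ) * m ^ (1/2:ℝ) := by
      rw [← ENNReal.rpow_add_of_nonneg _ _ (by norm_num) (by norm_num)]
      norm_num
    have hm2_ne0 : m ^ (1/2:ℝ) ≠ 0 := by
      simp [ENNReal.rpow_eq_zero_iff, hm0, hm_ne]
    have hm2_ne : m ^ (1/2:ℝ) ≠ ⊤ := ENNReal.rpow_ne_top_of_nonneg (by norm_num) hm_ne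
    have hcancel : ENNReal.ofReal s * m ^ (1/2:ℝ) ≤ B ^ (1/2:ℝ) := by
      rw [← ENNReal.mul_le_mul_iff_left hm2_ne0 hm2_ne, mul_assoc, ← hhalf]
      exact h1.trans h2
    have hsq : (ENNReal.ofReal s) ^ 2 * m ≤ B := by
      have hB2 : B ^ (1/2:ℝ) * B ^ (1/2:ℝ) = B := by
        rw [← ENNReal.rpow_add_of_nonneg _ _ (by norm_num) (by norm_num)]
        norm_num
      calc (ENNReal.ofReal s) ^ 2 * m
          = (ENNReal.ofReal s * m ^ (1/2:ℝ)) * (ENNReal.ofReal s * m ^ (1/2:ℝ)) := by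
            conv_lhs => rw [hhalf]
            ring
        _ ≤ B ^ (1/2:ℝ) * B ^ (1/2:ℝ) := mul_le_mul' hcancel hcancel
        _ = B := hB2
    rw [ENNReal.le_div_iff_mul_le
      (Or.inl (pow_ne_zero 2 (ENNReal.ofReal_pos.mpr hs).ne'))
      (Or.inl (by exact ENNReal.pow_ne_top ENNReal.ofReal_ne_top)), mul_comm]
    exact hsq
  -- integrate the distribution bound
  have hmono : ∫⁻ s in Set.Ioi (0:ℝ), μ {x | s < Mstar x}
      ≤ ∫⁻ s in Set.Ioi (0:ℝ), min 1 (B / (ENNReal.ofReal s) ^ 2) := by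
    refine setLIntegral_mono (measurable_const.min
      (measurable_const.div ((ENNReal.measurable_ofReal.pow_const 2)))) hkey
  refine hmono.trans ?_
  -- calculus: ∫⁻ min 1 (B/s²) ≤ 2 √B
  rcases eq_or_ne B 0 with hB0 | hB0
  · simp [hB0, ENNReal.zero_div]
  set c := (B ^ (1/2:ℝ)).toReal with hcdef
  have hr_ne : B ^ (1/2:ℝ) ≠ ⊤ := ENNReal.rpow_ne_top_of_nonneg (by norm_num) hB_ne
  have hr_ne0 : B ^ (1/2:ℝ) ≠ 0 := by simp [ENNReal.rpow_eq_zero_iff, hB0, hB_ne]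
  have hc_pos : 0 < c := ENNReal.toReal_pos hr_ne0 hr_ne
  have hcB : ENNReal.ofReal c = B ^ (1/2:ℝ) := ENNReal.ofReal_toReal hr_ne
  have hIoi : (Set.Ioi (0:ℝ)) = Set.Ioc 0 c ∪ Set.Ioi c :=
    (Set.Ioc_union_Ioi_eq_Ioi hc_pos.le).symm
  rw [hIoi, lintegral_union measurableSet_Ioi Set.Ioc_disjoint_Ioi_same]
  have hleft : ∫⁻ s in Set.Ioc (0:ℝ) c, min 1 (B / (ENNReal.ofReal s) ^ 2)
      ≤ ENNReal.ofReal c := by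
    calc ∫⁻ s in Set.Ioc (0:ℝ) c, min 1 (B / (ENNReal.ofReal s) ^ 2)
        ≤ ∫⁻ _s in Set.Ioc (0:ℝ) c, 1 := lintegral_mono fun s => min_le_left _ _
      _ = ENNReal.ofReal c := by rw [setLIntegral_one]; simp [Real.volume_Ioc]
  have hright : ∫⁻ s in Set.Ioi c, min 1 (B / (ENNReal.ofReal s) ^ 2) ≤ B ^ (1/2:ℝ) := by
    have hstep : ∫⁻ s in Set.Ioi c, min 1 (B / (ENNReal.ofReal s) ^ 2)
        ≤ ∫⁻ s in Set.Ioi c, B * ENNReal.ofReal (s ^ (-2:ℝ)) := by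
      refine setLIntegral_mono (measurable_const.mul
        (ENNReal.measurable_ofReal.comp (measurable_id.pow_const (-2:ℝ)))) ?_
      intro s hs
      have hs0 : 0 < s := lt_trans hc_pos hs
      refine le_trans (min_le_right _ _) (le_of_eq ?_)
      rw [div_eq_mul_inv]
      congr 1
      rw [← ENNReal.ofReal_pow hs0.le, ← ENNReal.ofReal_inv_of_pos (by positivity),
        Real.rpow_neg hs0.le, Real.rpow_two]
    refine hstep.trans ?_
    rw [lintegral_const_mul _ (show Measurable fun s : ℝ => ENNReal.ofReal (s ^ (-2:ℝ)) from (measurable_id.pow_const _).ennreal_ofReal)]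
    have hintegral : ∫⁻ s in Set.Ioi c, ENNReal.ofReal (s ^ (-2:ℝ))
        = ENNReal.ofReal c⁻¹ := by
      rw [← ofReal_integral_eq_lintegral_ofReal
        (integrableOn_Ioi_rpow_of_lt (by norm_num) hc_pos)
        ((ae_restrict_iff' measurableSet_Ioi).2 (ae_of_all _ fun s hs =>
          Real.rpow_nonneg (le_of_lt (lt_trans hc_pos hs)) _)),
        integral_Ioi_rpow_of_lt (by norm_num) hc_pos]
      norm_num
      rw [Real.rpow_neg_one]
    rw [hintegral]
    have hBcc : B = ENNReal.ofReal c * ENNReal.ofReal c := by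
      rw [hcB, ← ENNReal.rpow_add_of_nonneg _ _ (by norm_num) (by norm_num)]
      norm_num
    refine le_of_eq ?_
    calc B * ENNReal.ofReal c⁻¹
        = ENNReal.ofReal c * (ENNReal.ofReal c * ENNReal.ofReal c⁻¹) := by
          rw [hBcc, mul_assoc]
      _ = ENNReal.ofReal c := by
          rw [← ENNReal.ofReal_mul hc_pos.le, mul_inv_cancel₀ hc_pos.ne',
            ENNReal.ofReal_one, mul_one]
      _ = B ^ (1/2:ℝ) := hcB
  calc _ ≤ ENNReal.ofReal c + B ^ (1/2:ℝ) := add_le_add hleft hright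
    _ = 2 * B ^ (1/2:ℝ) := by rw [hcB, two_mul]

lemma measurePreserving_zpow {X : Type*} [MeasurableSpace X] {μ : Measure X}
    (T : X ≃ᵐ X) (hT : MeasurePreserving T μ μ) (k : ℤ) :
    MeasurePreserving (⇑(T.toEquiv ^ k)) μ μ := by
  have hTm : MeasurePreserving (⇑T.toEquiv) μ μ := hT
  have hTsymm : MeasurePreserving (⇑(T.toEquiv⁻¹)) μ μ := MeasurePreserving.symm T hT
  induction k using Int.induction_on with
  | zero => simpa using MeasurePreserving.id μ
  | succ n ih =>
    rw [zpow_add_one]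
    simpa [Equiv.Perm.coe_mul] using ih.comp hTm
  | pred n ih =>
    rw [zpow_sub_one]
    simpa [Equiv.Perm.coe_mul] using ih.comp hTsymm

lemma zpow_mul_apply {X : Type*} (e : Equiv.Perm X) (k : ℤ) (n : ℕ) (x : X) :
    (e ^ (k * (n : ℤ))) x = (⇑(e ^ k))^[n] x := by
  rw [zpow_mul, zpow_natCast, Equiv.Perm.coe_pow]

end MaxErgAux

open MaxErgAux
open scoped ENNReal

/-- Maximal inequality: for an invertible measure-preserving system, `g, h ∈ L^∞(μ)`, integers
`a, b` and a real polynomial `p`,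
`∫ sup_{N ≥ 1} sup_t |(1/N) ∑_{n=1}^N g(T^{an}x) h(T^{bn}x) e^{2πi p(n) t}| dμ
  ≤ 2 ‖h‖_∞ ‖g‖_{L²(μ)}`. -/
theorem integral_sup_sup_wwAvg_le
    {X : Type*} [MeasurableSpace X] (μ : Measure X) [IsProbabilityMeasure μ]
    (T : X ≃ᵐ X) (hT : MeasurePreserving T μ μ) (a b : ℤ)
    (g h : X → ℂ) (hg : MemLp g ⊤ μ) (hh : MemLp h ⊤ μ) (p : Polynomial ℝ) :
    ∫⁻ x, (⨆ N : ℕ, ⨆ _ : 1 ≤ N, ⨆ t : ℝ,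
        (‖(N : ℂ)⁻¹ * ∑ n ∈ Finset.Icc 1 N,
          g ((T.toEquiv ^ (a * (n : ℤ))) x) * h ((T.toEquiv ^ (b * (n : ℤ))) x) *
            Complex.exp (2 * Real.pi * Complex.I * (p.eval (n : ℝ)) * t)‖₊ : ENNReal)) ∂μ
      ≤ 2 * eLpNorm h ⊤ μ * eLpNorm g 2 μ := by
  classical
  set S : X → X := ⇑(T.toEquiv ^ a) with hSdef
  set Sb : X → X := ⇑(T.toEquiv ^ b) with hSbdef
  have hSmp : MeasurePreserving S μ μ := measurePreserving_zpow T hT a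
  have hSbmp : MeasurePreserving Sb μ μ := measurePreserving_zpow T hT b
  have hgsm := hg.aestronglyMeasurable
  set gm : X → ℂ := hgsm.mk g with hgmdef
  have hgm_meas : Measurable gm := hgsm.stronglyMeasurable_mk.measurable
  have hgm_eq : g =ᵐ[μ] gm := hgsm.ae_eq_mk
  set Cg : ℝ := (eLpNorm g ⊤ μ).toReal with hCgdef
  set Ch : ℝ := (eLpNorm h ⊤ μ).toReal with hChdef
  have hCg0 : 0 ≤ Cg := ENNReal.toReal_nonneg
  have hCh0 : 0 ≤ Ch := ENNReal.toReal_nonneg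
  have hgfin : eLpNorm g ⊤ μ ≠ ⊤ := hg.eLpNorm_ne_top
  have hhfin : eLpNorm h ⊤ μ ≠ ⊤ := hh.eLpNorm_ne_top
  have hgC : ∀ᵐ x ∂μ, ‖g x‖ ≤ Cg := by
    have h1 : ∀ᵐ x ∂μ, (‖g x‖₊ : ℝ≥0∞) ≤ eLpNorm g ⊤ μ := by
      rw [eLpNorm_exponent_top]
      exact enorm_ae_le_eLpNormEssSup g μ
    filter_upwards [h1] with x hx
    have h2 := ENNReal.toReal_mono hgfin hx
    simpa [hCgdef] using h2
  have hhC : ∀ᵐ x ∂μ, ‖h x‖ ≤ Ch := by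
    have h1 : ∀ᵐ x ∂μ, (‖h x‖₊ : ℝ≥0∞) ≤ eLpNorm h ⊤ μ := by
      rw [eLpNorm_exponent_top]
      exact enorm_ae_le_eLpNormEssSup h μ
    filter_upwards [h1] with x hx
    have h2 := ENNReal.toReal_mono hhfin hx
    simpa [hChdef] using h2
  set F : X → ℝ := fun x => min ‖gm x‖ Cg with hFdef
  have hF_meas : Measurable F := hgm_meas.norm.min measurable_const
  have hF0 : ∀ x, 0 ≤ F x := fun x => le_min (norm_nonneg _) hCg0
  have hFC : ∀ x, F x ≤ Cg := fun x => min_le_right _ _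
  have hFg : F =ᵐ[μ] fun x => ‖g x‖ := by
    filter_upwards [hgm_eq, hgC] with x h1 h2
    simp only [hFdef, ← h1]
    exact min_eq_left h2
  have hcond : ∀ᵐ x ∂μ, ∀ n : ℕ,
      F (S^[n + 1] x) = ‖g (S^[n + 1] x)‖ ∧ ‖h (Sb^[n + 1] x)‖ ≤ Ch := by
    rw [ae_all_iff]
    intro n
    have h1 := (hSmp.iterate (n + 1)).quasiMeasurePreserving.ae hFg
    have h2 := (hSbmp.iterate (n + 1)).quasiMeasurePreserving.ae hhC
    filter_upwards [h1, h2] with x hx1 hx2 using ⟨hx1, hx2⟩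
  set G : X → ℝ≥0∞ :=
    fun y => ⨆ n : ℕ, ENNReal.ofReal (birkhoffSum S F (n + 1) y / ((n : ℝ) + 1)) with hGdef
  have hG_meas : Measurable G := Measurable.iSup fun n =>
    ((measurable_birkhoffSum hSmp.measurable hF_meas (n + 1)).div_const _).ennreal_ofReal
  have hpt : ∀ᵐ x ∂μ, (⨆ N : ℕ, ⨆ _ : 1 ≤ N, ⨆ t : ℝ,
      (‖(N : ℂ)⁻¹ * ∑ n ∈ Finset.Icc 1 N,
        g ((T.toEquiv ^ (a * (n : ℤ))) x) * h ((T.toEquiv ^ (b * (n : ℤ))) x) *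
          Complex.exp (2 * Real.pi * Complex.I * (p.eval (n : ℝ)) * t)‖₊ : ENNReal))
      ≤ ENNReal.ofReal Ch * G (S x) := by
    filter_upwards [hcond] with x hx
    refine iSup_le fun N => iSup_le fun hN => iSup_le fun t => ?_
    obtain ⟨M, rfl⟩ : ∃ M, N = M + 1 := ⟨N - 1, (Nat.succ_pred_eq_of_pos hN).symm⟩
    have hterm : ∀ n ∈ Finset.Icc 1 (M + 1),
        ‖g ((T.toEquiv ^ (a * (n : ℤ))) x) * h ((T.toEquiv ^ (b * (n : ℤ))) x) *
          Complex.exp (2 * Real.pi * Complex.I * (p.eval (n : ℝ)) * t)‖ ≤ F (S^[n] x) * Ch := by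
      intro n hn
      obtain ⟨k, rfl⟩ : ∃ k, n = k + 1 :=
        ⟨n - 1, (Nat.succ_pred_eq_of_pos (Finset.mem_Icc.mp hn).1).symm⟩
      have hx1 := (hx k).1
      have hx2 := (hx k).2
      rw [norm_mul, norm_mul]
      have hexp : ‖Complex.exp (2 * Real.pi * Complex.I * (p.eval (((k + 1 : ℕ)) : ℝ)) * t)‖
          = 1 := by
        rw [Complex.norm_exp]
        have : (2 * (Real.pi : ℂ) * Complex.I * (p.eval (((k + 1 : ℕ)) : ℝ)) * t).re = 0 := by
          simp [Complex.mul_re, Complex.mul_im]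
        rw [this, Real.exp_zero]
      rw [hexp, mul_one, zpow_mul_apply T.toEquiv a (k + 1) x,
        zpow_mul_apply T.toEquiv b (k + 1) x, ← hSdef, ← hSbdef, ← hx1]
      exact mul_le_mul_of_nonneg_left hx2 (hF0 _)
    have hbirk : ∑ n ∈ Finset.Icc 1 (M + 1), F (S^[n] x) = birkhoffSum S F (M + 1) (S x) := by
      rw [← Finset.Ico_add_one_right_eq_Icc, Finset.sum_Ico_eq_sum_range]
      have hMM : M + 1 + 1 - 1 = M + 1 := rfl
      rw [hMM]
      unfold birkhoffSum
      refine Finset.sum_congr rfl fun k _ => ?_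
      rw [Nat.add_comm 1 k, Function.iterate_succ_apply]
    have hsum : ‖((M + 1 : ℕ) : ℂ)⁻¹ * ∑ n ∈ Finset.Icc 1 (M + 1),
        g ((T.toEquiv ^ (a * (n : ℤ))) x) * h ((T.toEquiv ^ (b * (n : ℤ))) x) *
          Complex.exp (2 * Real.pi * Complex.I * (p.eval (n : ℝ)) * t)‖
        ≤ Ch * (birkhoffSum S F (M + 1) (S x) / ((M : ℝ) + 1)) := by
      rw [norm_mul, norm_inv]
      have hnc : ‖((M + 1 : ℕ) : ℂ)‖ = (M : ℝ) + 1 := by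
        rw [Complex.norm_natCast]
        push_cast
        ring
      have hsle : ‖∑ n ∈ Finset.Icc 1 (M + 1),
          g ((T.toEquiv ^ (a * (n : ℤ))) x) * h ((T.toEquiv ^ (b * (n : ℤ))) x) *
            Complex.exp (2 * Real.pi * Complex.I * (p.eval (n : ℝ)) * t)‖
          ≤ birkhoffSum S F (M + 1) (S x) * Ch := by
        refine (norm_sum_le _ _).trans ?_
        rw [← hbirk, Finset.sum_mul]
        exact Finset.sum_le_sum hterm
      rw [hnc]
      calc ((M : ℝ) + 1)⁻¹ * ‖∑ n ∈ Finset.Icc 1 (M + 1),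
            g ((T.toEquiv ^ (a * (n : ℤ))) x) * h ((T.toEquiv ^ (b * (n : ℤ))) x) *
              Complex.exp (2 * Real.pi * Complex.I * (p.eval (n : ℝ)) * t)‖
          ≤ ((M : ℝ) + 1)⁻¹ * (birkhoffSum S F (M + 1) (S x) * Ch) :=
            mul_le_mul_of_nonneg_left hsle (by positivity)
        _ = Ch * (birkhoffSum S F (M + 1) (S x) / ((M : ℝ) + 1)) := by ring
    calc ((‖((M + 1 : ℕ) : ℂ)⁻¹ * ∑ n ∈ Finset.Icc 1 (M + 1),
          g ((T.toEquiv ^ (a * (n : ℤ))) x) * h ((T.toEquiv ^ (b * (n : ℤ))) x) *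
            Complex.exp (2 * Real.pi * Complex.I * (p.eval (n : ℝ)) * t)‖₊ : ℝ≥0∞))
        = ENNReal.ofReal ‖((M + 1 : ℕ) : ℂ)⁻¹ * ∑ n ∈ Finset.Icc 1 (M + 1),
          g ((T.toEquiv ^ (a * (n : ℤ))) x) * h ((T.toEquiv ^ (b * (n : ℤ))) x) *
            Complex.exp (2 * Real.pi * Complex.I * (p.eval (n : ℝ)) * t)‖ :=
          (ofReal_norm_eq_enorm _).symm
      _ ≤ ENNReal.ofReal (Ch * (birkhoffSum S F (M + 1) (S x) / ((M : ℝ) + 1))) :=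
          ENNReal.ofReal_le_ofReal hsum
      _ = ENNReal.ofReal Ch * ENNReal.ofReal (birkhoffSum S F (M + 1) (S x) / ((M : ℝ) + 1)) :=
          ENNReal.ofReal_mul hCh0
      _ ≤ ENNReal.ofReal Ch * G (S x) := by
          refine mul_le_mul_right ?_ _
          exact le_iSup (fun n : ℕ =>
            ENNReal.ofReal (birkhoffSum S F (n + 1) (S x) / ((n : ℝ) + 1))) M
  calc ∫⁻ x, (⨆ N : ℕ, ⨆ _ : 1 ≤ N, ⨆ t : ℝ,
        (‖(N : ℂ)⁻¹ * ∑ n ∈ Finset.Icc 1 N,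
          g ((T.toEquiv ^ (a * (n : ℤ))) x) * h ((T.toEquiv ^ (b * (n : ℤ))) x) *
            Complex.exp (2 * Real.pi * Complex.I * (p.eval (n : ℝ)) * t)‖₊ : ENNReal)) ∂μ
      ≤ ∫⁻ x, ENNReal.ofReal Ch * G (S x) ∂μ := lintegral_mono_ae hpt
    _ = ENNReal.ofReal Ch * ∫⁻ x, G (S x) ∂μ :=
        lintegral_const_mul _ (hG_meas.comp hSmp.measurable)
    _ = ENNReal.ofReal Ch * ∫⁻ y, G y ∂μ := by rw [hSmp.lintegral_comp hG_meas]
    _ ≤ ENNReal.ofReal Ch * (2 * (∫⁻ x, ENNReal.ofReal (F x ^ 2) ∂μ) ^ (1/2 : ℝ)) :=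
        mul_le_mul_right (core hSmp hF_meas hF0 hCg0 hFC) _
    _ = 2 * eLpNorm h ⊤ μ * eLpNorm g 2 μ := by
        have hB : (∫⁻ x, ENNReal.ofReal (F x ^ 2) ∂μ) ^ (1/2 : ℝ) = eLpNorm g 2 μ := by
          rw [eLpNorm_eq_lintegral_rpow_enorm_toReal two_ne_zero ENNReal.ofNat_ne_top]
          have h2 : (2 : ℝ≥0∞).toReal = 2 := by norm_num
          rw [h2]
          congr 1
          refine lintegral_congr_ae ?_
          filter_upwards [hFg] with x hx
          rw [hx, ENNReal.rpow_two, ← ofReal_norm_eq_enorm,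
            ← ENNReal.ofReal_pow (norm_nonneg _)]
        have hCh' : ENNReal.ofReal Ch = eLpNorm h ⊤ μ := ENNReal.ofReal_toReal hhfin
        rw [hB, hCh']
        ring
end

section
/- Let (X, F, μ, T) be an invertible measure-preserving system on a probability space, let a, b ∈ ℤ, let p be a polynomial with real coefficients, and let f1, f2 ∈ L^∞(μ). Suppose there are sequences (f1^i) and (f2^i) in L^∞(μ) such that for j = 1,2 and every i one has ‖f_j^i‖_∞ ≤ ‖f_j‖_∞ and ‖f_j^i − f_j‖_{L²(μ)} → 0 as i → ∞, and such that for every i there is a measurable set of full μ-measure on which, for every t ∈ ℝ, the limit lim_{N→∞} W_N(f1^i,f2^i,x,p,t) exists. Then there is a measurable set of full μ-measure on which, for every t ∈ ℝ, the limit lim_{N→∞} W_N(f1,f2,x,p,t) exists. -/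
open MeasureTheory Filter Finset
open scoped ENNReal NNReal

set_option linter.unusedSectionVars false
set_option maxHeartbeats 1000000


section Prelim

variable {X : Type*} [MeasurableSpace X]

lemma measurable_perm_pow (e : Equiv.Perm X) (he : Measurable e) (n : ℕ) :
    Measurable ⇑(e ^ n) := by
  induction n with
  | zero => simpa using measurable_id
  | succ n ih =>
    have h : ⇑(e ^ (n + 1)) = ⇑(e ^ n) ∘ ⇑e := by
      ext x; simp [pow_succ, Equiv.Perm.mul_apply]
    rw [h]; exact ih.comp he

lemma mp_perm_pow {μ : Measure X} (e : Equiv.Perm X) (hp : MeasurePreserving ⇑e μ μ) (n : ℕ) :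
    MeasurePreserving ⇑(e ^ n) μ μ := by
  induction n with
  | zero => simpa using MeasurePreserving.id μ
  | succ n ih =>
    have h : ⇑(e ^ (n + 1)) = ⇑(e ^ n) ∘ ⇑e := by
      ext x; simp [pow_succ, Equiv.Perm.mul_apply]
    rw [h]; exact ih.comp hp

lemma inv_eq_symm_perm (T : X ≃ᵐ X) : (T.toEquiv)⁻¹ = T.symm.toEquiv := rfl

lemma measurable_zpow (T : X ≃ᵐ X) (k : ℤ) : Measurable ⇑(T.toEquiv ^ k) := by
  cases k with
  | ofNat n =>
    rw [Int.ofNat_eq_coe, zpow_natCast]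
    exact measurable_perm_pow _ T.measurable n
  | negSucc n =>
    rw [zpow_negSucc, ← inv_pow, inv_eq_symm_perm]
    exact measurable_perm_pow _ T.symm.measurable (n + 1)

lemma mp_zpow {μ : Measure X} (T : X ≃ᵐ X) (hT : MeasurePreserving T μ μ) (k : ℤ) :
    MeasurePreserving ⇑(T.toEquiv ^ k) μ μ := by
  cases k with
  | ofNat n =>
    rw [Int.ofNat_eq_coe, zpow_natCast]
    exact mp_perm_pow _ hT n
  | negSucc n =>
    rw [zpow_negSucc, ← inv_pow, inv_eq_symm_perm]
    exact mp_perm_pow _ (MeasurePreserving.symm T hT) (n + 1)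

noncomputable def mzpowE (T : X ≃ᵐ X) (k : ℤ) : X ≃ᵐ X where
  toEquiv := T.toEquiv ^ k
  measurable_toFun := measurable_zpow T k
  measurable_invFun := by
    have h : (T.toEquiv ^ k).symm = T.toEquiv ^ (-k) := by
      rw [zpow_neg]; rfl
    show Measurable ⇑(T.toEquiv ^ k).symm
    rw [h]; exact measurable_zpow T (-k)

lemma me_zpow (T : X ≃ᵐ X) (k : ℤ) : MeasurableEmbedding ⇑(T.toEquiv ^ k) :=
  (mzpowE T k).measurableEmbedding

lemma iterate_zpow_eq (T : X ≃ᵐ X) (k : ℤ) (n : ℕ) (x : X) :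
    (⇑(T.toEquiv ^ k))^[n] x = (T.toEquiv ^ (k * (n : ℤ))) x := by
  have h : (T.toEquiv ^ k) ^ n = T.toEquiv ^ (k * (n : ℤ)) := by
    rw [← zpow_natCast (T.toEquiv ^ k) n, ← zpow_mul]
  rw [Equiv.Perm.iterate_eq_pow, h]

end Prelim


section Garsia

variable {X : Type*} [MeasurableSpace X]

/-- Ergodic sums starting at time `1`. -/
noncomputable def RS (σ : X → X) (g : X → ℝ) (j : ℕ) (x : X) : ℝ :=
  ∑ n ∈ Finset.Icc 1 j, g (σ^[n] x)

lemma RS_zero (σ : X → X) (g : X → ℝ) (x : X) : RS σ g 0 x = 0 := by simp [RS]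

lemma RS_succ_top (σ : X → X) (g : X → ℝ) (j : ℕ) (x : X) :
    RS σ g (j + 1) x = RS σ g j x + g (σ^[j + 1] x) :=
  Finset.sum_Icc_succ_top (by omega) _

lemma RS_succ (σ : X → X) (g : X → ℝ) (j : ℕ) (x : X) :
    RS σ g (j + 1) x = g (σ x) + RS σ g j (σ x) := by
  induction j with
  | zero => simp [RS]
  | succ j ih =>
    rw [RS_succ_top, ih, RS_succ_top]
    rw [show σ^[j + 1 + 1] x = σ^[j + 1] (σ x) from Function.iterate_succ_apply σ (j + 1) x]
    ring

lemma RS_measurable {σ : X → X} (hσ : Measurable σ) {g : X → ℝ} (hg : Measurable g) (j : ℕ) :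
    Measurable (RS σ g j) :=
  Finset.measurable_sum _ fun n _ => hg.comp (hσ.iterate n)

lemma RS_sub_const (σ : X → X) (g : X → ℝ) (c : ℝ) (j : ℕ) (x : X) :
    RS σ (fun y => g y - c) j x = RS σ g j x - j * c := by
  simp [RS, Finset.sum_sub_distrib, Nat.card_Icc, mul_comm]

lemma abs_RS_le {σ : X → X} {g : X → ℝ} {C : ℝ} (hb : ∀ x, |g x| ≤ C) (j : ℕ) (x : X) :
    |RS σ g j x| ≤ j * C := by
  calc |RS σ g j x| ≤ ∑ n ∈ Finset.Icc 1 j, |g (σ^[n] x)| := Finset.abs_sum_le_sum_abs _ _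
    _ ≤ ∑ _n ∈ Finset.Icc 1 j, C := Finset.sum_le_sum fun n _ => hb _
    _ = j * C := by simp [Nat.card_Icc, mul_comm]

/-- Running maximum of ergodic sums, including the trivial `0` sum. -/
noncomputable def PP (σ : X → X) (g : X → ℝ) (n : ℕ) (x : X) : ℝ :=
  (Finset.range (n + 1)).sup' Finset.nonempty_range_add_one (fun j => RS σ g j x)

lemma PP_nonneg (σ : X → X) (g : X → ℝ) (n : ℕ) (x : X) : 0 ≤ PP σ g n x := by
  have h : RS σ g 0 x ≤ PP σ g n x :=
    Finset.le_sup' (fun j => RS σ g j x) (Finset.mem_range.2 (Nat.succ_pos n))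
  rwa [RS_zero] at h

lemma PP_succ (σ : X → X) (g : X → ℝ) (n : ℕ) (x : X) :
    PP σ g (n + 1) x = RS σ g (n + 1) x ⊔ PP σ g n x := by
  apply le_antisymm
  · apply Finset.sup'_le
    intro j hj
    rcases Nat.lt_succ_iff_lt_or_eq.1 (Finset.mem_range.1 hj) with h | h
    · exact le_sup_of_le_right (Finset.le_sup' (fun j => RS σ g j x) (Finset.mem_range.2 h))
    · rw [h]; exact le_sup_left
  · apply sup_le
    · exact Finset.le_sup' (fun j => RS σ g j x)
        (Finset.mem_range.2 (Nat.lt_succ_self (n + 1)))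
    · apply Finset.sup'_le
      intro j hj
      exact Finset.le_sup' (fun j => RS σ g j x)
        (Finset.mem_range.2 ((Finset.mem_range.1 hj).trans (Nat.lt_succ_self (n + 1))))

lemma PP_measurable {σ : X → X} (hσ : Measurable σ) {g : X → ℝ} (hg : Measurable g) (n : ℕ) :
    Measurable (PP σ g n) := by
  induction n with
  | zero =>
    have h : PP σ g 0 = RS σ g 0 := by
      ext x; simp [PP]
    rw [h]; exact RS_measurable hσ hg 0
  | succ n ih =>
    have h : PP σ g (n + 1) = fun x => RS σ g (n + 1) x ⊔ PP σ g n x := by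
      ext x; exact PP_succ σ g n x
    rw [h]; exact (RS_measurable hσ hg (n + 1)).sup ih

lemma PP_le (σ : X → X) {g : X → ℝ} {C : ℝ} (hC : 0 ≤ C) (hb : ∀ x, |g x| ≤ C) (n : ℕ) (x : X) :
    PP σ g n x ≤ n * C := by
  apply Finset.sup'_le
  intro j hj
  have hj' : (j : ℝ) ≤ n := by
    exact_mod_cast Nat.le_of_lt_succ (Finset.mem_range.1 hj)
  calc RS σ g j x ≤ |RS σ g j x| := le_abs_self _
    _ ≤ j * C := abs_RS_le hb j x
    _ ≤ n * C := by nlinarith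

lemma PP_key (σ : X → X) (g : X → ℝ) (n : ℕ) (x : X) :
    PP σ g n x ≤ max 0 (g (σ x) + PP σ g n (σ x)) := by
  apply Finset.sup'_le
  intro j hj
  cases j with
  | zero => simpa [RS_zero] using le_max_left 0 (g (σ x) + PP σ g n (σ x))
  | succ j =>
    have hjm : j ∈ Finset.range (n + 1) := by
      have := Finset.mem_range.1 hj; exact Finset.mem_range.2 (by omega)
    have h1 : RS σ g j (σ x) ≤ PP σ g n (σ x) :=
      Finset.le_sup' (fun j => RS σ g j (σ x)) hjm
    rw [RS_succ]
    exact le_max_of_le_right (by linarith)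

lemma garsia {μ : Measure X} [IsProbabilityMeasure μ]
    {σ : X → X} (hσm : Measurable σ) (hσe : MeasurableEmbedding σ)
    (hσp : MeasurePreserving σ μ μ)
    {g : X → ℝ} (hg : Measurable g) {C : ℝ} (hC : 0 ≤ C) (hb : ∀ x, |g x| ≤ C) (n : ℕ) :
    0 ≤ ∫ x in {y | 0 < PP σ g n y}, g (σ x) ∂μ := by
  set E : Set X := {y | 0 < PP σ g n y} with hE
  have hEm : MeasurableSet E := measurableSet_lt measurable_const (PP_measurable hσm hg n)
  have hnC : (0 : ℝ) ≤ (n : ℝ) * C := mul_nonneg (Nat.cast_nonneg n) hC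
  have habs : ∀ x, |PP σ g n x| ≤ n * C := fun x =>
    abs_le.2 ⟨by linarith [PP_nonneg σ g n x], PP_le σ hC hb n x⟩
  have hint_g : Integrable (fun x => g (σ x)) μ := by
    refine (integrable_const C).mono' ((hg.comp hσm).aestronglyMeasurable)
      (Eventually.of_forall fun x => ?_)
    simpa [Real.norm_eq_abs] using hb (σ x)
  have hint_PP : Integrable (PP σ g n) μ := by
    refine (integrable_const ((n : ℝ) * C)).mono' ((PP_measurable hσm hg n).aestronglyMeasurable)
      (Eventually.of_forall fun x => ?_)
    simpa [Real.norm_eq_abs] using habs x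
  have hint_PPσ : Integrable (fun x => PP σ g n (σ x)) μ := by
    refine (integrable_const ((n : ℝ) * C)).mono'
      (((PP_measurable hσm hg n).comp hσm).aestronglyMeasurable)
      (Eventually.of_forall fun x => ?_)
    simpa [Real.norm_eq_abs] using habs (σ x)
  have hkey : ∀ x ∈ E, PP σ g n x - PP σ g n (σ x) ≤ g (σ x) := by
    intro x hx
    have h1 : PP σ g n x ≤ max 0 (g (σ x) + PP σ g n (σ x)) := PP_key σ g n x
    have h2 : (0 : ℝ) < PP σ g n x := hx
    rcases le_max_iff.1 h1 with h | h
    · linarith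
    · linarith
  have hmono : ∫ x in E, (PP σ g n x - PP σ g n (σ x)) ∂μ ≤ ∫ x in E, g (σ x) ∂μ :=
    setIntegral_mono_on ((hint_PP.sub hint_PPσ).integrableOn) (hint_g.integrableOn) hEm hkey
  have hcompl : ∫ x in Eᶜ, (PP σ g n x - PP σ g n (σ x)) ∂μ ≤ 0 := by
    refine setIntegral_nonpos_ae hEm.compl (Eventually.of_forall fun x hx => ?_)
    have h0 : PP σ g n x = 0 := le_antisymm (not_lt.1 hx) (PP_nonneg σ g n x)
    have := PP_nonneg σ g n (σ x)
    linarith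
  have htot : ∫ x, (PP σ g n x - PP σ g n (σ x)) ∂μ = 0 := by
    rw [integral_sub hint_PP hint_PPσ, hσp.integral_comp hσe (PP σ g n), sub_self]
  have hsplit := integral_add_compl hEm (hint_PP.sub hint_PPσ)
  simp only [Pi.sub_apply] at hsplit
  have : (0 : ℝ) ≤ ∫ x in E, (PP σ g n x - PP σ g n (σ x)) ∂μ := by
    rw [htot] at hsplit; linarith
  linarith

lemma maximal {μ : Measure X} [IsProbabilityMeasure μ]
    {σ : X → X} (hσm : Measurable σ) (hσe : MeasurableEmbedding σ)
    (hσp : MeasurePreserving σ μ μ)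
    {g : X → ℝ} (hg : Measurable g) {C : ℝ} (hC : 0 ≤ C) (hb : ∀ x, |g x| ≤ C)
    (hg0 : ∀ x, 0 ≤ g x) {c : ℝ} (hc : 0 < c) :
    μ {x | ∃ j : ℕ, 1 ≤ j ∧ c * j < RS σ g j x} ≤ ENNReal.ofReal ((∫ x, g x ∂μ) / c) := by
  set g' : X → ℝ := fun y => g y - c with hg'def
  have hg'm : Measurable g' := hg.sub measurable_const
  have hg'b : ∀ x, |g' x| ≤ C + c := fun x => by
    have := hb x; have := abs_le.1 (hb x); rw [abs_le]; constructor <;> simp [hg'def] <;> linarith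
  have hC' : (0 : ℝ) ≤ C + c := by linarith
  set E : ℕ → Set X := fun n => {y | 0 < PP σ g' n y} with hEdef
  have hEm : ∀ n, MeasurableSet (E n) := fun n =>
    measurableSet_lt measurable_const (PP_measurable hσm hg'm n)
  have hmono : Monotone E := by
    intro m n hmn
    induction n with
    | zero => rw [Nat.le_zero.1 hmn]
    | succ n ih =>
      rcases Nat.le_succ_iff.1 hmn with h | h
      · refine (ih h).trans ?_
        intro x hx
        have : PP σ g' n x ≤ PP σ g' (n + 1) x := by
          rw [PP_succ]; exact le_max_right _ _
        exact lt_of_lt_of_le hx this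
      · rw [h]
  have hsub : {x | ∃ j : ℕ, 1 ≤ j ∧ c * j < RS σ g j x} = ⋃ n, E n := by
    ext x
    constructor
    · rintro ⟨j, hj1, hjlt⟩
      refine Set.mem_iUnion.2 ⟨j, ?_⟩
      have h0 : 0 < RS σ g' j x := by
        rw [hg'def, RS_sub_const]; linarith [mul_comm c (j : ℝ)]
      exact lt_of_lt_of_le h0
        (Finset.le_sup' (fun j' => RS σ g' j' x) (Finset.mem_range.2 (Nat.lt_succ_self j)))
    · intro hx
      obtain ⟨n, hn⟩ := Set.mem_iUnion.1 hx
      have hn' : 0 < PP σ g' n x := hn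
      rw [PP, Finset.lt_sup'_iff] at hn'
      obtain ⟨j, _, hj⟩ := hn'
      have hj1 : 1 ≤ j := by
        rcases Nat.eq_zero_or_pos j with h | h
        · rw [h, RS_zero] at hj; exact absurd hj (lt_irrefl 0)
        · exact h
      refine ⟨j, hj1, ?_⟩
      rw [hg'def, RS_sub_const] at hj
      linarith [mul_comm c (j : ℝ)]
  have hint_gσ : Integrable (fun x => g (σ x)) μ := by
    refine (integrable_const C).mono' ((hg.comp hσm).aestronglyMeasurable)
      (Eventually.of_forall fun x => ?_)
    simpa [Real.norm_eq_abs] using hb (σ x)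
  have hdiv0 : 0 ≤ (∫ x, g x ∂μ) / c := div_nonneg (integral_nonneg hg0) hc.le
  have hbound : ∀ n, μ (E n) ≤ ENNReal.ofReal ((∫ x, g x ∂μ) / c) := by
    intro n
    have hgar := garsia hσm hσe hσp hg'm hC' hg'b n
    have hsplit : ∫ x in E n, g' (σ x) ∂μ
        = (∫ x in E n, g (σ x) ∂μ) - c * (μ (E n)).toReal := by
      have : ∫ x in E n, g' (σ x) ∂μ = (∫ x in E n, g (σ x) ∂μ) - ∫ _x in E n, c ∂μ := by
        rw [← integral_sub hint_gσ.integrableOn (integrable_const c).integrableOn]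
      rw [this, setIntegral_const, smul_eq_mul, mul_comm]; rfl
    have h1 : c * (μ (E n)).toReal ≤ ∫ x in E n, g (σ x) ∂μ := by
      rw [hsplit] at hgar; linarith
    have h2 : ∫ x in E n, g (σ x) ∂μ ≤ ∫ x, g (σ x) ∂μ :=
      setIntegral_le_integral hint_gσ (Eventually.of_forall fun x => hg0 (σ x))
    have h3 : ∫ x, g (σ x) ∂μ = ∫ x, g x ∂μ := hσp.integral_comp hσe g
    have h4 : (μ (E n)).toReal ≤ (∫ x, g x ∂μ) / c := by
      rw [le_div_iff₀ hc]; nlinarith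
    exact (ENNReal.le_ofReal_iff_toReal_le (measure_ne_top μ _) hdiv0).2 h4
  rw [hsub, hmono.directed_le.measure_iUnion]
  exact iSup_le hbound

end Garsia

section Helpers

variable {X : Type*} [MeasurableSpace X]

lemma ae_norm_le_of_eLpNorm_le {μ : Measure X} {h : X → ℂ} {B : ℝ≥0∞} (hB : B ≠ ⊤)
    (hle : eLpNorm h ⊤ μ ≤ B) : ∀ᵐ x ∂μ, ‖h x‖ ≤ B.toReal := by
  have h1 : ∀ᵐ x ∂μ, (‖h x‖₊ : ℝ≥0∞) ≤ eLpNormEssSup h μ := ae_le_eLpNormEssSup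
  filter_upwards [h1] with x hx
  have hx2 : (‖h x‖₊ : ℝ≥0∞) ≤ B := hx.trans (by rwa [eLpNorm_exponent_top] at hle)
  have h3 := ENNReal.toReal_mono hB hx2
  simpa using h3

end Helpers

/-- The Wiener-Wintner double recurrence average
`W_N(f1, f2, x, p, t) = (1/N) ∑_{n=1}^N f1(T^{an} x) f2(T^{bn} x) e^{2 π i p(n) t}`. -/
noncomputable def wwAvg {X : Type*} [MeasurableSpace X] (T : X ≃ᵐ X) (a b : ℤ)
    (f1 f2 : X → ℂ) (p : Polynomial ℝ) (t : ℝ) (N : ℕ) (x : X) : ℂ :=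
  (N : ℂ)⁻¹ * ∑ n ∈ Finset.Icc 1 N,
    f1 ((T.toEquiv ^ (a * (n : ℤ))) x) * f2 ((T.toEquiv ^ (b * (n : ℤ))) x) *
      Complex.exp (2 * Real.pi * Complex.I * (p.eval (n : ℝ)) * t)

/-- Approximation lemma: if `f1, f2 ∈ L^∞(μ)` can be approximated in `L²(μ)` by sequences
`(f1^i)`, `(f2^i)` with `‖f_j^i‖_∞ ≤ ‖f_j‖_∞` for which the Wiener-Wintner double recurrence
averages converge for all `t` off a single null set, then the same conclusion holds for
`f1, f2`. -/
theorem wwAvg_converges_of_approx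
    {X : Type*} [MeasurableSpace X] (μ : Measure X) [IsProbabilityMeasure μ]
    (T : X ≃ᵐ X) (hT : MeasurePreserving T μ μ) (a b : ℤ) (p : Polynomial ℝ)
    (f1 f2 : X → ℂ) (hf1 : MemLp f1 ⊤ μ) (hf2 : MemLp f2 ⊤ μ)
    (f1i f2i : ℕ → X → ℂ)
    (hf1i : ∀ i, MemLp (f1i i) ⊤ μ) (hf2i : ∀ i, MemLp (f2i i) ⊤ μ)
    (hb1 : ∀ i, eLpNorm (f1i i) ⊤ μ ≤ eLpNorm f1 ⊤ μ)
    (hb2 : ∀ i, eLpNorm (f2i i) ⊤ μ ≤ eLpNorm f2 ⊤ μ)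
    (hl1 : Tendsto (fun i => eLpNorm (f1i i - f1) 2 μ) atTop (nhds 0))
    (hl2 : Tendsto (fun i => eLpNorm (f2i i - f2) 2 μ) atTop (nhds 0))
    (hconv : ∀ i, ∃ V : Set X, MeasurableSet V ∧ μ V = 1 ∧
      ∀ x ∈ V, ∀ t : ℝ, ∃ L : ℂ,
        Tendsto (fun N => wwAvg T a b (f1i i) (f2i i) p t N x) atTop (nhds L)) :
    ∃ V : Set X, MeasurableSet V ∧ μ V = 1 ∧
      ∀ x ∈ V, ∀ t : ℝ, ∃ L : ℂ,
        Tendsto (fun N => wwAvg T a b f1 f2 p t N x) atTop (nhds L) := by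
  classical
  -- measurable representatives
  set F1 : X → ℂ := hf1.1.mk f1 with hF1def
  have hF1m : Measurable F1 := hf1.1.stronglyMeasurable_mk.measurable
  have hF1ae : f1 =ᵐ[μ] F1 := hf1.1.ae_eq_mk
  set F2 : X → ℂ := hf2.1.mk f2 with hF2def
  have hF2m : Measurable F2 := hf2.1.stronglyMeasurable_mk.measurable
  have hF2ae : f2 =ᵐ[μ] F2 := hf2.1.ae_eq_mk
  set F1i : ℕ → X → ℂ := fun i => (hf1i i).1.mk (f1i i) with hF1idef
  have hF1im : ∀ i, Measurable (F1i i) := fun i => (hf1i i).1.stronglyMeasurable_mk.measurable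
  have hF1iae : ∀ i, f1i i =ᵐ[μ] F1i i := fun i => (hf1i i).1.ae_eq_mk
  set F2i : ℕ → X → ℂ := fun i => (hf2i i).1.mk (f2i i) with hF2idef
  have hF2im : ∀ i, Measurable (F2i i) := fun i => (hf2i i).1.stronglyMeasurable_mk.measurable
  have hF2iae : ∀ i, f2i i =ᵐ[μ] F2i i := fun i => (hf2i i).1.ae_eq_mk
  set M1 : ℝ := (eLpNorm f1 ⊤ μ).toReal with hM1def
  set M2 : ℝ := (eLpNorm f2 ⊤ μ).toReal with hM2def
  have hM1 : 0 ≤ M1 := ENNReal.toReal_nonneg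
  have hM2 : 0 ≤ M2 := ENNReal.toReal_nonneg
  -- a.e. norm bounds
  have hbd1 : ∀ᵐ x ∂μ, ‖F1 x‖ ≤ M1 :=
    ae_norm_le_of_eLpNorm_le hf1.2.ne (le_of_eq (eLpNorm_congr_ae hF1ae.symm))
  have hbd2 : ∀ᵐ x ∂μ, ‖F2 x‖ ≤ M2 :=
    ae_norm_le_of_eLpNorm_le hf2.2.ne (le_of_eq (eLpNorm_congr_ae hF2ae.symm))
  have hbd1i : ∀ i, ∀ᵐ x ∂μ, ‖F1i i x‖ ≤ M1 := fun i =>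
    ae_norm_le_of_eLpNorm_le hf1.2.ne
      ((le_of_eq (eLpNorm_congr_ae (hF1iae i).symm)).trans (hb1 i))
  have hbd2i : ∀ i, ∀ᵐ x ∂μ, ‖F2i i x‖ ≤ M2 := fun i =>
    ae_norm_le_of_eLpNorm_le hf2.2.ne
      ((le_of_eq (eLpNorm_congr_ae (hF2iae i).symm)).trans (hb2 i))
  -- combined a.e. statement
  have hP0 : ∀ᵐ x ∂μ, (f1 x = F1 x ∧ f2 x = F2 x ∧ ‖F1 x‖ ≤ M1 ∧ ‖F2 x‖ ≤ M2) ∧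
      (∀ k, f1i k x = F1i k x ∧ f2i k x = F2i k x ∧ ‖F1i k x‖ ≤ M1 ∧ ‖F2i k x‖ ≤ M2) := by
    filter_upwards [hF1ae, hF2ae, hbd1, hbd2, ae_all_iff.2 hF1iae, ae_all_iff.2 hF2iae,
      ae_all_iff.2 hbd1i, ae_all_iff.2 hbd2i] with x h1 h2 h3 h4 h5 h6 h7 h8
    exact ⟨⟨h1, h2, h3, h4⟩, fun k => ⟨h5 k, h6 k, h7 k, h8 k⟩⟩
  obtain ⟨W0, hW0sub, hW0m, hW0null⟩ := exists_measurable_superset_of_null (ae_iff.1 hP0)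
  have hGood : ∀ y, y ∉ W0 → (f1 y = F1 y ∧ f2 y = F2 y ∧ ‖F1 y‖ ≤ M1 ∧ ‖F2 y‖ ≤ M2) ∧
      (∀ k, f1i k y = F1i k y ∧ f2i k y = F2i k y ∧ ‖F1i k y‖ ≤ M1 ∧ ‖F2i k y‖ ≤ M2) :=
    fun y hy => of_not_not (fun hno => hy (hW0sub hno))
  -- orbit bad set
  set B : Set X := ⋃ (m : ℤ), (⇑(T.toEquiv ^ m)) ⁻¹' W0 with hBdef
  have hBm : MeasurableSet B := MeasurableSet.iUnion fun m => (measurable_zpow T m) hW0m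
  have hBnull : μ B = 0 := by
    have hpre : ∀ m : ℤ, μ ((⇑(T.toEquiv ^ m)) ⁻¹' W0) = 0 := fun m => by
      rw [(mp_zpow T hT m).measure_preimage hW0m.nullMeasurableSet]; exact hW0null
    refine le_antisymm ((measure_iUnion_le _).trans ?_) zero_le
    simp [hpre]
  -- selection of indices
  have hsel : ∀ k : ℕ, ∃ i, eLpNorm (f1i i - f1) 2 μ < ENNReal.ofReal ((4:ℝ)⁻¹ ^ k) ∧
      eLpNorm (f2i i - f2) 2 μ < ENNReal.ofReal ((4:ℝ)⁻¹ ^ k) := by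
    intro k
    have hpos : (0:ℝ≥0∞) < ENNReal.ofReal ((4:ℝ)⁻¹ ^ k) := ENNReal.ofReal_pos.2 (by positivity)
    exact ((hl1.eventually (gt_mem_nhds hpos)).and (hl2.eventually (gt_mem_nhds hpos))).exists
  choose ι hι1 hι2 using hsel
  -- truncated error functions
  set g1 : ℕ → X → ℝ := fun k y => min ‖F1i (ι k) y - F1 y‖ (2 * M1 + 1) with hg1def
  set g2 : ℕ → X → ℝ := fun k y => min ‖F2i (ι k) y - F2 y‖ (2 * M2 + 1) with hg2def
  have hg1m : ∀ k, Measurable (g1 k) := fun k =>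
    (((hF1im (ι k)).sub hF1m).norm).min measurable_const
  have hg2m : ∀ k, Measurable (g2 k) := fun k =>
    (((hF2im (ι k)).sub hF2m).norm).min measurable_const
  have hg1nn : ∀ k y, 0 ≤ g1 k y := fun k y => le_min (norm_nonneg _) (by linarith)
  have hg2nn : ∀ k y, 0 ≤ g2 k y := fun k y => le_min (norm_nonneg _) (by linarith)
  have hg1b : ∀ k y, |g1 k y| ≤ 2 * M1 + 1 := fun k y =>
    abs_le.2 ⟨by linarith [hg1nn k y], min_le_right _ _⟩
  have hg2b : ∀ k y, |g2 k y| ≤ 2 * M2 + 1 := fun k y =>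
    abs_le.2 ⟨by linarith [hg2nn k y], min_le_right _ _⟩
  -- integral bounds
  have hint_bound : ∀ (G Gi : X → ℂ) (f fi : X → ℂ) (hf' : MemLp f ⊤ μ) (hfi' : MemLp fi ⊤ μ)
      (hae : f =ᵐ[μ] G) (haei : fi =ᵐ[μ] Gi) (hGm : Measurable G) (hGim : Measurable Gi)
      (C : ℝ) (hC : 0 ≤ C) (r : ℝ) (hr : 0 ≤ r)
      (hsn : eLpNorm (fi - f) 2 μ < ENNReal.ofReal r),
      ∫ y, min ‖Gi y - G y‖ C ∂μ ≤ r := by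
    intro G Gi f fi hf' hfi' hae haei hGm hGim C hC r hr hsn
    have haed : (fun y => fi y - f y) =ᵐ[μ] (fun y => Gi y - G y) := by
      filter_upwards [hae, haei] with y h1 h2
      rw [h1, h2]
    have hmem : MemLp (fun y => Gi y - G y) 1 μ :=
      ((hfi'.sub hf').mono_exponent le_top).ae_eq haed
    have hint : Integrable (fun y => Gi y - G y) μ := memLp_one_iff_integrable.1 hmem
    have hming : Integrable (fun y => min ‖Gi y - G y‖ C) μ := by
      refine (integrable_const C).mono' ((hGim.sub hGm).norm.min measurable_const
        ).aestronglyMeasurable (Eventually.of_forall fun y => ?_)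
      have h0 : 0 ≤ min ‖Gi y - G y‖ C := le_min (norm_nonneg _) hC
      rw [Real.norm_eq_abs, abs_of_nonneg h0]
      exact min_le_right _ _
    have hmono : ∫ y, min ‖Gi y - G y‖ C ∂μ ≤ ∫ y, ‖Gi y - G y‖ ∂μ :=
      integral_mono hming hint.norm (fun y => min_le_left _ _)
    have he1 : ENNReal.ofReal (∫ y, ‖Gi y - G y‖ ∂μ) = eLpNorm (fun y => Gi y - G y) 1 μ := by
      rw [ofReal_integral_norm_eq_lintegral_enorm hint, eLpNorm_one_eq_lintegral_enorm]
    have he2 : eLpNorm (fun y => Gi y - G y) 1 μ ≤ ENNReal.ofReal r := by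
      calc eLpNorm (fun y => Gi y - G y) 1 μ = eLpNorm (fun y => fi y - f y) 1 μ :=
            eLpNorm_congr_ae haed.symm
        _ ≤ eLpNorm (fun y => fi y - f y) 2 μ :=
            eLpNorm_le_eLpNorm_of_exponent_le (by norm_num) (hfi'.sub hf').1
        _ = eLpNorm (fi - f) 2 μ := rfl
        _ ≤ ENNReal.ofReal r := hsn.le
    have h3 := ENNReal.toReal_mono ENNReal.ofReal_ne_top (he1 ▸ he2)
    rw [ENNReal.toReal_ofReal (integral_nonneg fun y => norm_nonneg _),
      ENNReal.toReal_ofReal hr] at h3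
    exact hmono.trans h3
  have hint1 : ∀ k, ∫ y, g1 k y ∂μ ≤ (4:ℝ)⁻¹ ^ k := fun k =>
    hint_bound F1 (F1i (ι k)) f1 (f1i (ι k)) hf1 (hf1i (ι k)) hF1ae (hF1iae (ι k)) hF1m
      (hF1im (ι k)) (2 * M1 + 1) (by linarith) _ (by positivity) (hι1 k)
  have hint2 : ∀ k, ∫ y, g2 k y ∂μ ≤ (4:ℝ)⁻¹ ^ k := fun k =>
    hint_bound F2 (F2i (ι k)) f2 (f2i (ι k)) hf2 (hf2i (ι k)) hF2ae (hF2iae (ι k)) hF2m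
      (hF2im (ι k)) (2 * M2 + 1) (by linarith) _ (by positivity) (hι2 k)
  -- the two shift maps
  set σ1 : X → X := ⇑(T.toEquiv ^ a) with hσ1def
  set σ2 : X → X := ⇑(T.toEquiv ^ b) with hσ2def
  have hσ1m : Measurable σ1 := measurable_zpow T a
  have hσ2m : Measurable σ2 := measurable_zpow T b
  have hσ1e : MeasurableEmbedding σ1 := me_zpow T a
  have hσ2e : MeasurableEmbedding σ2 := me_zpow T b
  have hσ1p : MeasurePreserving σ1 μ μ := mp_zpow T hT a
  have hσ2p : MeasurePreserving σ2 μ μ := mp_zpow T hT b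
  set c : ℕ → ℝ := fun k => (2:ℝ)⁻¹ ^ k with hcdef
  have hc : ∀ k, 0 < c k := fun k => by positivity
  -- bad sets
  set s : ℕ → Set X := fun k =>
    {x | ∃ j : ℕ, 1 ≤ j ∧ c k * j < RS σ1 (g1 k) j x} ∪
      {x | ∃ j : ℕ, 1 ≤ j ∧ c k * j < RS σ2 (g2 k) j x} with hsdef
  have hμs : ∀ k, μ (s k) ≤ 2 * ENNReal.ofReal ((2:ℝ)⁻¹ ^ k) := by
    intro k
    have h41 : ∀ I : ℝ, 0 ≤ I → I ≤ (4:ℝ)⁻¹ ^ k → I / c k ≤ (2:ℝ)⁻¹ ^ k := by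
      intro I hI0 hI
      rw [div_le_iff₀ (hc k)]
      have h4 : ((4:ℝ)⁻¹) ^ k = (2:ℝ)⁻¹ ^ k * (2:ℝ)⁻¹ ^ k := by
        rw [← mul_pow]; norm_num
      calc I ≤ (4:ℝ)⁻¹ ^ k := hI
        _ = (2:ℝ)⁻¹ ^ k * c k := h4
    have h1 := maximal hσ1m hσ1e hσ1p (hg1m k) (by linarith : (0:ℝ) ≤ 2 * M1 + 1)
      (hg1b k) (hg1nn k) (hc k)
    have h2 := maximal hσ2m hσ2e hσ2p (hg2m k) (by linarith : (0:ℝ) ≤ 2 * M2 + 1)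
      (hg2b k) (hg2nn k) (hc k)
    have hq1 : ENNReal.ofReal ((∫ y, g1 k y ∂μ) / c k) ≤ ENNReal.ofReal ((2:ℝ)⁻¹ ^ k) :=
      ENNReal.ofReal_le_ofReal (h41 _ (integral_nonneg (hg1nn k)) (hint1 k))
    have hq2 : ENNReal.ofReal ((∫ y, g2 k y ∂μ) / c k) ≤ ENNReal.ofReal ((2:ℝ)⁻¹ ^ k) :=
      ENNReal.ofReal_le_ofReal (h41 _ (integral_nonneg (hg2nn k)) (hint2 k))
    calc μ (s k) ≤ μ {x | ∃ j : ℕ, 1 ≤ j ∧ c k * j < RS σ1 (g1 k) j x} +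
          μ {x | ∃ j : ℕ, 1 ≤ j ∧ c k * j < RS σ2 (g2 k) j x} := measure_union_le _ _
      _ ≤ ENNReal.ofReal ((2:ℝ)⁻¹ ^ k) + ENNReal.ofReal ((2:ℝ)⁻¹ ^ k) :=
          add_le_add (h1.trans hq1) (h2.trans hq2)
      _ = 2 * ENNReal.ofReal ((2:ℝ)⁻¹ ^ k) := (two_mul _).symm
  have htsum : ∑' k, μ (s k) ≠ ⊤ := by
    have hlt : ∑' k, μ (s k) < ⊤ := by
      calc ∑' k, μ (s k) ≤ ∑' k, 2 * ENNReal.ofReal ((2:ℝ)⁻¹ ^ k) := ENNReal.tsum_le_tsum hμs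
        _ = 2 * ∑' k, ENNReal.ofReal ((2:ℝ)⁻¹ ^ k) := ENNReal.tsum_mul_left
        _ = 2 * ∑' k, (ENNReal.ofReal ((2:ℝ)⁻¹)) ^ k := by
            congr 1
            exact tsum_congr fun k => ENNReal.ofReal_pow (by norm_num : (0:ℝ) ≤ 2⁻¹) k
        _ = 2 * (1 - ENNReal.ofReal ((2:ℝ)⁻¹))⁻¹ := by rw [ENNReal.tsum_geometric]
        _ < ⊤ := by
            refine ENNReal.mul_lt_top (by norm_num) (ENNReal.inv_lt_top.2 ?_)
            rw [tsub_pos_iff_lt]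
            exact ENNReal.ofReal_lt_one.2 (by norm_num)
    exact hlt.ne
  have hBC : μ (limsup s atTop) = 0 := measure_limsup_atTop_eq_zero htsum
  obtain ⟨Wb, hWbsub, hWbm, hWbnull⟩ := exists_measurable_superset_of_null hBC
  -- convergence sets
  choose Vc hVcm hVc1 hVcconv using fun k => hconv (ι k)
  -- final set
  refine ⟨Bᶜ ∩ ((⋂ k, Vc k) ∩ Wbᶜ),
    hBm.compl.inter ((MeasurableSet.iInter fun k => hVcm k).inter hWbm.compl), ?_, ?_⟩
  · -- measure 1
    have hVm : MeasurableSet (Bᶜ ∩ ((⋂ k, Vc k) ∩ Wbᶜ)) :=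
      hBm.compl.inter ((MeasurableSet.iInter fun k => hVcm k).inter hWbm.compl)
    rw [← prob_compl_eq_zero_iff hVm]
    have hsubc : (Bᶜ ∩ ((⋂ k, Vc k) ∩ Wbᶜ))ᶜ = B ∪ ((⋃ k, (Vc k)ᶜ) ∪ Wb) := by
      simp [Set.compl_inter, Set.compl_iInter]
    rw [hsubc]
    have hVc0 : ∀ k, μ (Vc k)ᶜ = 0 := fun k => (prob_compl_eq_zero_iff (hVcm k)).2 (hVc1 k)
    refine le_antisymm ?_ zero_le
    calc μ (B ∪ ((⋃ k, (Vc k)ᶜ) ∪ Wb)) ≤ μ B + (μ (⋃ k, (Vc k)ᶜ) + μ Wb) :=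
          (measure_union_le _ _).trans (add_le_add le_rfl (measure_union_le _ _))
      _ ≤ 0 + (0 + 0) := by
          refine add_le_add hBnull.le (add_le_add ((measure_iUnion_le _).trans ?_) hWbnull.le)
          simp [hVc0]
      _ = 0 := by simp
  · -- convergence on the good set
    rintro x ⟨hxB, hxVc, hxWb⟩ t
    have hfact : ∀ m : ℤ,
        (f1 ((T.toEquiv ^ m) x) = F1 ((T.toEquiv ^ m) x) ∧
          f2 ((T.toEquiv ^ m) x) = F2 ((T.toEquiv ^ m) x) ∧
          ‖F1 ((T.toEquiv ^ m) x)‖ ≤ M1 ∧ ‖F2 ((T.toEquiv ^ m) x)‖ ≤ M2) ∧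
        (∀ k, f1i k ((T.toEquiv ^ m) x) = F1i k ((T.toEquiv ^ m) x) ∧
          f2i k ((T.toEquiv ^ m) x) = F2i k ((T.toEquiv ^ m) x) ∧
          ‖F1i k ((T.toEquiv ^ m) x)‖ ≤ M1 ∧ ‖F2i k ((T.toEquiv ^ m) x)‖ ≤ M2) := by
      intro m
      refine hGood _ (fun hmem => ?_)
      exact hxB (Set.mem_iUnion.2 ⟨m, hmem⟩)
    -- key term estimate
    have hz : ∀ r : ℝ, ‖Complex.exp (2 * (Real.pi:ℂ) * Complex.I * (r:ℂ) * (t:ℂ))‖ = 1 := by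
      intro r
      rw [show (2 * (Real.pi:ℂ) * Complex.I * (r:ℂ) * (t:ℂ)) =
          (((2 * Real.pi * r * t : ℝ)):ℂ) * Complex.I by push_cast; ring]
      exact Complex.norm_exp_ofReal_mul_I _
    have key : ∀ k N, ‖wwAvg T a b f1 f2 p t N x -
        wwAvg T a b (f1i (ι k)) (f2i (ι k)) p t N x‖
        ≤ (N:ℝ)⁻¹ * (M2 * RS σ1 (g1 k) N x + M1 * RS σ2 (g2 k) N x) := by
      intro k N
      rw [wwAvg, wwAvg, ← mul_sub, ← Finset.sum_sub_distrib, norm_mul]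
      have hNinv : ‖((N:ℕ):ℂ)⁻¹‖ = ((N:ℕ):ℝ)⁻¹ := by
        rw [norm_inv, Complex.norm_natCast]
      rw [hNinv]
      refine mul_le_mul_of_nonneg_left ?_ (by positivity)
      calc ‖∑ n ∈ Finset.Icc 1 N,
            (f1 ((T.toEquiv ^ (a * (n:ℤ))) x) * f2 ((T.toEquiv ^ (b * (n:ℤ))) x) *
              Complex.exp (2 * Real.pi * Complex.I * (p.eval (n:ℝ)) * t) -
            f1i (ι k) ((T.toEquiv ^ (a * (n:ℤ))) x) * f2i (ι k) ((T.toEquiv ^ (b * (n:ℤ))) x) *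
              Complex.exp (2 * Real.pi * Complex.I * (p.eval (n:ℝ)) * t))‖
          ≤ ∑ n ∈ Finset.Icc 1 N, ‖f1 ((T.toEquiv ^ (a * (n:ℤ))) x) *
              f2 ((T.toEquiv ^ (b * (n:ℤ))) x) *
              Complex.exp (2 * Real.pi * Complex.I * (p.eval (n:ℝ)) * t) -
            f1i (ι k) ((T.toEquiv ^ (a * (n:ℤ))) x) * f2i (ι k) ((T.toEquiv ^ (b * (n:ℤ))) x) *
              Complex.exp (2 * Real.pi * Complex.I * (p.eval (n:ℝ)) * t)‖ :=
            norm_sum_le _ _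
        _ ≤ ∑ n ∈ Finset.Icc 1 N, (M2 * g1 k (σ1^[n] x) + M1 * g2 k (σ2^[n] x)) := by
            refine Finset.sum_le_sum fun n _ => ?_
            have hα := hfact (a * (n:ℤ))
            have hβ := hfact (b * (n:ℤ))
            obtain ⟨⟨e1, _, n1, _⟩, hk1⟩ := hα
            obtain ⟨⟨_, e2, _, n2⟩, hk2⟩ := hβ
            obtain ⟨e1', _, n1', _⟩ := hk1 (ι k)
            obtain ⟨_, e2', _, n2'⟩ := hk2 (ι k)
            rw [← sub_mul, norm_mul]
            have hE := hz (p.eval (n:ℝ))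
            rw [hE, mul_one, e1, e2, e1', e2']
            set α := (T.toEquiv ^ (a * (n:ℤ))) x
            set β := (T.toEquiv ^ (b * (n:ℤ))) x
            have hid : F1 α * F2 β - F1i (ι k) α * F2i (ι k) β =
                (F1 α - F1i (ι k) α) * F2 β + F1i (ι k) α * (F2 β - F2i (ι k) β) := by ring
            rw [hid]
            have hg1eq : ‖F1 α - F1i (ι k) α‖ = g1 k α := by
              rw [norm_sub_rev]
              refine (min_eq_left ?_).symm
              calc ‖F1i (ι k) α - F1 α‖ ≤ ‖F1i (ι k) α‖ + ‖F1 α‖ := norm_sub_le _ _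
                _ ≤ 2 * M1 + 1 := by linarith
            have hg2eq : ‖F2 β - F2i (ι k) β‖ = g2 k β := by
              rw [norm_sub_rev]
              refine (min_eq_left ?_).symm
              calc ‖F2i (ι k) β - F2 β‖ ≤ ‖F2i (ι k) β‖ + ‖F2 β‖ := norm_sub_le _ _
                _ ≤ 2 * M2 + 1 := by linarith
            have hα1 : α = σ1^[n] x := (iterate_zpow_eq T a n x).symm
            have hβ1 : β = σ2^[n] x := (iterate_zpow_eq T b n x).symm
            calc ‖(F1 α - F1i (ι k) α) * F2 β + F1i (ι k) α * (F2 β - F2i (ι k) β)‖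
                ≤ ‖F1 α - F1i (ι k) α‖ * ‖F2 β‖ + ‖F1i (ι k) α‖ * ‖F2 β - F2i (ι k) β‖ := by
                  refine (norm_add_le _ _).trans ?_
                  rw [norm_mul, norm_mul]
              _ ≤ g1 k α * M2 + M1 * g2 k β := by
                  rw [hg1eq, hg2eq]
                  refine add_le_add ?_ ?_
                  · exact mul_le_mul_of_nonneg_left n2 (hg1nn k α)
                  · exact mul_le_mul_of_nonneg_right n1' (hg2nn k β)
              _ = M2 * g1 k (σ1^[n] x) + M1 * g2 k (σ2^[n] x) := by
                  rw [hα1, hβ1]; ring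
        _ = M2 * RS σ1 (g1 k) N x + M1 * RS σ2 (g2 k) N x := by
            rw [RS, RS, Finset.sum_add_distrib, Finset.mul_sum, Finset.mul_sum]
    -- uniform closeness on good indices
    have hnots : ∀ k, x ∉ s k → ∀ N : ℕ, 1 ≤ N →
        ‖wwAvg T a b f1 f2 p t N x - wwAvg T a b (f1i (ι k)) (f2i (ι k)) p t N x‖
          ≤ (M2 + M1) * c k := by
      intro k hk N hN
      have hmem1 : RS σ1 (g1 k) N x ≤ c k * N := by
        by_contra h
        exact hk (Or.inl ⟨N, hN, not_le.1 h⟩)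
      have hmem2 : RS σ2 (g2 k) N x ≤ c k * N := by
        by_contra h
        exact hk (Or.inr ⟨N, hN, not_le.1 h⟩)
      have hNne : ((N:ℕ):ℝ) ≠ 0 := Nat.cast_ne_zero.2 (by omega)
      have hNpos : (0:ℝ) < ((N:ℕ):ℝ) := by positivity
      refine (key k N).trans ?_
      have hstep : M2 * RS σ1 (g1 k) N x + M1 * RS σ2 (g2 k) N x
          ≤ (M2 + M1) * c k * N := by
        have h1 : M2 * RS σ1 (g1 k) N x ≤ M2 * (c k * N) :=
          mul_le_mul_of_nonneg_left hmem1 hM2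
        have h2 : M1 * RS σ2 (g2 k) N x ≤ M1 * (c k * N) :=
          mul_le_mul_of_nonneg_left hmem2 hM1
        calc M2 * RS σ1 (g1 k) N x + M1 * RS σ2 (g2 k) N x
            ≤ M2 * (c k * N) + M1 * (c k * N) := add_le_add h1 h2
          _ = (M2 + M1) * c k * N := by ring
      calc ((N:ℕ):ℝ)⁻¹ * (M2 * RS σ1 (g1 k) N x + M1 * RS σ2 (g2 k) N x)
          ≤ ((N:ℕ):ℝ)⁻¹ * ((M2 + M1) * c k * N) :=
            mul_le_mul_of_nonneg_left hstep (by positivity)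
        _ = (M2 + M1) * c k := by field_simp
    -- eventually not in bad sets
    have hev : ∀ᶠ k in atTop, x ∉ s k := by
      have hnx : x ∉ limsup s atTop := fun hmem => hxWb (hWbsub hmem)
      exact not_frequently.1 (fun h => hnx (mem_limsup_iff_frequently_mem.2 h))
    obtain ⟨K, hK⟩ := eventually_atTop.1 hev
    -- Cauchy sequence argument
    suffices hcs : CauchySeq (fun N => wwAvg T a b f1 f2 p t N x) by
      exact cauchySeq_tendsto_of_complete hcs
    rw [Metric.cauchySeq_iff]
    intro ε hε
    have hc0 : Tendsto (fun k => (M2 + M1) * c k) atTop (nhds 0) := by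
      have h0 := tendsto_pow_atTop_nhds_zero_of_lt_one
        (by norm_num : (0:ℝ) ≤ 2⁻¹) (by norm_num : (2:ℝ)⁻¹ < 1)
      have h1 := h0.const_mul (M2 + M1)
      rw [mul_zero] at h1
      simpa [hcdef, inv_pow] using h1
    obtain ⟨k, hkε, hkK⟩ :=
      ((hc0.eventually (gt_mem_nhds (by positivity : (0:ℝ) < ε/3))).and
        (eventually_ge_atTop K)).exists
    have hxk : x ∈ Vc k := Set.mem_iInter.1 hxVc k
    obtain ⟨L, hL⟩ := hVcconv k x hxk t
    have hcau := hL.cauchySeq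
    rw [Metric.cauchySeq_iff] at hcau
    obtain ⟨N₀, hN₀⟩ := hcau (ε/3) (by positivity)
    refine ⟨max N₀ 1, fun m hm n hn => ?_⟩
    have hm1 : 1 ≤ m := le_trans (le_max_right _ _) hm
    have hn1 : 1 ≤ n := le_trans (le_max_right _ _) hn
    have hmN : N₀ ≤ m := le_trans (le_max_left _ _) hm
    have hnN : N₀ ≤ n := le_trans (le_max_left _ _) hn
    have hxs : x ∉ s k := hK k hkK
    have hdm : dist (wwAvg T a b f1 f2 p t m x)
        (wwAvg T a b (f1i (ι k)) (f2i (ι k)) p t m x) ≤ (M2 + M1) * c k := by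
      rw [dist_eq_norm]; exact hnots k hxs m hm1
    have hdn : dist (wwAvg T a b f1 f2 p t n x)
        (wwAvg T a b (f1i (ι k)) (f2i (ι k)) p t n x) ≤ (M2 + M1) * c k := by
      rw [dist_eq_norm]; exact hnots k hxs n hn1
    have hmid := hN₀ m hmN n hnN
    calc dist (wwAvg T a b f1 f2 p t m x) (wwAvg T a b f1 f2 p t n x)
        ≤ dist (wwAvg T a b f1 f2 p t m x) (wwAvg T a b (f1i (ι k)) (f2i (ι k)) p t m x) +
          dist (wwAvg T a b (f1i (ι k)) (f2i (ι k)) p t m x)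
            (wwAvg T a b (f1i (ι k)) (f2i (ι k)) p t n x) +
          dist (wwAvg T a b (f1i (ι k)) (f2i (ι k)) p t n x)
            (wwAvg T a b f1 f2 p t n x) := dist_triangle4 _ _ _ _
      _ < ε := by
          rw [dist_comm (wwAvg T a b (f1i (ι k)) (f2i (ι k)) p t n x)]
          linarith
end

section
/- Let (X, F, μ, T) be an invertible measure-preserving system, let f1, f2 : X → ℂ be bounded measurable, let a, b ∈ ℤ, let α ∈ ℝ, and let p1, p2, q1, q2 ∈ ℤ satisfy a·p1 + b·p2 = 0 and a·q1 + b·q2 = 0. Let R_α : (ℝ/ℤ)² → (ℝ/ℤ)² be R_α(y,z) = (y + 2ᾱ, z + y + ᾱ), where ᾱ is the image of α in ℝ/ℤ, let U = T × R_α on X × (ℝ/ℤ)², and for j = 1, 2 define F_j(x, y, z) = f_j(x) e^{2πi p_j y} e^{2πi q_j z} (well-defined since p_j, q_j ∈ ℤ). Then for every N ≥ 1 and every (x, y, z) ∈ X × (ℝ/ℤ)²: (1/N) Σ_{n=1}^{N} F1(U^{an}(x,y,z)) F2(U^{bn}(x,y,z)) = e^{2πi (p1+p2) y} e^{2πi (q1+q2)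 z} · (1/N) Σ_{n=1}^{N} f1(T^{an}x) f2(T^{bn}x) e^{2πi b(b−a) q2 n² α}. -/
open MeasureTheory Finset

/-- The character `w ↦ e^{2 π i q w}` on `ℝ/ℤ`, for `q : ℤ` (well-defined since `q` is an
integer). -/
noncomputable def eChar (q : ℤ) (w : AddCircle (1 : ℝ)) : ℂ :=
  (AddCircle.toCircle (q • w) : ℂ)

/-- The Anzai skew product `R_α(y, z) = (y + 2α, z + y + α)` on `(ℝ/ℤ)²`, as a bijection. -/
noncomputable def anzaiEquiv (α : AddCircle (1 : ℝ)) :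
    Equiv.Perm (AddCircle (1 : ℝ) × AddCircle (1 : ℝ)) where
  toFun q := (q.1 + 2 • α, q.2 + q.1 + α)
  invFun q := (q.1 - 2 • α, q.2 - (q.1 - 2 • α) - α)
  left_inv := fun ⟨y, z⟩ => by
    simp only [Prod.mk.injEq]
    constructor <;> abel
  right_inv := fun ⟨y, z⟩ => by
    simp only [Prod.mk.injEq]
    constructor <;> abel

lemma eChar_add (q : ℤ) (w w' : AddCircle (1:ℝ)) : eChar q (w+w') = eChar q w * eChar q w' := by
  simp [eChar, smul_add, AddCircle.toCircle_add]

lemma eChar_add_int (q q' : ℤ) (w : AddCircle (1:ℝ)) : eChar (q+q') w = eChar q w * eChar q' w := by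
  simp [eChar, add_smul, AddCircle.toCircle_add]

lemma eChar_zsmul (q m : ℤ) (w : AddCircle (1:ℝ)) : eChar q (m • w) = eChar (q*m) w := by
  simp [eChar, smul_smul, mul_comm]

lemma eChar_zero (w : AddCircle (1:ℝ)) : eChar 0 w = 1 := by simp [eChar]

lemma eChar_coe (q : ℤ) (r : ℝ) : eChar q ((r : ℝ) : AddCircle (1:ℝ)) =
    Complex.exp (2 * Real.pi * Complex.I * (q : ℝ) * r) := by
  have : (q • ((r : ℝ) : AddCircle (1:ℝ))) = (((q : ℝ) * r : ℝ) : AddCircle (1:ℝ)) := by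
    rw [← AddCircle.coe_zsmul]; norm_num [zsmul_eq_mul]
  rw [eChar, this, AddCircle.toCircle_apply_mk, Circle.coe_exp]
  congr 1; push_cast; ring

lemma U_zpow {X : Type*} (e : Equiv.Perm X) (A : AddCircle (1:ℝ)) (m : ℤ)
    (x : X) (y z : AddCircle (1:ℝ)) :
    ((e.prodCongr (anzaiEquiv A)) ^ m) (x, y, z)
      = ((e ^ m) x, y + (2*m) • A, z + m • y + (m*m) • A) := by
  induction m using Int.induction_on with
  | zero => simp
  | succ n ih =>
      rw [show ((n:ℤ) + 1) = 1 + n by ring, zpow_one_add, Equiv.Perm.mul_apply, ih,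
        zpow_one_add, Equiv.Perm.mul_apply]
      show (_, _ + 2 • A, _ + _ + A) = _
      refine Prod.ext rfl (Prod.ext ?_ ?_) <;> simp only [] <;>
        · try simp only [smul_smul, ← natCast_zsmul]
          try push_cast
          module
  | pred n ih =>
      rw [show (-(n:ℤ) - 1) = -1 + -n by ring, zpow_add, Equiv.Perm.mul_apply, ih,
        zpow_add, Equiv.Perm.mul_apply, zpow_neg_one, zpow_neg_one]
      show (_, (_ - 2 • A), (_ - (_ - 2 • A) - A)) = _
      refine Prod.ext rfl (Prod.ext ?_ ?_) <;> simp only [] <;>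
        · try simp only [smul_smul, ← natCast_zsmul]
          try push_cast
          module

/-- The computation at the heart of the rational case: with `U = T × R_α` on `X × (ℝ/ℤ)²`,
`F_j(x,y,z) = f_j(x) e^{2πi p_j y} e^{2πi q_j z}`, and `a p1 + b p2 = 0`, `a q1 + b q2 = 0`,
the double recurrence averages of `F1, F2` along `U` reduce to the twisted averages
`(1/N) ∑_{n=1}^N f1(T^{an}x) f2(T^{bn}x) e^{2πi b(b−a) q2 n² α}` up to the factor
`e^{2πi (p1+p2) y} e^{2πi (q1+q2) z}`. -/
theorem skew_product_average_identity
    {X : Type*} [MeasurableSpace X] (μ : Measure X) [IsProbabilityMeasure μ]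
    (T : X ≃ᵐ X) (hT : MeasurePreserving T μ μ)
    (f1 f2 : X → ℂ) (hm1 : Measurable f1) (hm2 : Measurable f2)
    (hb1 : ∃ C : ℝ, ∀ x, ‖f1 x‖ ≤ C) (hb2 : ∃ C : ℝ, ∀ x, ‖f2 x‖ ≤ C)
    (a b : ℤ) (α : ℝ) (p1 p2 q1 q2 : ℤ)
    (hp : a * p1 + b * p2 = 0) (hq : a * q1 + b * q2 = 0)
    (U : Equiv.Perm (X × (AddCircle (1 : ℝ) × AddCircle (1 : ℝ))))
    (hU : U = (T.toEquiv.prodCongr (anzaiEquiv ((α : ℝ) : AddCircle (1 : ℝ))))) :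
    ∀ N : ℕ, 1 ≤ N → ∀ (x : X) (y z : AddCircle (1 : ℝ)),
      (N : ℂ)⁻¹ * ∑ n ∈ Finset.Icc 1 N,
        (f1 ((U ^ (a * (n : ℤ))) (x, y, z)).1 *
            eChar p1 ((U ^ (a * (n : ℤ))) (x, y, z)).2.1 *
              eChar q1 ((U ^ (a * (n : ℤ))) (x, y, z)).2.2) *
          (f2 ((U ^ (b * (n : ℤ))) (x, y, z)).1 *
              eChar p2 ((U ^ (b * (n : ℤ))) (x, y, z)).2.1 *
                eChar q2 ((U ^ (b * (n : ℤ))) (x, y, z)).2.2)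
        = eChar (p1 + p2) y * eChar (q1 + q2) z *
            ((N : ℂ)⁻¹ * ∑ n ∈ Finset.Icc 1 N,
              f1 ((T.toEquiv ^ (a * (n : ℤ))) x) * f2 ((T.toEquiv ^ (b * (n : ℤ))) x) *
                Complex.exp (2 * Real.pi * Complex.I * ((b * (b - a) * q2 : ℤ) : ℝ) *
                  (n : ℝ) ^ 2 * α)) := by
  intro N hN x y z
  subst hU
  have key : ∀ n ∈ Finset.Icc 1 N,
      (f1 (((T.toEquiv.prodCongr (anzaiEquiv ((α : ℝ) : AddCircle (1 : ℝ)))) ^ (a * (n : ℤ))) (x, y, z)).1 *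
          eChar p1 (((T.toEquiv.prodCongr (anzaiEquiv ((α : ℝ) : AddCircle (1 : ℝ)))) ^ (a * (n : ℤ))) (x, y, z)).2.1 *
            eChar q1 (((T.toEquiv.prodCongr (anzaiEquiv ((α : ℝ) : AddCircle (1 : ℝ)))) ^ (a * (n : ℤ))) (x, y, z)).2.2) *
        (f2 (((T.toEquiv.prodCongr (anzaiEquiv ((α : ℝ) : AddCircle (1 : ℝ)))) ^ (b * (n : ℤ))) (x, y, z)).1 *
            eChar p2 (((T.toEquiv.prodCongr (anzaiEquiv ((α : ℝ) : AddCircle (1 : ℝ)))) ^ (b * (n : ℤ))) (x, y, z)).2.1 *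
              eChar q2 (((T.toEquiv.prodCongr (anzaiEquiv ((α : ℝ) : AddCircle (1 : ℝ)))) ^ (b * (n : ℤ))) (x, y, z)).2.2)
      = eChar (p1 + p2) y * eChar (q1 + q2) z *
          (f1 ((T.toEquiv ^ (a * (n : ℤ))) x) * f2 ((T.toEquiv ^ (b * (n : ℤ))) x) *
            Complex.exp (2 * Real.pi * Complex.I * ((b * (b - a) * q2 : ℤ) : ℝ) *
              (n : ℝ) ^ 2 * α)) := by
    intro n _
    simp only [U_zpow, eChar_add, eChar_zsmul, eChar_coe]
    have hy : eChar (q1 * (a * (n:ℤ))) y * eChar (q2 * (b * (n:ℤ))) y = 1 := by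
      rw [← eChar_add_int, show q1 * (a * (n:ℤ)) + q2 * (b * (n:ℤ)) = (a*q1 + b*q2) * n by ring,
        hq, zero_mul, eChar_zero]
    have he : Complex.exp (2 * Real.pi * Complex.I * ((p1 * (2 * (a * (n:ℤ))) : ℤ) : ℝ) * α) *
        Complex.exp (2 * Real.pi * Complex.I * ((q1 * (a * (n:ℤ) * (a * (n:ℤ))) : ℤ) : ℝ) * α) *
        (Complex.exp (2 * Real.pi * Complex.I * ((p2 * (2 * (b * (n:ℤ))) : ℤ) : ℝ) * α) *
        Complex.exp (2 * Real.pi * Complex.I * ((q2 * (b * (n:ℤ) * (b * (n:ℤ))) : ℤ) : ℝ) * α)) =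
        Complex.exp (2 * Real.pi * Complex.I * ((b * (b - a) * q2 : ℤ) : ℝ) * (n : ℝ) ^ 2 * α) := by
      rw [← Complex.exp_add, ← Complex.exp_add, ← Complex.exp_add]
      congr 1
      have hpC : (a:ℂ) * p1 + b * p2 = 0 := by exact_mod_cast congrArg (Int.cast : ℤ → ℂ) hp
      have hqC : (a:ℂ) * q1 + b * q2 = 0 := by exact_mod_cast congrArg (Int.cast : ℤ → ℂ) hq
      push_cast
      linear_combination (2*(Real.pi:ℂ)*Complex.I*(α:ℂ)*2*(n:ℂ)) * hpC
        + (2*(Real.pi:ℂ)*Complex.I*(α:ℂ)*(n:ℂ)^2*(a:ℂ)) * hqC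
    set F1 := f1 ((T.toEquiv ^ (a * (n:ℤ))) x) with hF1
    set F2 := f2 ((T.toEquiv ^ (b * (n:ℤ))) x) with hF2
    set P1 := eChar p1 y; set P2 := eChar p2 y
    set Q1 := eChar q1 z; set Q2 := eChar q2 z
    set Y1 := eChar (q1 * (a * (n:ℤ))) y; set Y2 := eChar (q2 * (b * (n:ℤ))) y
    set X1 := Complex.exp (2 * Real.pi * Complex.I * ((p1 * (2 * (a * (n:ℤ))) : ℤ) : ℝ) * α)
    set X2 := Complex.exp (2 * Real.pi * Complex.I * ((q1 * (a * (n:ℤ) * (a * (n:ℤ))) : ℤ) : ℝ) * α)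
    set X3 := Complex.exp (2 * Real.pi * Complex.I * ((p2 * (2 * (b * (n:ℤ))) : ℤ) : ℝ) * α)
    set X4 := Complex.exp (2 * Real.pi * Complex.I * ((q2 * (b * (n:ℤ) * (b * (n:ℤ))) : ℤ) : ℝ) * α)
    set E := Complex.exp (2 * Real.pi * Complex.I * ((b * (b - a) * q2 : ℤ) : ℝ) * (n : ℝ) ^ 2 * α)
    rw [eChar_add_int p1 p2 y, eChar_add_int q1 q2 z]
    linear_combination (F1*F2*P1*P2*Q1*Q2*(X1*X2*X3*X4)) * hy + (F1*F2*P1*P2*Q1*Q2) * he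
  rw [Finset.sum_congr rfl key, ← Finset.mul_sum]
  ring
end

section
/- Assume that for every invertible measure-preserving system (Ω, G, ν, S) on a probability space, all bounded measurable G1, G2 : Ω → ℝ, and all integers a, b, the averages (1/N) Σ_{n=1}^{N} G1(S^{an}ω) G2(S^{bn}ω) converge for ν-almost every ω as N → ∞. Then for every invertible measure-preserving system (X, F, μ, T) on a probability space, all f1, f2 ∈ L^∞(μ), all integers a ≠ b, and every t ∈ ℝ, the averages (1/N) Σ_{n=1}^{N} f1(T^{an}x) f2(T^{bn}x) e^{2πi n² t} converge for μ-almost every x as N → ∞. -/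
open MeasureTheory Filter Finset

universe u



noncomputable section WW

local notation "𝕋" => AddCircle (1:ℝ)

def ww_c (m : ℤ) : ℤ := m * (m - 1) / 2

lemma ww_two_c (m : ℤ) : 2 * ww_c m = m * (m - 1) := by
  have h : Even (m * (m - 1)) := by
    rcases Int.even_or_odd m with h | h
    · exact h.mul_right _
    · obtain ⟨k, hk⟩ := h
      have : Even (m - 1) := ⟨k, by omega⟩
      exact this.mul_left _
  obtain ⟨k, hk⟩ := h
  unfold ww_c
  omega

lemma ww_c_add_one (m : ℤ) : ww_c (m + 1) = ww_c m + m := by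
  have h1 := ww_two_c m
  have h2 := ww_two_c (m + 1)
  have h3 : (m + 1) * (m + 1 - 1) = m * (m - 1) + 2 * m := by ring
  linarith

lemma ww_c_sub_one (m : ℤ) : ww_c (m - 1) = ww_c m - (m - 1) := by
  have h1 := ww_two_c m
  have h2 := ww_two_c (m - 1)
  have h3 : (m - 1) * (m - 1 - 1) = m * (m - 1) - 2 * (m - 1) := by ring
  linarith

def ww_skew (s : ℝ) : (𝕋 × 𝕋) ≃ᵐ (𝕋 × 𝕋) where
  toFun p := (p.1 + (s : 𝕋), p.2 + p.1)
  invFun p := (p.1 - (s : 𝕋), p.2 - (p.1 - (s : 𝕋)))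
  left_inv p := by simp
  right_inv p := by simp
  measurable_toFun := by
    apply Measurable.prod
    · exact (measurable_fst.add_const _)
    · exact measurable_snd.add measurable_fst
  measurable_invFun := by
    apply Measurable.prod
    · exact (measurable_fst.sub_const _)
    · exact measurable_snd.sub (measurable_fst.sub_const _)

instance : Fact ((0:ℝ) < 1) := ⟨one_pos⟩

lemma ww_skew_mp (s : ℝ) : MeasurePreserving (ww_skew s)
    ((AddCircle.haarAddCircle.prod AddCircle.haarAddCircle : Measure (𝕋 × 𝕋)))
    (AddCircle.haarAddCircle.prod AddCircle.haarAddCircle) :=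
  MeasurePreserving.skew_product (g := fun a c => c + a)
    (measurePreserving_add_right _ _)
    (measurable_snd.add measurable_fst)
    (Filter.Eventually.of_forall fun a => (measurePreserving_add_right _ a).map_eq)


variable {X : Type u} [MeasurableSpace X]

lemma ww_zpow (T : X ≃ᵐ X) (s : ℝ) (m : ℤ) :
    ∀ p : X × 𝕋 × 𝕋, ((T.prodCongr (ww_skew s)).toEquiv ^ m) p =
      ((T.toEquiv ^ m) p.1, p.2.1 + m • ((s : ℝ) : 𝕋),
        p.2.2 + m • p.2.1 + (ww_c m) • ((s : ℝ) : 𝕋)) := by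
  induction m using Int.induction_on with
  | zero =>
    intro p
    have : ww_c 0 = 0 := rfl
    simp [this]
  | succ n ih =>
    intro p
    have hmul : ((T.prodCongr (ww_skew s)).toEquiv ^ ((n : ℤ) + 1)) p
        = ((T.prodCongr (ww_skew s)).toEquiv ^ (n : ℤ))
          ((T.prodCongr (ww_skew s)).toEquiv p) := by
      rw [zpow_add_one, Equiv.Perm.mul_apply]
    rw [hmul, ih]
    have hTp : (T.prodCongr (ww_skew s)).toEquiv p
        = (T p.1, p.2.1 + (s : 𝕋), p.2.2 + p.2.1) := rfl
    rw [hTp]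
    refine Prod.ext ?_ (Prod.ext ?_ ?_)
    · show (T.toEquiv ^ (n : ℤ)) (T.toEquiv p.1) = _
      rw [← Equiv.Perm.mul_apply, ← zpow_add_one]
    · show (p.2.1 + (s : 𝕋)) + (n : ℤ) • ((s : ℝ) : 𝕋) = _
      rw [add_zsmul, one_zsmul]
      abel
    · show (p.2.2 + p.2.1) + (n : ℤ) • (p.2.1 + (s : 𝕋)) + (ww_c n) • ((s : ℝ) : 𝕋) = _
      rw [zsmul_add, ww_c_add_one, add_zsmul, add_zsmul, one_zsmul, add_zsmul]
      abel
  | pred n ih =>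
    intro p
    have hmul : ((T.prodCongr (ww_skew s)).toEquiv ^ (-(n : ℤ) - 1)) p
        = ((T.prodCongr (ww_skew s)).toEquiv ^ (-(n : ℤ)))
          ((T.prodCongr (ww_skew s)).toEquiv⁻¹ p) := by
      rw [zpow_sub_one, Equiv.Perm.mul_apply]
    rw [hmul, ih]
    have hTp : (T.prodCongr (ww_skew s)).toEquiv⁻¹ p
        = (T.symm p.1, p.2.1 - (s : 𝕋), p.2.2 - (p.2.1 - (s : 𝕋))) := rfl
    rw [hTp]
    have hc : ww_c (-(n : ℤ) - 1) = ww_c (-(n : ℤ)) + ((n : ℤ) + 1) := by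
      have := ww_c_sub_one (-(n : ℤ)); linarith
    refine Prod.ext ?_ (Prod.ext ?_ ?_)
    · show (T.toEquiv ^ (-(n : ℤ))) (T.toEquiv⁻¹ p.1) = _
      rw [← Equiv.Perm.mul_apply, ← zpow_sub_one]
    · show (p.2.1 - (s : 𝕋)) + (-(n : ℤ)) • ((s : ℝ) : 𝕋) = _
      rw [sub_zsmul, neg_zsmul, one_zsmul]
      abel
    · show (p.2.2 - (p.2.1 - (s : 𝕋))) + (-(n : ℤ)) • (p.2.1 - (s : 𝕋))
          + (ww_c (-(n : ℤ))) • ((s : ℝ) : 𝕋)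
          = p.2.2 + (-(n:ℤ) - 1) • p.2.1 + (ww_c (-(n:ℤ) - 1)) • ((s : ℝ) : 𝕋)
      have e1 : (-(n:ℤ) - 1) • p.2.1 = -((n:ℤ) • p.2.1) - p.2.1 := by
        rw [sub_zsmul, neg_zsmul, one_zsmul]; abel
      have e2 : (ww_c (-(n:ℤ) - 1)) • ((s : ℝ) : 𝕋)
          = (ww_c (-(n:ℤ))) • ((s : ℝ) : 𝕋) + (n:ℤ) • ((s : ℝ) : 𝕋) + ((s : ℝ) : 𝕋) := by
        rw [hc, add_zsmul, add_zsmul, one_zsmul]; abel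
      have e3 : (-(n : ℤ)) • (p.2.1 - (s : 𝕋))
          = (n:ℤ) • ((s : ℝ) : 𝕋) - (n:ℤ) • p.2.1 := by
        rw [neg_zsmul, zsmul_sub, neg_sub]
      rw [e1, e2, e3]
      abel



lemma ww_split (p q : ℕ → ℂ) (pr pi qr qi : ℕ → ℝ)
    (hp : ∀ n, p n = (pr n : ℂ) + (pi n : ℂ) * Complex.I)
    (hq : ∀ n, q n = (qr n : ℂ) + (qi n : ℂ) * Complex.I) (N : ℕ) :
    (N : ℂ)⁻¹ * ∑ n ∈ Finset.Icc 1 N, p n * q n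
      = (((N : ℝ)⁻¹ * ∑ n ∈ Finset.Icc 1 N, pr n * qr n
          - (N : ℝ)⁻¹ * ∑ n ∈ Finset.Icc 1 N, pi n * qi n : ℝ) : ℂ)
        + (((N : ℝ)⁻¹ * ∑ n ∈ Finset.Icc 1 N, pr n * qi n
          + (N : ℝ)⁻¹ * ∑ n ∈ Finset.Icc 1 N, pi n * qr n : ℝ) : ℂ) * Complex.I := by
  have e : ∀ n, p n * q n
      = (((pr n * qr n : ℝ) : ℂ) - ((pi n * qi n : ℝ) : ℂ))
        + ((((pr n * qi n : ℝ) : ℂ) + ((pi n * qr n : ℝ) : ℂ)) * Complex.I) := by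
    intro n
    rw [hp n, hq n]
    push_cast
    ring_nf
    rw [Complex.I_sq]
    ring
  rw [Finset.sum_congr rfl fun n _ => e n, Finset.sum_add_distrib, Finset.sum_sub_distrib,
    ← Finset.sum_mul, Finset.sum_add_distrib, ← Complex.ofReal_sum, ← Complex.ofReal_sum,
    ← Complex.ofReal_sum, ← Complex.ofReal_sum]
  push_cast
  ring

section HypC

theorem ww_hypC
    (hyp : ∀ (Ω : Type u) [MeasurableSpace Ω] (ν : Measure Ω) [IsProbabilityMeasure ν]
      (S : Ω ≃ᵐ Ω), MeasurePreserving S ν ν →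
        ∀ (G1 G2 : Ω → ℝ), Measurable G1 → Measurable G2 →
          (∃ C : ℝ, ∀ ω, |G1 ω| ≤ C) → (∃ C : ℝ, ∀ ω, |G2 ω| ≤ C) →
            ∀ a b : ℤ, ∀ᵐ ω ∂ν, ∃ L : ℝ,
              Tendsto (fun N : ℕ => (N : ℝ)⁻¹ * ∑ n ∈ Finset.Icc 1 N,
                  G1 ((S.toEquiv ^ (a * (n : ℤ))) ω) * G2 ((S.toEquiv ^ (b * (n : ℤ))) ω))
                atTop (nhds L))
    (Ω : Type u) [MeasurableSpace Ω] (ν : Measure Ω) [IsProbabilityMeasure ν]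
    (S : Ω ≃ᵐ Ω) (hS : MeasurePreserving S ν ν)
    (H1 H2 : Ω → ℂ) (h1m : Measurable H1) (h2m : Measurable H2)
    (h1b : ∃ C, ∀ ω, ‖H1 ω‖ ≤ C) (h2b : ∃ C, ∀ ω, ‖H2 ω‖ ≤ C) (a b : ℤ) :
    ∀ᵐ ω ∂ν, ∃ L : ℂ, Tendsto (fun N : ℕ => (N : ℂ)⁻¹ * ∑ n ∈ Finset.Icc 1 N,
        H1 ((S.toEquiv ^ (a * (n : ℤ))) ω) * H2 ((S.toEquiv ^ (b * (n : ℤ))) ω))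
      atTop (nhds L) := by
  obtain ⟨C1, hC1⟩ := h1b
  obtain ⟨C2, hC2⟩ := h2b
  set r1 : Ω → ℝ := fun ω => (H1 ω).re with hr1
  set i1 : Ω → ℝ := fun ω => (H1 ω).im with hi1
  set r2 : Ω → ℝ := fun ω => (H2 ω).re with hr2
  set i2 : Ω → ℝ := fun ω => (H2 ω).im with hi2
  have mr1 : Measurable r1 := Complex.measurable_re.comp h1m
  have mi1 : Measurable i1 := Complex.measurable_im.comp h1m
  have mr2 : Measurable r2 := Complex.measurable_re.comp h2m
  have mi2 : Measurable i2 := Complex.measurable_im.comp h2m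
  have br1 : ∃ C : ℝ, ∀ ω, |r1 ω| ≤ C :=
    ⟨C1, fun ω => (Complex.abs_re_le_norm _).trans (hC1 ω)⟩
  have bi1 : ∃ C : ℝ, ∀ ω, |i1 ω| ≤ C :=
    ⟨C1, fun ω => (Complex.abs_im_le_norm _).trans (hC1 ω)⟩
  have br2 : ∃ C : ℝ, ∀ ω, |r2 ω| ≤ C :=
    ⟨C2, fun ω => (Complex.abs_re_le_norm _).trans (hC2 ω)⟩
  have bi2 : ∃ C : ℝ, ∀ ω, |i2 ω| ≤ C :=
    ⟨C2, fun ω => (Complex.abs_im_le_norm _).trans (hC2 ω)⟩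
  filter_upwards [hyp Ω ν S hS r1 r2 mr1 mr2 br1 br2 a b,
    hyp Ω ν S hS r1 i2 mr1 mi2 br1 bi2 a b,
    hyp Ω ν S hS i1 r2 mi1 mr2 bi1 br2 a b,
    hyp Ω ν S hS i1 i2 mi1 mi2 bi1 bi2 a b] with ω hrr hri hir hii
  obtain ⟨Lrr, hrr⟩ := hrr
  obtain ⟨Lri, hri⟩ := hri
  obtain ⟨Lir, hir⟩ := hir
  obtain ⟨Lii, hii⟩ := hii
  refine ⟨((Lrr - Lii : ℝ) : ℂ) + ((Lri + Lir : ℝ) : ℂ) * Complex.I, ?_⟩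
  have key : (fun N : ℕ => (N : ℂ)⁻¹ * ∑ n ∈ Finset.Icc 1 N,
        H1 ((S.toEquiv ^ (a * (n : ℤ))) ω) * H2 ((S.toEquiv ^ (b * (n : ℤ))) ω))
      = fun N : ℕ =>
        (((N : ℝ)⁻¹ * ∑ n ∈ Finset.Icc 1 N,
            r1 ((S.toEquiv ^ (a * (n : ℤ))) ω) * r2 ((S.toEquiv ^ (b * (n : ℤ))) ω)
          - (N : ℝ)⁻¹ * ∑ n ∈ Finset.Icc 1 N,
            i1 ((S.toEquiv ^ (a * (n : ℤ))) ω) * i2 ((S.toEquiv ^ (b * (n : ℤ))) ω) : ℝ) : ℂ)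
        + (((N : ℝ)⁻¹ * ∑ n ∈ Finset.Icc 1 N,
            r1 ((S.toEquiv ^ (a * (n : ℤ))) ω) * i2 ((S.toEquiv ^ (b * (n : ℤ))) ω)
          + (N : ℝ)⁻¹ * ∑ n ∈ Finset.Icc 1 N,
            i1 ((S.toEquiv ^ (a * (n : ℤ))) ω) * r2 ((S.toEquiv ^ (b * (n : ℤ))) ω) : ℝ) : ℂ)
          * Complex.I := by
    funext N
    exact ww_split (fun n => H1 ((S.toEquiv ^ (a * (n : ℤ))) ω))
      (fun n => H2 ((S.toEquiv ^ (b * (n : ℤ))) ω)) _ _ _ _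
      (fun n => (Complex.re_add_im _).symm) (fun n => (Complex.re_add_im _).symm) N
  rw [key]
  exact ((Complex.continuous_ofReal.tendsto _).comp (hrr.sub hii)).add
    (((Complex.continuous_ofReal.tendsto _).comp (hri.add hir)).mul_const Complex.I)

end HypC

section Core

lemma ww_fourier_arg_add (k : ℤ) (x y : 𝕋) : fourier k (x + y) = fourier k x * fourier k y := by
  simp only [fourier_apply, zsmul_add, AddCircle.toCircle_add, Circle.coe_mul]

lemma ww_fourier_zsmul (k m : ℤ) (x : 𝕋) : fourier k (m • x) = fourier (k * m) x := by
  simp only [fourier_apply, smul_smul]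

lemma ww_fourier_ne_zero (k : ℤ) (x : 𝕋) : (fourier k x : ℂ) ≠ 0 := by
  rw [fourier_apply]; exact Circle.coe_ne_zero _

lemma ww_fourier_norm (k : ℤ) (x : 𝕋) : ‖(fourier k x : ℂ)‖ = 1 := by
  rw [fourier_apply]; exact Circle.norm_coe _

lemma ww_rearrange (u v F1 G1 E1 F2 G2 E2 w e : ℂ)
    (hθ : G1 * G2 = 1) (hφ : F1 * F2 = w) (hσ : E1 * E2 = e) :
    (u * (F1 * G1 * E1)) * (v * (F2 * G2 * E2)) = w * (u * v * e) := by
  rw [← hφ, ← hσ]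
  linear_combination (u * v * F1 * F2 * E1 * E2) * hθ

theorem ww_core
    (hyp : ∀ (Ω : Type u) [MeasurableSpace Ω] (ν : Measure Ω) [IsProbabilityMeasure ν]
      (S : Ω ≃ᵐ Ω), MeasurePreserving S ν ν →
        ∀ (G1 G2 : Ω → ℝ), Measurable G1 → Measurable G2 →
          (∃ C : ℝ, ∀ ω, |G1 ω| ≤ C) → (∃ C : ℝ, ∀ ω, |G2 ω| ≤ C) →
            ∀ a b : ℤ, ∀ᵐ ω ∂ν, ∃ L : ℝ,
              Tendsto (fun N : ℕ => (N : ℝ)⁻¹ * ∑ n ∈ Finset.Icc 1 N,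
                  G1 ((S.toEquiv ^ (a * (n : ℤ))) ω) * G2 ((S.toEquiv ^ (b * (n : ℤ))) ω))
                atTop (nhds L))
    (X : Type u) [MeasurableSpace X] (μ : Measure X) [IsProbabilityMeasure μ]
    (T : X ≃ᵐ X) (hT : MeasurePreserving T μ μ)
    (g1 g2 : X → ℂ) (m1 : Measurable g1) (m2 : Measurable g2)
    (b1 : ∃ C, ∀ x, ‖g1 x‖ ≤ C) (b2 : ∃ C, ∀ x, ‖g2 x‖ ≤ C)
    (a b : ℤ) (ha : a ≠ 0) (hb : b ≠ 0) (hab : a ≠ b) (t : ℝ) :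
    ∀ᵐ x ∂μ, ∃ L : ℂ,
      Tendsto (fun N : ℕ => (N : ℂ)⁻¹ * ∑ n ∈ Finset.Icc 1 N,
          g1 ((T.toEquiv ^ (a * (n : ℤ))) x) * g2 ((T.toEquiv ^ (b * (n : ℤ))) x) *
            Complex.exp (2 * Real.pi * Complex.I * ((n : ℝ) ^ 2) * t))
        atTop (nhds L) := by
  classical
  set D : ℤ := a * b * (a - b) with hD
  have hDne : D ≠ 0 := by
    simp only [hD, mul_ne_zero_iff, sub_ne_zero]
    exact ⟨⟨ha, hb⟩, hab⟩
  have hDR : (D : ℝ) ≠ 0 := Int.cast_ne_zero.mpr hDne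
  set s : ℝ := 2 * t / (D : ℝ) with hs
  set ρ : Measure (𝕋 × 𝕋) :=
    (AddCircle.haarAddCircle.prod AddCircle.haarAddCircle) with hρ
  haveI : IsProbabilityMeasure ρ := by rw [hρ]; infer_instance
  set ν : Measure (X × 𝕋 × 𝕋) := μ.prod ρ with hν
  haveI : IsProbabilityMeasure ν := by rw [hν]; infer_instance
  set S : (X × 𝕋 × 𝕋) ≃ᵐ (X × 𝕋 × 𝕋) := T.prodCongr (ww_skew s) with hS
  have hSmp : MeasurePreserving S ν ν := hT.prod (ww_skew_mp s)
  set H1 : X × 𝕋 × 𝕋 → ℂ := fun p => g1 p.1 * fourier b p.2.2 with hH1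
  set H2 : X × 𝕋 × 𝕋 → ℂ := fun p => g2 p.1 * fourier (-a) p.2.2 with hH2
  have hH1m : Measurable H1 := by
    apply (m1.comp measurable_fst).mul
    exact (map_continuous (fourier b)).measurable.comp (measurable_snd.comp measurable_snd)
  have hH2m : Measurable H2 := by
    apply (m2.comp measurable_fst).mul
    exact (map_continuous (fourier (-a))).measurable.comp (measurable_snd.comp measurable_snd)
  have hH1b : ∃ C, ∀ p, ‖H1 p‖ ≤ C := by
    obtain ⟨C, hC⟩ := b1
    exact ⟨C, fun p => by
      rw [hH1]; simp only [norm_mul, ww_fourier_norm, mul_one]; exact hC p.1⟩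
  have hH2b : ∃ C, ∀ p, ‖H2 p‖ ≤ C := by
    obtain ⟨C, hC⟩ := b2
    exact ⟨C, fun p => by
      rw [hH2]; simp only [norm_mul, ww_fourier_norm, mul_one]; exact hC p.1⟩
  have hae := ww_hypC hyp _ ν S hSmp H1 H2 hH1m hH2m hH1b hH2b a b
  have hterm : ∀ (p : X × 𝕋 × 𝕋) (n : ℕ),
      H1 ((S.toEquiv ^ (a * (n : ℤ))) p) * H2 ((S.toEquiv ^ (b * (n : ℤ))) p)
        = (fourier (b - a) p.2.2 : ℂ) *
          (g1 ((T.toEquiv ^ (a * (n : ℤ))) p.1) * g2 ((T.toEquiv ^ (b * (n : ℤ))) p.1) *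
            Complex.exp (2 * Real.pi * Complex.I * ((n : ℝ) ^ 2) * t)) := by
    intro p n
    have hA : H1 ((S.toEquiv ^ (a * (n : ℤ))) p)
        = g1 ((T.toEquiv ^ (a * (n : ℤ))) p.1) *
          ((fourier b p.2.2 : ℂ) * fourier (b * (a * (n : ℤ))) p.2.1 *
            fourier (b * ww_c (a * (n : ℤ))) ((s : ℝ) : 𝕋)) := by
      rw [hS, ww_zpow T s (a * (n : ℤ)) p, hH1]
      simp only
      rw [ww_fourier_arg_add, ww_fourier_arg_add]
      simp only [ww_fourier_zsmul]
    have hB : H2 ((S.toEquiv ^ (b * (n : ℤ))) p)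
        = g2 ((T.toEquiv ^ (b * (n : ℤ))) p.1) *
          ((fourier (-a) p.2.2 : ℂ) * fourier (-a * (b * (n : ℤ))) p.2.1 *
            fourier (-a * ww_c (b * (n : ℤ))) ((s : ℝ) : 𝕋)) := by
      rw [hS, ww_zpow T s (b * (n : ℤ)) p, hH2]
      simp only
      rw [ww_fourier_arg_add, ww_fourier_arg_add]
      simp only [ww_fourier_zsmul]
    rw [hA, hB]
    have hθ : (fourier (b * (a * (n : ℤ))) p.2.1 : ℂ) * fourier (-a * (b * (n : ℤ))) p.2.1
        = 1 := by
      rw [← fourier_add]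
      have e : b * (a * (n : ℤ)) + -a * (b * (n : ℤ)) = 0 := by ring
      rw [e, fourier_zero]
    have hφ : (fourier b p.2.2 : ℂ) * fourier (-a) p.2.2 = fourier (b - a) p.2.2 := by
      rw [show b - a = b + -a from by ring, fourier_add]
    have hσ : (fourier (b * ww_c (a * (n : ℤ))) ((s : ℝ) : 𝕋) : ℂ) *
          fourier (-a * ww_c (b * (n : ℤ))) ((s : ℝ) : 𝕋)
        = Complex.exp (2 * Real.pi * Complex.I * ((n : ℝ) ^ 2) * t) := by
      rw [← fourier_add]
      set K : ℤ := b * ww_c (a * (n : ℤ)) + -a * ww_c (b * (n : ℤ)) with hK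
      have h2K : 2 * K = D * (n : ℤ) ^ 2 := by
        have e1 := ww_two_c (a * (n : ℤ))
        have e2 := ww_two_c (b * (n : ℤ))
        rw [hK, hD]
        linear_combination b * e1 - a * e2
      rw [fourier_coe_apply]
      congr 1
      have hKs : (K : ℝ) * s = (n : ℝ) ^ 2 * t := by
        have h2KR : 2 * (K : ℝ) = (D : ℝ) * (n : ℝ) ^ 2 := by exact_mod_cast h2K
        rw [hs]
        field_simp
        linear_combination t * h2KR
      have hC : (K : ℂ) * (s : ℂ) = ((n : ℝ) : ℂ) ^ 2 * (t : ℂ) := by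
        exact_mod_cast congrArg Complex.ofReal hKs
      rw [Complex.ofReal_one, div_one]
      linear_combination (2 * (Real.pi : ℂ) * Complex.I) * hC
    exact ww_rearrange _ _ _ _ _ _ _ _ _ _ hθ hφ hσ
  have hae2 : ∀ᵐ p ∂ν, ∃ L : ℂ,
      Tendsto (fun N : ℕ => (N : ℂ)⁻¹ * ∑ n ∈ Finset.Icc 1 N,
          g1 ((T.toEquiv ^ (a * (n : ℤ))) p.1) * g2 ((T.toEquiv ^ (b * (n : ℤ))) p.1) *
            Complex.exp (2 * Real.pi * Complex.I * ((n : ℝ) ^ 2) * t))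
        atTop (nhds L) := by
    filter_upwards [hae] with p hp
    obtain ⟨L, hL⟩ := hp
    have hc : (fourier (b - a) p.2.2 : ℂ) ≠ 0 := ww_fourier_ne_zero _ _
    refine ⟨(fourier (b - a) p.2.2 : ℂ)⁻¹ * L, ?_⟩
    have heq : (fun N : ℕ => (N : ℂ)⁻¹ * ∑ n ∈ Finset.Icc 1 N,
          g1 ((T.toEquiv ^ (a * (n : ℤ))) p.1) * g2 ((T.toEquiv ^ (b * (n : ℤ))) p.1) *
            Complex.exp (2 * Real.pi * Complex.I * ((n : ℝ) ^ 2) * t))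
        = fun N : ℕ => (fourier (b - a) p.2.2 : ℂ)⁻¹ *
            ((N : ℂ)⁻¹ * ∑ n ∈ Finset.Icc 1 N,
              H1 ((S.toEquiv ^ (a * (n : ℤ))) p) * H2 ((S.toEquiv ^ (b * (n : ℤ))) p)) := by
      funext N
      rw [Finset.sum_congr rfl fun n _ => hterm p n, ← Finset.mul_sum]
      field_simp
      congr 1
      refine Finset.sum_congr rfl fun n _ => ?_
      ring_nf
    rw [heq]
    exact hL.const_mul _
  rw [hν] at hae2
  filter_upwards [Measure.ae_ae_of_ae_prod hae2] with x hx
  obtain ⟨y, hy⟩ := hx.exists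
  exact hy

end Core

section Main

variable {X : Type u} [MeasurableSpace X]

lemma ww_mp_zpow {μ : Measure X} (T : X ≃ᵐ X) (hT : MeasurePreserving T μ μ) (m : ℤ) :
    MeasurePreserving (fun x => (T.toEquiv ^ m) x) μ μ := by
  induction m using Int.induction_on with
  | zero => simp; exact MeasurePreserving.id μ
  | succ n ih =>
    have e : (fun x => (T.toEquiv ^ ((n : ℤ) + 1)) x)
        = (fun x => (T.toEquiv ^ (n : ℤ)) x) ∘ T := by
      funext x; rw [zpow_add_one, Equiv.Perm.mul_apply]; rfl
    rw [e]; exact ih.comp hT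
  | pred n ih =>
    have e : (fun x => (T.toEquiv ^ (-(n : ℤ) - 1)) x)
        = (fun x => (T.toEquiv ^ (-(n : ℤ))) x) ∘ T.symm := by
      funext x; rw [zpow_sub_one, Equiv.Perm.mul_apply]; rfl
    rw [e]; exact ih.comp (hT.symm T)

lemma ww_rep {μ : Measure X} (f : X → ℂ) (hf : MemLp f ⊤ μ) :
    ∃ g : X → ℂ, Measurable g ∧ (∃ C, ∀ x, ‖g x‖ ≤ C) ∧ f =ᵐ[μ] g := by
  obtain ⟨hsm, hlt⟩ := hf
  set C : ℝ := (eLpNormEssSup f μ).toReal with hC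
  have hne : eLpNormEssSup f μ ≠ ⊤ := by
    rw [eLpNorm_exponent_top] at hlt; exact hlt.ne
  have hbd : ∀ᵐ x ∂μ, ‖f x‖ ≤ C := by
    filter_upwards [ae_le_eLpNormEssSup (f := f) (μ := μ)] with x hx
    have h2 : ((‖f x‖₊ : ENNReal)).toReal ≤ C := ENNReal.toReal_mono hne hx
    simpa using h2
  set m : X → ℂ := hsm.mk f with hm
  have hmk : f =ᵐ[μ] m := hsm.ae_eq_mk
  have hmm : Measurable m := hsm.stronglyMeasurable_mk.measurable
  refine ⟨fun x => if ‖m x‖ ≤ C then m x else 0, ?_, ⟨max C 0, fun x => ?_⟩, ?_⟩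
  · exact Measurable.ite (measurableSet_le hmm.norm measurable_const) hmm measurable_const
  · by_cases h : ‖m x‖ ≤ C
    · rw [show (fun x => if ‖m x‖ ≤ C then m x else 0) x = m x from if_pos h]
      exact le_max_of_le_left h
    · rw [show (fun x => if ‖m x‖ ≤ C then m x else 0) x = 0 from if_neg h, norm_zero]
      exact le_max_right _ _
  · filter_upwards [hmk, hbd] with x h1 h2
    have h3 : ‖m x‖ ≤ C := by rw [← h1]; exact h2
    rw [if_pos h3]; exact h1

end Main

/-- If Bourgain's double recurrence theorem holds (a.e. convergence of
`(1/N) ∑_{n=1}^N G1(S^{an}ω) G2(S^{bn}ω)` for all invertible measure-preserving systems and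
bounded measurable functions), then for any invertible measure-preserving system,
`f1, f2 ∈ L^∞(μ)`, integers `a ≠ b` and `t ∈ ℝ`, the averages
`(1/N) ∑_{n=1}^N f1(T^{an}x) f2(T^{bn}x) e^{2πi n² t}` converge μ-a.e. -/
theorem wiener_wintner_n_sq_of_double_recurrence
    (hyp : ∀ (Ω : Type u) [MeasurableSpace Ω] (ν : Measure Ω) [IsProbabilityMeasure ν]
      (S : Ω ≃ᵐ Ω), MeasurePreserving S ν ν →
        ∀ (G1 G2 : Ω → ℝ), Measurable G1 → Measurable G2 →
          (∃ C : ℝ, ∀ ω, |G1 ω| ≤ C) → (∃ C : ℝ, ∀ ω, |G2 ω| ≤ C) →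
            ∀ a b : ℤ, ∀ᵐ ω ∂ν, ∃ L : ℝ,
              Tendsto (fun N : ℕ => (N : ℝ)⁻¹ * ∑ n ∈ Finset.Icc 1 N,
                  G1 ((S.toEquiv ^ (a * (n : ℤ))) ω) * G2 ((S.toEquiv ^ (b * (n : ℤ))) ω))
                atTop (nhds L)) :
    ∀ (X : Type u) [MeasurableSpace X] (μ : Measure X) [IsProbabilityMeasure μ]
      (T : X ≃ᵐ X), MeasurePreserving T μ μ →
        ∀ (f1 f2 : X → ℂ), MemLp f1 ⊤ μ → MemLp f2 ⊤ μ →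
          ∀ (a b : ℤ), a ≠ b → ∀ (t : ℝ),
            ∀ᵐ x ∂μ, ∃ L : ℂ,
              Tendsto (fun N : ℕ => (N : ℂ)⁻¹ * ∑ n ∈ Finset.Icc 1 N,
                  f1 ((T.toEquiv ^ (a * (n : ℤ))) x) * f2 ((T.toEquiv ^ (b * (n : ℤ))) x) *
                    Complex.exp (2 * Real.pi * Complex.I * ((n : ℝ) ^ 2) * t))
                atTop (nhds L) := by
  intro X _i1 μ _i2 T hT f1 f2 hf1 hf2 a b hab t
  obtain ⟨g1, m1, b1, he1⟩ := ww_rep f1 hf1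
  obtain ⟨g2, m2, b2, he2⟩ := ww_rep f2 hf2
  have horb : ∀ᵐ x ∂μ, ∀ m : ℤ, f1 ((T.toEquiv ^ m) x) = g1 ((T.toEquiv ^ m) x)
      ∧ f2 ((T.toEquiv ^ m) x) = g2 ((T.toEquiv ^ m) x) := by
    rw [ae_all_iff]
    intro m
    have hmp := ww_mp_zpow T hT m
    have h1 : (fun x => f1 ((T.toEquiv ^ m) x)) =ᵐ[μ] (fun x => g1 ((T.toEquiv ^ m) x)) :=
      MeasureTheory.ae_eq_comp hmp.aemeasurable (by rw [hmp.map_eq]; exact he1)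
    have h2 : (fun x => f2 ((T.toEquiv ^ m) x)) =ᵐ[μ] (fun x => g2 ((T.toEquiv ^ m) x)) :=
      MeasureTheory.ae_eq_comp hmp.aemeasurable (by rw [hmp.map_eq]; exact he2)
    filter_upwards [h1, h2] with x e1 e2
    exact ⟨e1, e2⟩
  rcases eq_or_ne a 0 with rfl | ha
  · -- a = 0, b ≠ 0 : use the pair (b, 2b) with functions (g2, 1)
    have hb : b ≠ 0 := hab.symm
    have hb2 : (2 : ℤ) * b ≠ 0 := mul_ne_zero two_ne_zero hb
    have hbb : b ≠ 2 * b := by omega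
    have hcore := ww_core hyp X μ T hT g2 (fun _ => (1 : ℂ)) m2 measurable_const b2
      ⟨1, fun _ => by simp⟩ b (2 * b) hb hb2 hbb t
    filter_upwards [hcore, horb] with x hx hox
    obtain ⟨L, hL⟩ := hx
    simp only [mul_one] at hL
    refine ⟨f1 x * L, ?_⟩
    have heq : (fun N : ℕ => (N : ℂ)⁻¹ * ∑ n ∈ Finset.Icc 1 N,
          f1 ((T.toEquiv ^ ((0 : ℤ) * (n : ℤ))) x) * f2 ((T.toEquiv ^ (b * (n : ℤ))) x) *
            Complex.exp (2 * Real.pi * Complex.I * ((n : ℝ) ^ 2) * t))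
        = fun N : ℕ => f1 x * ((N : ℂ)⁻¹ * ∑ n ∈ Finset.Icc 1 N,
            g2 ((T.toEquiv ^ (b * (n : ℤ))) x) *
              Complex.exp (2 * Real.pi * Complex.I * ((n : ℝ) ^ 2) * t)) := by
      funext N
      have e : ∀ n ∈ Finset.Icc 1 N,
          f1 ((T.toEquiv ^ ((0 : ℤ) * (n : ℤ))) x) * f2 ((T.toEquiv ^ (b * (n : ℤ))) x) *
            Complex.exp (2 * Real.pi * Complex.I * ((n : ℝ) ^ 2) * t)
          = f1 x * (g2 ((T.toEquiv ^ (b * (n : ℤ))) x) *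
              Complex.exp (2 * Real.pi * Complex.I * ((n : ℝ) ^ 2) * t)) := by
        intro n _
        rw [(hox (b * (n : ℤ))).2, zero_mul, zpow_zero]
        have h0 : ((1 : Equiv.Perm X)) x = x := rfl
        rw [h0]
        ring
      rw [Finset.sum_congr rfl e, ← Finset.mul_sum]
      ring
    rw [heq]
    exact hL.const_mul _
  rcases eq_or_ne b 0 with rfl | hb
  · -- b = 0, a ≠ 0 : use the pair (a, 2a) with functions (g1, 1)
    have ha2 : (2 : ℤ) * a ≠ 0 := mul_ne_zero two_ne_zero ha
    have haa : a ≠ 2 * a := by omega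
    have hcore := ww_core hyp X μ T hT g1 (fun _ => (1 : ℂ)) m1 measurable_const b1
      ⟨1, fun _ => by simp⟩ a (2 * a) ha ha2 haa t
    filter_upwards [hcore, horb] with x hx hox
    obtain ⟨L, hL⟩ := hx
    simp only [mul_one] at hL
    refine ⟨f2 x * L, ?_⟩
    have heq : (fun N : ℕ => (N : ℂ)⁻¹ * ∑ n ∈ Finset.Icc 1 N,
          f1 ((T.toEquiv ^ (a * (n : ℤ))) x) * f2 ((T.toEquiv ^ ((0 : ℤ) * (n : ℤ))) x) *
            Complex.exp (2 * Real.pi * Complex.I * ((n : ℝ) ^ 2) * t))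
        = fun N : ℕ => f2 x * ((N : ℂ)⁻¹ * ∑ n ∈ Finset.Icc 1 N,
            g1 ((T.toEquiv ^ (a * (n : ℤ))) x) *
              Complex.exp (2 * Real.pi * Complex.I * ((n : ℝ) ^ 2) * t)) := by
      funext N
      have e : ∀ n ∈ Finset.Icc 1 N,
          f1 ((T.toEquiv ^ (a * (n : ℤ))) x) * f2 ((T.toEquiv ^ ((0 : ℤ) * (n : ℤ))) x) *
            Complex.exp (2 * Real.pi * Complex.I * ((n : ℝ) ^ 2) * t)
          = f2 x * (g1 ((T.toEquiv ^ (a * (n : ℤ))) x) *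
              Complex.exp (2 * Real.pi * Complex.I * ((n : ℝ) ^ 2) * t)) := by
        intro n _
        rw [(hox (a * (n : ℤ))).1, zero_mul, zpow_zero]
        have h0 : ((1 : Equiv.Perm X)) x = x := rfl
        rw [h0]
        ring
      rw [Finset.sum_congr rfl e, ← Finset.mul_sum]
      ring
    rw [heq]
    exact hL.const_mul _
  · -- generic case
    have hcore := ww_core hyp X μ T hT g1 g2 m1 m2 b1 b2 a b ha hb hab t
    filter_upwards [hcore, horb] with x hx hox
    obtain ⟨L, hL⟩ := hx
    refine ⟨L, ?_⟩
    have heq : (fun N : ℕ => (N : ℂ)⁻¹ * ∑ n ∈ Finset.Icc 1 N,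
          f1 ((T.toEquiv ^ (a * (n : ℤ))) x) * f2 ((T.toEquiv ^ (b * (n : ℤ))) x) *
            Complex.exp (2 * Real.pi * Complex.I * ((n : ℝ) ^ 2) * t))
        = fun N : ℕ => (N : ℂ)⁻¹ * ∑ n ∈ Finset.Icc 1 N,
            g1 ((T.toEquiv ^ (a * (n : ℤ))) x) * g2 ((T.toEquiv ^ (b * (n : ℤ))) x) *
              Complex.exp (2 * Real.pi * Complex.I * ((n : ℝ) ^ 2) * t) := by
      funext N
      refine congrArg _ (Finset.sum_congr rfl fun n _ => ?_)
      rw [(hox (a * (n : ℤ))).1, (hox (b * (n : ℤ))).2]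
    rw [heq]
    exact hL

end WW
end

section
/- Assume that for every invertible measure-preserving system (Ω, G, ν, S) on a probability space, all bounded measurable G1, G2 : Ω → ℂ, and all integers a, b, there exists a set of full ν-measure on which the averages (1/N) Σ_{n=1}^{N} G1(S^{an}ω) G2(S^{bn}ω) e^{2πi n s} converge for every s ∈ ℝ as N → ∞. Then for every invertible measure-preserving system (X, F, μ, T) on a probability space, all f1, f2 ∈ L^∞(μ), all integers a ≠ b, every polynomial p of degree 2 with real coefficients, and every t ∈ ℝ, the averages (1/N) Σ_{n=1}^{N} f1(T^{an}x) f2(T^{bn}x) e^{2πi p(n) t} converge for μ-almost every x as N → ∞. -/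
open MeasureTheory Filter Finset

universe u

namespace WWAux

noncomputable def chi (z : AddCircle (1:ℝ)) : ℂ := (AddCircle.toCircle z : ℂ)

lemma chi_coe (x : ℝ) : chi (x : AddCircle (1:ℝ)) = Complex.exp (2 * Real.pi * Complex.I * x) := by
  rw [chi, AddCircle.toCircle_apply_mk, Circle.coe_exp]
  push_cast
  ring_nf

lemma chi_norm (z : AddCircle (1:ℝ)) : ‖chi z‖ = 1 := by unfold chi; exact Circle.norm_coe _

lemma measurable_chi : Measurable chi :=
  (continuous_subtype_val.comp AddCircle.continuous_toCircle).measurable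

variable {X : Type u} [MeasurableSpace X]

/-- The skew product system on `X × 𝕋²`. -/
noncomputable def skew (T : X ≃ᵐ X) (α : ℝ) :
    (X × (AddCircle (1:ℝ) × AddCircle (1:ℝ))) ≃ᵐ (X × (AddCircle (1:ℝ) × AddCircle (1:ℝ))) where
  toEquiv :=
  { toFun := fun w => (T w.1, (w.2.1 + (α : AddCircle (1:ℝ)),
      w.2.2 + w.2.1 + w.2.1 + (α : AddCircle (1:ℝ))))
    invFun := fun w => (T.symm w.1, (w.2.1 - (α : AddCircle (1:ℝ)),
      w.2.2 - (w.2.1 - (α : AddCircle (1:ℝ))) - (w.2.1 - (α : AddCircle (1:ℝ)))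
        - (α : AddCircle (1:ℝ))))
    left_inv := fun w => by
      obtain ⟨x, θ, φ⟩ := w
      simp only [MeasurableEquiv.symm_apply_apply, Prod.mk.injEq]
      refine ⟨trivial, by abel, by abel⟩
    right_inv := fun w => by
      obtain ⟨x, θ, φ⟩ := w
      simp only [MeasurableEquiv.apply_symm_apply, Prod.mk.injEq]
      refine ⟨trivial, by abel, by abel⟩ }
  measurable_toFun := by
    refine (T.measurable.comp measurable_fst).prodMk (Measurable.prodMk ?_ ?_)
    · exact (measurable_fst.comp measurable_snd).add measurable_const
    · exact (((measurable_snd.comp measurable_snd).add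
        (measurable_fst.comp measurable_snd)).add
          (measurable_fst.comp measurable_snd)).add measurable_const
  measurable_invFun := by
    refine (T.symm.measurable.comp measurable_fst).prodMk (Measurable.prodMk ?_ ?_)
    · exact (measurable_fst.comp measurable_snd).sub measurable_const
    · exact ((((measurable_snd.comp measurable_snd).sub
        ((measurable_fst.comp measurable_snd).sub measurable_const)).sub
          ((measurable_fst.comp measurable_snd).sub measurable_const)).sub measurable_const)

lemma skew_apply (T : X ≃ᵐ X) (α : ℝ) (x : X) (θ φ : ℝ) :
    skew T α (x, ((θ : AddCircle (1:ℝ)), (φ : AddCircle (1:ℝ)))) =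
      (T x, ((↑(θ + α) : AddCircle (1:ℝ)), (↑(φ + 2*θ + α) : AddCircle (1:ℝ)))) := by
  show (T x, ((θ:AddCircle (1:ℝ)) + (α:AddCircle (1:ℝ)),
      (φ:AddCircle (1:ℝ)) + (θ:AddCircle (1:ℝ)) + (θ:AddCircle (1:ℝ)) + (α:AddCircle (1:ℝ)))) = _
  rw [← AddCircle.coe_add, ← AddCircle.coe_add, ← AddCircle.coe_add, ← AddCircle.coe_add]
  refine Prod.ext rfl (Prod.ext rfl ?_)
  show (↑(φ + θ + θ + α) : AddCircle (1:ℝ)) = _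
  congr 1
  ring

lemma skew_symm_apply (T : X ≃ᵐ X) (α : ℝ) (x : X) (θ φ : ℝ) :
    (skew T α).symm (x, ((θ : AddCircle (1:ℝ)), (φ : AddCircle (1:ℝ)))) =
      (T.symm x, ((↑(θ - α) : AddCircle (1:ℝ)), (↑(φ - 2*(θ - α) - α) : AddCircle (1:ℝ)))) := by
  show (T.symm x, ((θ:AddCircle (1:ℝ)) - (α:AddCircle (1:ℝ)),
    (φ:AddCircle (1:ℝ)) - ((θ:AddCircle (1:ℝ)) - (α:AddCircle (1:ℝ)))
      - ((θ:AddCircle (1:ℝ)) - (α:AddCircle (1:ℝ))) - (α:AddCircle (1:ℝ)))) = _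
  rw [← AddCircle.coe_sub, ← AddCircle.coe_sub, ← AddCircle.coe_sub, ← AddCircle.coe_sub]
  refine Prod.ext rfl (Prod.ext rfl ?_)
  congr 1
  ring

lemma zpow_measurePreserving (T : X ≃ᵐ X) {μ : Measure X} (hT : MeasurePreserving T μ μ)
    (m : ℤ) : MeasurePreserving (⇑(T.toEquiv ^ m)) μ μ := by
  induction m using Int.induction_on with
  | zero => simpa using MeasurePreserving.id μ
  | succ k ih =>
      rw [zpow_add_one, Equiv.Perm.coe_mul]
      exact ih.comp hT
  | pred k ih =>
      have h : (-(k:ℤ) - 1) = (-(k:ℤ)) - 1 := rfl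
      rw [h, zpow_sub_one, Equiv.Perm.coe_mul]
      have hinv : MeasurePreserving (⇑(T.toEquiv⁻¹)) μ μ := MeasurePreserving.symm T hT
      exact ih.comp hinv

lemma skew_zpow (T : X ≃ᵐ X) (α : ℝ) (m : ℤ) :
    ∀ (x : X) (θ φ : ℝ),
    ((skew T α).toEquiv ^ m) (x, ((θ : AddCircle (1:ℝ)), (φ : AddCircle (1:ℝ)))) =
      ((T.toEquiv ^ m) x, (((θ + (m:ℝ)*α : ℝ) : AddCircle (1:ℝ)),
        ((φ + 2*(m:ℝ)*θ + (m:ℝ)^2*α : ℝ) : AddCircle (1:ℝ)))) := by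
  induction m using Int.induction_on with
  | zero => intro x θ φ; simp
  | succ k ih =>
      intro x θ φ
      have h1 : (skew T α).toEquiv (x, ((θ : AddCircle (1:ℝ)), (φ : AddCircle (1:ℝ)))) =
          (T.toEquiv x, ((↑(θ + α) : AddCircle (1:ℝ)), (↑(φ + 2*θ + α) : AddCircle (1:ℝ)))) :=
        skew_apply T α x θ φ
      rw [zpow_add_one, Equiv.Perm.mul_apply, h1, ih (T.toEquiv x) (θ + α) (φ + 2*θ + α),
        ← Equiv.Perm.mul_apply, ← zpow_add_one]
      refine Prod.ext rfl (Prod.ext ?_ ?_) <;> (show (_ : AddCircle (1:ℝ)) = _; congr 1) <;>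
        push_cast <;> ring
  | pred k ih =>
      intro x θ φ
      have h2 : ((skew T α).toEquiv)⁻¹ (x, ((θ : AddCircle (1:ℝ)), (φ : AddCircle (1:ℝ)))) =
          (T.toEquiv⁻¹ x, ((↑(θ - α) : AddCircle (1:ℝ)),
            (↑(φ - 2*(θ - α) - α) : AddCircle (1:ℝ)))) :=
        skew_symm_apply T α x θ φ
      rw [show (-(k:ℤ) - 1) = (-(k:ℤ)) - 1 from rfl, zpow_sub_one, Equiv.Perm.mul_apply, h2,
        ih (T.toEquiv⁻¹ x) (θ - α) (φ - 2*(θ - α) - α),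
        ← Equiv.Perm.mul_apply, ← zpow_sub_one]
      refine Prod.ext rfl (Prod.ext ?_ ?_) <;> (show (_ : AddCircle (1:ℝ)) = _; congr 1) <;>
        push_cast <;> ring

lemma skew_measurePreserving (T : X ≃ᵐ X) {μ : Measure X} [IsProbabilityMeasure μ]
    (hT : MeasurePreserving T μ μ) (α : ℝ) :
    haveI : Fact ((0:ℝ) < 1) := ⟨one_pos⟩
    MeasurePreserving (skew T α)
      (μ.prod ((volume : Measure (AddCircle (1:ℝ))).prod volume))
      (μ.prod ((volume : Measure (AddCircle (1:ℝ))).prod volume)) := by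
  haveI : Fact ((0:ℝ) < 1) := ⟨one_pos⟩
  have hτ : MeasurePreserving
      (fun q : AddCircle (1:ℝ) × AddCircle (1:ℝ) =>
        (q.1 + (α : AddCircle (1:ℝ)), q.2 + q.1 + q.1 + (α : AddCircle (1:ℝ))))
      ((volume : Measure (AddCircle (1:ℝ))).prod volume)
      ((volume : Measure (AddCircle (1:ℝ))).prod volume) := by
    have h1 : MeasurePreserving (fun θ : AddCircle (1:ℝ) => θ + (α : AddCircle (1:ℝ)))
        volume volume := measurePreserving_add_right volume _
    refine h1.skew_product (g := fun θ φ => φ + θ + θ + (α : AddCircle (1:ℝ))) ?_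
      (ae_of_all _ fun θ => ?_)
    · exact (((measurable_snd.add measurable_fst).add measurable_fst).add measurable_const)
    · have : ((fun (θ : AddCircle (1:ℝ)) (φ : AddCircle (1:ℝ)) =>
            φ + θ + θ + (α : AddCircle (1:ℝ))) θ)
          = fun φ : AddCircle (1:ℝ) => φ + (θ + θ + (α : AddCircle (1:ℝ))) := by
        funext φ; show φ + θ + θ + _ = _; abel
      rw [show (fun φ : AddCircle (1:ℝ) => φ + θ + θ + (α : AddCircle (1:ℝ))) = _ from this]
      exact (measurePreserving_add_right volume _).map_eq
  exact hT.prod hτ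

lemma exists_bounded_rep {μ : Measure X} {f : X → ℂ} (hf : MemLp f ⊤ μ) :
    ∃ g : X → ℂ, Measurable g ∧ (∃ C : ℝ, ∀ x, ‖g x‖ ≤ C) ∧ f =ᵐ[μ] g := by
  obtain ⟨hm, hbd⟩ := hf
  set C := (eLpNormEssSup f μ).toReal with hC
  have hfin : eLpNormEssSup f μ ≠ ⊤ := by
    rw [eLpNorm_exponent_top] at hbd; exact hbd.ne
  have hae : ∀ᵐ x ∂μ, ‖f x‖ ≤ C := by
    filter_upwards [ae_le_eLpNormEssSup (f := f) (μ := μ)] with x hx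
    have := ENNReal.toReal_mono hfin hx
    simpa using this
  set g0 := hm.mk f with hg0
  refine ⟨fun x => if ‖g0 x‖ ≤ C then g0 x else 0, ?_, ⟨max C 0, fun x => ?_⟩, ?_⟩
  · exact Measurable.ite
      (measurableSet_le hm.stronglyMeasurable_mk.measurable.norm measurable_const)
      hm.stronglyMeasurable_mk.measurable measurable_const
  · by_cases h : ‖g0 x‖ ≤ C
    · simp only [h, if_true]; exact le_max_of_le_left h
    · simp only [h, if_false, norm_zero]; exact le_max_right _ _
  · filter_upwards [hae, hm.ae_eq_mk] with x h1 h2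
    rw [← hg0] at h2
    rw [h2] at h1 ⊢
    rw [if_pos h1]

lemma exp_helper (u v : ℂ) (E1 E2 E3 EK E4 : ℂ) (h : E1 + E2 + E3 = EK + E4) :
    u * Complex.exp E1 * (v * Complex.exp E2) * Complex.exp E3 =
      Complex.exp EK * (u * v * Complex.exp E4) := by
  have key : Complex.exp E1 * Complex.exp E2 * Complex.exp E3 =
      Complex.exp EK * Complex.exp E4 := by
    rw [← Complex.exp_add, ← Complex.exp_add, ← Complex.exp_add, h]
  linear_combination (u * v) * key

end WWAux

open WWAux

/-- If the linear Wiener-Wintner double recurrence theorem holds (for every invertible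
measure-preserving system and bounded measurable `G1, G2` there is a full-measure set on which
`(1/N) ∑_{n=1}^N G1(S^{an}ω) G2(S^{bn}ω) e^{2πi n s}` converges for every `s ∈ ℝ`), then for any
invertible measure-preserving system, `f1, f2 ∈ L^∞(μ)`, integers `a ≠ b`, any real polynomial
`p` of degree `2` and any `t ∈ ℝ`, the averages
`(1/N) ∑_{n=1}^N f1(T^{an}x) f2(T^{bn}x) e^{2πi p(n) t}` converge μ-a.e. -/
theorem wiener_wintner_deg_two_of_linear_wiener_wintner
    (hyp : ∀ (Ω : Type u) [MeasurableSpace Ω] (ν : Measure Ω) [IsProbabilityMeasure ν]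
      (S : Ω ≃ᵐ Ω), MeasurePreserving S ν ν →
        ∀ (G1 G2 : Ω → ℂ), Measurable G1 → Measurable G2 →
          (∃ C : ℝ, ∀ ω, ‖G1 ω‖ ≤ C) → (∃ C : ℝ, ∀ ω, ‖G2 ω‖ ≤ C) →
            ∀ a b : ℤ, ∃ V : Set Ω, MeasurableSet V ∧ ν V = 1 ∧
              ∀ ω ∈ V, ∀ s : ℝ, ∃ L : ℂ,
                Tendsto (fun N : ℕ => (N : ℂ)⁻¹ * ∑ n ∈ Finset.Icc 1 N,
                    G1 ((S.toEquiv ^ (a * (n : ℤ))) ω) * G2 ((S.toEquiv ^ (b * (n : ℤ))) ω) *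
                      Complex.exp (2 * Real.pi * Complex.I * (n : ℝ) * s))
                  atTop (nhds L)) :
    ∀ (X : Type u) [MeasurableSpace X] (μ : Measure X) [IsProbabilityMeasure μ]
      (T : X ≃ᵐ X), MeasurePreserving T μ μ →
        ∀ (f1 f2 : X → ℂ), MemLp f1 ⊤ μ → MemLp f2 ⊤ μ →
          ∀ (a b : ℤ), a ≠ b →
            ∀ (p : Polynomial ℝ), p.degree = 2 → ∀ (t : ℝ),
              ∀ᵐ x ∂μ, ∃ L : ℂ,
                Tendsto (fun N : ℕ => (N : ℂ)⁻¹ * ∑ n ∈ Finset.Icc 1 N,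
                    f1 ((T.toEquiv ^ (a * (n : ℤ))) x) * f2 ((T.toEquiv ^ (b * (n : ℤ))) x) *
                      Complex.exp (2 * Real.pi * Complex.I * (p.eval (n : ℝ)) * t))
                  atTop (nhds L) := by
  intro X _ μ _ T hT f1 f2 hf1 hf2 a b hab p hp t
  haveI : Fact ((0:ℝ) < 1) := ⟨one_pos⟩
  haveI : IsProbabilityMeasure (volume : Measure (AddCircle (1:ℝ))) :=
    ⟨by rw [AddCircle.measure_univ]; simp⟩
  obtain ⟨g1, hg1m, ⟨C1, hC1⟩, hfg1⟩ := exists_bounded_rep hf1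
  obtain ⟨g2, hg2m, ⟨C2, hC2⟩, hfg2⟩ := exists_bounded_rep hf2
  -- polynomial coefficients
  have hnd : p.natDegree = 2 := Polynomial.natDegree_eq_of_degree_eq_some hp
  have evp : ∀ r : ℝ, p.eval r = p.coeff 0 + p.coeff 1 * r + p.coeff 2 * r^2 := by
    intro r
    rw [Polynomial.eval_eq_sum_range, hnd]
    simp [Finset.sum_range_succ]
  have hD : ((a:ℝ)^2 + (b:ℝ)^2) ≠ 0 := by
    have : (a:ℝ) ≠ 0 ∨ (b:ℝ) ≠ 0 := by
      by_contra h
      push_neg at h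
      obtain ⟨h1, h2⟩ := h
      apply hab
      have ha0 : a = 0 := by exact_mod_cast h1
      have hb0 : b = 0 := by exact_mod_cast h2
      rw [ha0, hb0]
    rcases this with h | h
    · have h1 : (0:ℝ) < (a:ℝ)^2 := by positivity
      have h2 : (0:ℝ) ≤ (b:ℝ)^2 := sq_nonneg _
      nlinarith
    · have h1 : (0:ℝ) < (b:ℝ)^2 := by positivity
      have h2 : (0:ℝ) ≤ (a:ℝ)^2 := sq_nonneg _
      nlinarith
  set α : ℝ := p.coeff 2 * t / ((a:ℝ)^2 + (b:ℝ)^2) with hαdef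
  have hα : ((a:ℝ)^2 + (b:ℝ)^2) * α = p.coeff 2 * t := by
    rw [hαdef]; field_simp
  -- apply the hypothesis to the skew product system
  obtain ⟨V, hVmeas, hVfull, hV⟩ :=
    hyp (X × (AddCircle (1:ℝ) × AddCircle (1:ℝ)))
      (μ.prod ((volume : Measure (AddCircle (1:ℝ))).prod volume))
      (skew T α) (skew_measurePreserving T hT α)
      (fun w => g1 w.1 * chi w.2.2) (fun w => g2 w.1 * chi w.2.2)
      ((hg1m.comp measurable_fst).mul (measurable_chi.comp (measurable_snd.comp measurable_snd)))
      ((hg2m.comp measurable_fst).mul (measurable_chi.comp (measurable_snd.comp measurable_snd)))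
      ⟨max C1 0, fun w => by
        rw [norm_mul, chi_norm, mul_one]
        exact le_max_of_le_left (hC1 _)⟩
      ⟨max C2 0, fun w => by
        rw [norm_mul, chi_norm, mul_one]
        exact le_max_of_le_left (hC2 _)⟩
      a b
  have hVae : ∀ᵐ z ∂(μ.prod ((volume : Measure (AddCircle (1:ℝ))).prod volume)), z ∈ V := by
    rw [ae_iff]
    have : (μ.prod ((volume : Measure (AddCircle (1:ℝ))).prod volume)) Vᶜ = 0 := by
      rw [measure_compl hVmeas (measure_ne_top _ _), hVfull, measure_univ, tsub_self]
    exact this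
  have hslice := Measure.ae_ae_of_ae_prod hVae
  have horb : ∀ᵐ x ∂μ, ∀ m : ℤ,
      f1 ((T.toEquiv ^ m) x) = g1 ((T.toEquiv ^ m) x) ∧
        f2 ((T.toEquiv ^ m) x) = g2 ((T.toEquiv ^ m) x) := by
    rw [ae_all_iff]
    intro m
    have hmp := zpow_measurePreserving T hT m
    have h1 := hfg1.comp_tendsto hmp.quasiMeasurePreserving.tendsto_ae
    have h2 := hfg2.comp_tendsto hmp.quasiMeasurePreserving.tendsto_ae
    filter_upwards [h1, h2] with x hx1 hx2
    exact ⟨hx1, hx2⟩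
  filter_upwards [horb, hslice] with x hx hsl
  obtain ⟨y, hyV⟩ := hsl.exists
  obtain ⟨θ, φ⟩ := y
  obtain ⟨θ₀, rfl⟩ := QuotientAddGroup.mk_surjective θ
  obtain ⟨φ₀, rfl⟩ := QuotientAddGroup.mk_surjective φ
  obtain ⟨L, hL⟩ := hV (x, ((θ₀ : AddCircle (1:ℝ)), (φ₀ : AddCircle (1:ℝ)))) hyV
    (p.coeff 1 * t - 2*((a:ℝ)+(b:ℝ))*θ₀)
  refine ⟨(Complex.exp (2 * Real.pi * Complex.I * ((2*φ₀ - p.coeff 0 * t : ℝ) : ℂ)))⁻¹ * L, ?_⟩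
  have hKL := hL.const_mul (Complex.exp (2 * Real.pi * Complex.I * ((2*φ₀ - p.coeff 0 * t : ℝ) : ℂ)))⁻¹
  refine Tendsto.congr ?_ hKL
  intro N
  rw [mul_left_comm, Finset.mul_sum]
  congr 1
  apply Finset.sum_congr rfl
  intro n _
  rw [skew_zpow T α (a * (n:ℤ)) x θ₀ φ₀, skew_zpow T α (b * (n:ℤ)) x θ₀ φ₀]
  simp only []
  rw [chi_coe, chi_coe, (hx (a * (n:ℤ))).1, (hx (b * (n:ℤ))).2, evp ((n:ℕ):ℝ)]
  rw [inv_mul_eq_iff_eq_mul₀ (Complex.exp_ne_zero _)]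
  have hαC : (((a:ℤ):ℂ)^2 + ((b:ℤ):ℂ)^2) * (α:ℂ) = (p.coeff 2 : ℂ) * (t:ℂ) := by
    exact_mod_cast hα
  refine exp_helper _ _ _ _ _ _ _ ?_
  push_cast
  linear_combination (2 * (Real.pi:ℂ) * Complex.I * ((n:ℕ):ℂ)^2) * hαC
end

section
/- Assume that for every invertible measure-preserving system (Ω, G, ν, S) on a probability space, all bounded measurable G1, G2 : Ω → ℂ, and all integers a, b, there exists a set of full ν-measure on which the averages (1/N) Σ_{n=1}^{N} G1(S^{an}ω) G2(S^{bn}ω) e^{2πi q(n)} converge for every polynomial q with real coefficients of degree at most 2 as N → ∞. Then for every invertible measure-preserving system (X, F, μ, T) on a probability space, all f1, f2 ∈ L^∞(μ), all integers a ≠ b, every polynomial p of degree 3 with real coefficients, and every t ∈ ℝ, the averages (1/N) Σ_{n=1}^{N} f1(T^{an}x) f2(T^{bn}x) e^{2πi p(n) t} converge for μ-almost every x as N → ∞. -/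
open MeasureTheory Filter Finset

namespace WWaux

instance fact_zero_lt_one_real : Fact ((0:ℝ) < 1) := ⟨one_pos⟩

noncomputable section

local notation "𝕋" => AddCircle (1:ℝ)

instance : IsProbabilityMeasure (volume : Measure 𝕋) :=
  ⟨by rw [AddCircle.measure_univ]; simp⟩

/-- binomial coefficient `m(m-1)/2` on integers -/
def c2 (m : ℤ) : ℤ := m * (m - 1) / 2

/-- binomial coefficient `m(m-1)(m-2)/6` on integers -/
def c3 (m : ℤ) : ℤ := m * (m - 1) * (m - 2) / 6

lemma c2_spec (m : ℤ) : 2 * c2 m = m * (m - 1) := by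
  have h : (2:ℤ) ∣ m * (m - 1) := by
    rcases Int.even_or_odd m with h | h
    · exact Dvd.dvd.mul_right h.two_dvd _
    · exact Dvd.dvd.mul_left (by simpa using (Int.even_sub_one.2 (Int.not_even_iff_odd.2 h)).two_dvd) _
  rw [c2, Int.mul_ediv_cancel' h]

lemma c3_spec (m : ℤ) : 6 * c3 m = m * (m - 1) * (m - 2) := by
  have h : (6:ℤ) ∣ m * (m - 1) * (m - 2) := by
    have := (ZMod.intCast_zmod_eq_zero_iff_dvd (m * (m - 1) * (m - 2)) 6).mp
    apply (ZMod.intCast_zmod_eq_zero_iff_dvd _ 6).mp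
    push_cast
    generalize ((m : ZMod 6)) = z
    revert z; decide
  rw [c3, Int.mul_ediv_cancel' h]

lemma c2_add_one (m : ℤ) : c2 (m + 1) = c2 m + m := by
  have h1 := c2_spec (m + 1); have h2 := c2_spec m
  nlinarith [h1, h2]

lemma c2_sub_one (m : ℤ) : c2 (m - 1) = c2 m - (m - 1) := by
  have h1 := c2_spec (m - 1); have h2 := c2_spec m
  nlinarith [h1, h2]

lemma c3_add_one (m : ℤ) : c3 (m + 1) = c3 m + c2 m := by
  have h1 := c3_spec (m + 1); have h2 := c3_spec m; have h3 := c2_spec m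
  nlinarith [h1, h2, h3]

lemma c3_sub_one (m : ℤ) : c3 (m - 1) = c3 m - c2 (m - 1) := by
  have h1 := c3_spec (m - 1); have h2 := c3_spec m; have h3 := c2_spec (m - 1)
  nlinarith [h1, h2, h3]

lemma c2_real (m : ℤ) : ((c2 m : ℤ) : ℝ) = ((m:ℝ)^2 - m) / 2 := by
  have h := c2_spec m
  have h' : ((2 * c2 m : ℤ) : ℝ) = ((m * (m-1) : ℤ) : ℝ) := by rw [h]
  push_cast at h'
  linarith

lemma c3_real (m : ℤ) : ((c3 m : ℤ) : ℝ) = ((m:ℝ)^3 - 3*(m:ℝ)^2 + 2*m) / 6 := by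
  have h := c3_spec m
  have h' : ((6 * c3 m : ℤ) : ℝ) = ((m * (m-1) * (m-2) : ℤ) : ℝ) := by rw [h]
  push_cast at h'
  nlinarith [h']


variable {X : Type*} [MeasurableSpace X]

/-- The skew-product extension generating cubic phases. -/
def shear3 (T : X ≃ᵐ X) (α : 𝕋) : (X × (𝕋 × (𝕋 × 𝕋))) ≃ᵐ (X × (𝕋 × (𝕋 × 𝕋))) where
  toEquiv :=
  { toFun := fun z => (T z.1, (z.2.1 + α, (z.2.2.1 + z.2.1, z.2.2.2 + z.2.2.1)))
    invFun := fun z => (T.symm z.1, (z.2.1 - α,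
      (z.2.2.1 - (z.2.1 - α), z.2.2.2 - (z.2.2.1 - (z.2.1 - α)))))
    left_inv := by
      rintro ⟨x, u, v, w⟩
      simp only [MeasurableEquiv.symm_apply_apply]
      refine Prod.ext rfl (Prod.ext ?_ (Prod.ext ?_ ?_)) <;> module
    right_inv := by
      rintro ⟨x, u, v, w⟩
      simp only [MeasurableEquiv.apply_symm_apply]
      refine Prod.ext rfl (Prod.ext ?_ (Prod.ext ?_ ?_)) <;> module }
  measurable_toFun := by
    dsimp only [Equiv.coe_fn_mk]
    fun_prop
  measurable_invFun := by
    simp only [Equiv.coe_fn_symm_mk]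
    fun_prop

lemma shear3_measurePreserving (T : X ≃ᵐ X) (α : 𝕋) {μ : Measure X} [SFinite μ]
    (hT : MeasurePreserving T μ μ) :
    MeasurePreserving (shear3 T α)
      (μ.prod ((volume : Measure 𝕋).prod ((volume : Measure 𝕋).prod volume)))
      (μ.prod ((volume : Measure 𝕋).prod ((volume : Measure 𝕋).prod volume))) := by
  have hinner : ∀ u : 𝕋, MeasurePreserving
      (fun q : 𝕋 × 𝕋 => (q.1 + u, q.2 + q.1))
      ((volume : Measure 𝕋).prod volume) ((volume : Measure 𝕋).prod volume) := by
    intro u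
    exact (measurePreserving_add_right volume u).skew_product
      (by fun_prop) (ae_of_all _ fun v => (measurePreserving_add_right volume v).map_eq)
  have hU : MeasurePreserving
      (fun p : 𝕋 × (𝕋 × 𝕋) => (p.1 + α, (p.2.1 + p.1, p.2.2 + p.2.1)))
      ((volume : Measure 𝕋).prod ((volume : Measure 𝕋).prod volume))
      ((volume : Measure 𝕋).prod ((volume : Measure 𝕋).prod volume)) :=
    (measurePreserving_add_right volume α).skew_product
      (by fun_prop) (ae_of_all _ fun u => (hinner u).map_eq)
  exact hT.prod hU

lemma shear3_zpow (T : X ≃ᵐ X) (α : 𝕋) (m : ℤ) :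
    ∀ (x : X) (u v w : 𝕋),
    ((shear3 T α).toEquiv ^ m) (x, (u, (v, w))) =
      ((T.toEquiv ^ m) x, (u + m • α, (v + m • u + c2 m • α,
        w + m • v + c2 m • u + c3 m • α))) := by
  induction m using Int.induction_on with
  | zero =>
    intro x u v w
    simp [c2, c3]
  | succ k ih =>
    intro x u v w
    have he : ∀ (e : Equiv.Perm (X × (𝕋 × (𝕋 × 𝕋)))) (z), (e ^ ((k:ℤ) + 1)) z = (e ^ (k:ℤ)) (e z) := by
      intro e z
      rw [zpow_add_one]
      rfl
    have heX : ∀ (e : Equiv.Perm X) (z), (e ^ ((k:ℤ) + 1)) z = (e ^ (k:ℤ)) (e z) := by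
      intro e z
      rw [zpow_add_one]
      rfl
    rw [he, heX]
    show ((shear3 T α).toEquiv ^ (k:ℤ)) ((shear3 T α) (x, (u, (v, w)))) = _
    rw [show (shear3 T α) (x, (u, (v, w)))
        = (T x, (u + α, (v + u, w + v))) from rfl]
    rw [ih]
    refine Prod.ext rfl (Prod.ext ?_ (Prod.ext ?_ ?_)) <;>
      · simp only [c2_add_one, c3_add_one, add_smul, one_smul, sub_smul]
        module
  | pred k ih =>
    intro x u v w
    have he : ∀ (e : Equiv.Perm (X × (𝕋 × (𝕋 × 𝕋)))) (z), (e ^ (-(k:ℤ) - 1)) z = e⁻¹ ((e ^ (-(k:ℤ))) z) := by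
      intro e z
      have : e ^ (-(k:ℤ) - 1) = e⁻¹ * e ^ (-(k:ℤ)) := by
        rw [← zpow_neg_one, ← zpow_add]; ring_nf
      rw [this]
      rfl
    have heX : ∀ (e : Equiv.Perm X) (z), (e ^ (-(k:ℤ) - 1)) z = e⁻¹ ((e ^ (-(k:ℤ))) z) := by
      intro e z
      have : e ^ (-(k:ℤ) - 1) = e⁻¹ * e ^ (-(k:ℤ)) := by
        rw [← zpow_neg_one, ← zpow_add]; ring_nf
      rw [this]
      rfl
    rw [he, heX, ih]
    show (shear3 T α).toEquiv.symm _ = _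
    rw [show ∀ z, (shear3 T α).toEquiv.symm z = (T.symm z.1, (z.2.1 - α,
      (z.2.2.1 - (z.2.1 - α), z.2.2.2 - (z.2.2.1 - (z.2.1 - α))))) from fun z => rfl]
    refine Prod.ext rfl (Prod.ext ?_ (Prod.ext ?_ ?_)) <;>
      · simp only [c2_sub_one, c3_sub_one, add_smul, one_smul, sub_smul, neg_smul]
        abel

lemma measurePreserving_zpow_nat {μ : Measure X} (T : X ≃ᵐ X)
    (hT : MeasurePreserving T μ μ) (n : ℕ) :
    MeasurePreserving ⇑(T.toEquiv ^ n) μ μ := by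
  induction n with
  | zero => simpa using MeasurePreserving.id μ
  | succ k ih =>
    rw [pow_succ]
    have : ⇑(T.toEquiv ^ k * T.toEquiv) = ⇑(T.toEquiv ^ k) ∘ ⇑T.toEquiv := rfl
    rw [this]
    exact ih.comp hT

lemma measurePreserving_zpow {μ : Measure X} (T : X ≃ᵐ X)
    (hT : MeasurePreserving T μ μ) (m : ℤ) :
    MeasurePreserving ⇑(T.toEquiv ^ m) μ μ := by
  cases m with
  | ofNat n =>
    rw [Int.ofNat_eq_natCast, zpow_natCast]
    exact measurePreserving_zpow_nat T hT n
  | negSucc n =>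
    rw [zpow_negSucc, ← inv_pow]
    have h1 : (T.toEquiv)⁻¹ = T.symm.toEquiv := rfl
    rw [h1]
    exact measurePreserving_zpow_nat T.symm (hT.symm T) (n+1)


lemma exists_bounded_measurable {μ : Measure X} (f : X → ℂ) (hf : MemLp f ⊤ μ) :
    ∃ g : X → ℂ, Measurable g ∧ (∃ C : ℝ, ∀ x, ‖g x‖ ≤ C) ∧ f =ᵐ[μ] g := by
  set F := hf.1.mk f with hF
  have hFm : StronglyMeasurable F := hf.1.stronglyMeasurable_mk
  have hFe : f =ᵐ[μ] F := hf.1.ae_eq_mk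
  set C := (eLpNormEssSup f μ).toReal with hCdef
  have hC : ∀ᵐ x ∂μ, ‖f x‖ ≤ C := by
    have h1 : ∀ᵐ x ∂μ, (‖f x‖₊ : ENNReal) ≤ eLpNormEssSup f μ := ae_le_eLpNormEssSup
    have hfin : eLpNormEssSup f μ ≠ ⊤ := by
      have h2 := hf.2
      rw [eLpNorm_exponent_top] at h2
      exact h2.ne
    filter_upwards [h1] with x hx
    have h3 := ENNReal.toReal_mono hfin hx
    simpa using h3
  refine ⟨fun x => if ‖F x‖ ≤ C then F x else 0, ?_, ⟨max C 0, ?_⟩, ?_⟩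
  · exact Measurable.ite (measurableSet_le hFm.measurable.norm measurable_const)
      hFm.measurable measurable_const
  · intro x
    by_cases hx : ‖F x‖ ≤ C
    · simp only [if_pos hx]; exact le_max_of_le_left hx
    · simp only [if_neg hx]; simp
  · filter_upwards [hFe, hC] with x h1 h2
    simp only [← h1, if_pos h2]

end
end WWaux

universe u

/-- If the Wiener-Wintner double recurrence theorem holds for polynomial weights of degree at
most `2` (for every invertible measure-preserving system and bounded measurable `G1, G2` there
is a full-measure set on which `(1/N) ∑_{n=1}^N G1(S^{an}ω) G2(S^{bn}ω) e^{2πi q(n)}` converges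
for every real polynomial `q` of degree at most `2`), then for any invertible measure-preserving
system, `f1, f2 ∈ L^∞(μ)`, integers `a ≠ b`, any real polynomial `p` of degree `3` and any
`t ∈ ℝ`, the averages `(1/N) ∑_{n=1}^N f1(T^{an}x) f2(T^{bn}x) e^{2πi p(n) t}` converge μ-a.e. -/
theorem wiener_wintner_deg_three_of_deg_two
    (hyp : ∀ (Ω : Type u) [MeasurableSpace Ω] (ν : Measure Ω) [IsProbabilityMeasure ν]
      (S : Ω ≃ᵐ Ω), MeasurePreserving S ν ν →
        ∀ (G1 G2 : Ω → ℂ), Measurable G1 → Measurable G2 →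
          (∃ C : ℝ, ∀ ω, ‖G1 ω‖ ≤ C) → (∃ C : ℝ, ∀ ω, ‖G2 ω‖ ≤ C) →
            ∀ a b : ℤ, ∃ V : Set Ω, MeasurableSet V ∧ ν V = 1 ∧
              ∀ ω ∈ V, ∀ q : Polynomial ℝ, q.degree ≤ 2 → ∃ L : ℂ,
                Tendsto (fun N : ℕ => (N : ℂ)⁻¹ * ∑ n ∈ Finset.Icc 1 N,
                    G1 ((S.toEquiv ^ (a * (n : ℤ))) ω) * G2 ((S.toEquiv ^ (b * (n : ℤ))) ω) *
                      Complex.exp (2 * Real.pi * Complex.I * (q.eval (n : ℝ))))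
                  atTop (nhds L)) :
    ∀ (X : Type u) [MeasurableSpace X] (μ : Measure X) [IsProbabilityMeasure μ]
      (T : X ≃ᵐ X), MeasurePreserving T μ μ →
        ∀ (f1 f2 : X → ℂ), MemLp f1 ⊤ μ → MemLp f2 ⊤ μ →
          ∀ (a b : ℤ), a ≠ b →
            ∀ (p : Polynomial ℝ), p.degree = 3 → ∀ (t : ℝ),
              ∀ᵐ x ∂μ, ∃ L : ℂ,
                Tendsto (fun N : ℕ => (N : ℂ)⁻¹ * ∑ n ∈ Finset.Icc 1 N,
                    f1 ((T.toEquiv ^ (a * (n : ℤ))) x) * f2 ((T.toEquiv ^ (b * (n : ℤ))) x) *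
                      Complex.exp (2 * Real.pi * Complex.I * (p.eval (n : ℝ)) * t))
                  atTop (nhds L) := by
  intro X _ μ _ T hT f1 f2 hf1 hf2 a b hab p hp t
  classical
  obtain ⟨g1, hg1m, ⟨C1, hg1b⟩, hg1e⟩ := WWaux.exists_bounded_measurable f1 hf1
  obtain ⟨g2, hg2m, ⟨C2, hg2b⟩, hg2e⟩ := WWaux.exists_bounded_measurable f2 hf2
  -- cube injectivity
  have hab3 : ((a : ℝ))^3 - ((b : ℝ))^3 ≠ 0 := by
    refine sub_ne_zero.2 fun h => hab ?_
    have := (Odd.strictMono_pow (R := ℝ) (⟨1, by norm_num⟩ : Odd 3)).injective h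
    exact_mod_cast this
  set α : ℝ := 6 * (p.coeff 3 * t) / ((a : ℝ)^3 - (b : ℝ)^3) with hαdef
  set 𝕋 := AddCircle (1 : ℝ) with h𝕋
  set τ : Measure (𝕋 × (𝕋 × 𝕋)) :=
    ((volume : Measure 𝕋).prod ((volume : Measure 𝕋).prod (volume : Measure 𝕋))) with hτ
  set ν : Measure (X × (𝕋 × (𝕋 × 𝕋))) := μ.prod τ with hν
  set S := WWaux.shear3 T ((α : 𝕋)) with hS
  have hSmp : MeasurePreserving S ν ν := WWaux.shear3_measurePreserving T _ hT
  set G1 : X × (𝕋 × (𝕋 × 𝕋)) → ℂ := fun z => g1 z.1 * ((AddCircle.toCircle z.2.2.2 : Circle) : ℂ)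
    with hG1
  set G2 : X × (𝕋 × (𝕋 × 𝕋)) → ℂ := fun z => g2 z.1 * ((AddCircle.toCircle (-z.2.2.2) : Circle) : ℂ)
    with hG2
  have htcm : Measurable fun θ : 𝕋 => ((AddCircle.toCircle θ : Circle) : ℂ) :=
    (continuous_subtype_val.comp AddCircle.continuous_toCircle).measurable
  have hG1m : Measurable G1 := (hg1m.comp measurable_fst).mul
    (htcm.comp (measurable_snd.comp (measurable_snd.comp measurable_snd)))
  have hG2m : Measurable G2 := (hg2m.comp measurable_fst).mul
    ((htcm.comp measurable_neg).comp (measurable_snd.comp (measurable_snd.comp measurable_snd)))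
  have hnormtc : ∀ θ : 𝕋, ‖((AddCircle.toCircle θ : Circle) : ℂ)‖ = 1 := fun θ => by
    rw [Circle.norm_coe]
  have hG1b : ∀ z, ‖G1 z‖ ≤ max C1 0 := fun z => by
    rw [hG1, norm_mul, hnormtc, mul_one]
    exact le_max_of_le_left (hg1b z.1)
  have hG2b : ∀ z, ‖G2 z‖ ≤ max C2 0 := fun z => by
    rw [hG2, norm_mul, hnormtc, mul_one]
    exact le_max_of_le_left (hg2b z.1)
  obtain ⟨V, hVm, hV1, hV⟩ := hyp _ ν S hSmp G1 G2 hG1m hG2m ⟨_, hG1b⟩ ⟨_, hG2b⟩ a b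
  -- Fubini
  have hVae : ∀ᵐ z ∂ν, z ∈ V := by
    rw [MeasureTheory.ae_iff]
    have : {z | ¬ z ∈ V} = Vᶜ := rfl
    rw [this]
    exact (prob_compl_eq_zero_iff hVm).mpr hV1
  have hfib := MeasureTheory.Measure.ae_ae_of_ae_prod hVae
  -- orbits avoid the null difference sets
  have horb : ∀ (f g : X → ℂ), f =ᵐ[μ] g →
      ∀ᵐ x ∂μ, ∀ m : ℤ, f ((T.toEquiv ^ m) x) = g ((T.toEquiv ^ m) x) := by
    intro f g hfg
    rw [ae_all_iff]
    intro m
    exact (WWaux.measurePreserving_zpow T hT m).quasiMeasurePreserving.ae_eq hfg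
  have horb1 := horb f1 g1 hg1e
  have horb2 := horb f2 g2 hg2e
  -- polynomial facts
  have hp3 : p.natDegree = 3 := Polynomial.natDegree_eq_of_degree_eq_some hp
  have hpeval : ∀ x : ℝ, p.eval x =
      p.coeff 0 + p.coeff 1 * x + p.coeff 2 * x^2 + p.coeff 3 * x^3 := by
    intro x
    rw [Polynomial.eval_eq_sum_range, hp3]
    simp only [Finset.sum_range_succ, Finset.sum_range_zero, pow_zero, mul_one, pow_one, zero_add]
  filter_upwards [hfib, horb1, horb2] with x hx h1 h2
  haveI : (MeasureTheory.ae τ).NeBot := MeasureTheory.ae_neBot.2 (IsProbabilityMeasure.ne_zero τ)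
  obtain ⟨θ, hθ⟩ := hx.exists
  obtain ⟨u, v, w⟩ := θ
  obtain ⟨ur, rfl⟩ := QuotientAddGroup.mk_surjective u
  obtain ⟨vr, rfl⟩ := QuotientAddGroup.mk_surjective v
  obtain ⟨wr, rfl⟩ := QuotientAddGroup.mk_surjective w
  -- the compensating quadratic polynomial
  set A : ℝ := (ur - α) * ((a:ℝ)^2 - (b:ℝ)^2) / 2 with hA
  set B : ℝ := vr * ((a:ℝ) - b) - ur * ((a:ℝ) - b) / 2 + α * ((a:ℝ) - b) / 3 with hB
  set q : Polynomial ℝ := Polynomial.C (p.coeff 2 * t - A) * Polynomial.X ^ 2 +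
      Polynomial.C (p.coeff 1 * t - B) * Polynomial.X + Polynomial.C (p.coeff 0 * t) with hq
  have hqdeg : q.degree ≤ 2 := Polynomial.degree_quadratic_le
  obtain ⟨L, hL⟩ := hV _ hθ q hqdeg
  refine ⟨L, ?_⟩
  have heq : (fun N : ℕ => (N : ℂ)⁻¹ * ∑ n ∈ Finset.Icc 1 N,
      f1 ((T.toEquiv ^ (a * (n : ℤ))) x) * f2 ((T.toEquiv ^ (b * (n : ℤ))) x) *
        Complex.exp (2 * Real.pi * Complex.I * (p.eval (n : ℝ)) * t))
      = (fun N : ℕ => (N : ℂ)⁻¹ * ∑ n ∈ Finset.Icc 1 N,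
      G1 ((S.toEquiv ^ (a * (n : ℤ))) (x, (↑ur, (↑vr, ↑wr)))) *
        G2 ((S.toEquiv ^ (b * (n : ℤ))) (x, (↑ur, (↑vr, ↑wr)))) *
        Complex.exp (2 * Real.pi * Complex.I * (q.eval (n : ℝ)))) := by
    funext N
    congr 1
    refine Finset.sum_congr rfl fun n _ => ?_
    -- expand the skew product orbit
    rw [WWaux.shear3_zpow, WWaux.shear3_zpow]
    rw [hG1, hG2]
    dsimp only
    rw [h1 (a * (n : ℤ)), h2 (b * (n : ℤ))]
    -- now prove the phase identity
    set ma : ℤ := a * (n : ℤ) with hma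
    set mb : ℤ := b * (n : ℤ) with hmb
    set Ra : ℝ := (ma : ℝ) * vr + (WWaux.c2 ma : ℝ) * ur + (WWaux.c3 ma : ℝ) * α with hRa
    set Rb : ℝ := (mb : ℝ) * vr + (WWaux.c2 mb : ℝ) * ur + (WWaux.c3 mb : ℝ) * α with hRb
    have hsm : ∀ (m : ℤ) (r : ℝ), m • ((r : 𝕋)) = (((m : ℝ) * r : ℝ) : 𝕋) := by
      intro m r
      rw [← AddCircle.coe_zsmul, zsmul_eq_mul]
    have hcoord : ∀ m : ℤ, ((wr : 𝕋) + m • (vr : 𝕋) + WWaux.c2 m • (ur : 𝕋)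
        + WWaux.c3 m • ((α : 𝕋)))
        = (((wr + ((m : ℝ) * vr + (WWaux.c2 m : ℝ) * ur + (WWaux.c3 m : ℝ) * α) : ℝ)) : 𝕋) := by
      intro m
      rw [hsm, hsm, hsm, ← AddCircle.coe_add, ← AddCircle.coe_add, ← AddCircle.coe_add]
      congr 1
      ring
    have hphase : ((AddCircle.toCircle ((wr : 𝕋) + ma • (vr : 𝕋) + WWaux.c2 ma • (ur : 𝕋)
          + WWaux.c3 ma • ((α : 𝕋))) : Circle) : ℂ) *
        ((AddCircle.toCircle (-((wr : 𝕋) + mb • (vr : 𝕋) + WWaux.c2 mb • (ur : 𝕋)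
          + WWaux.c3 mb • ((α : 𝕋)))) : Circle) : ℂ) *
        Complex.exp (2 * Real.pi * Complex.I * (q.eval (n : ℝ)))
        = Complex.exp (2 * Real.pi * Complex.I * (p.eval (n : ℝ)) * t) := by
      have hmul : ∀ x y : 𝕋, ((AddCircle.toCircle x : Circle) : ℂ) *
          ((AddCircle.toCircle (-y) : Circle) : ℂ)
          = ((AddCircle.toCircle (x - y) : Circle) : ℂ) := by
        intro x' y'
        rw [sub_eq_add_neg, AddCircle.toCircle_add, Circle.coe_mul]
      rw [hmul, hcoord, hcoord, ← AddCircle.coe_sub]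
      have hsub : (wr + Ra) - (wr + Rb) = Ra - Rb := by ring
      rw [hsub, AddCircle.toCircle_apply_mk, Circle.coe_exp]
      rw [← Complex.exp_add]
      congr 1
      -- real key identity
      have hkey : (Ra - Rb) + q.eval (n : ℝ) = p.eval (n : ℝ) * t := by
        rw [hRa, hRb, hq, hpeval]
        simp only [Polynomial.eval_add, Polynomial.eval_mul, Polynomial.eval_pow,
          Polynomial.eval_C, Polynomial.eval_X]
        rw [WWaux.c2_real, WWaux.c2_real, WWaux.c3_real, WWaux.c3_real, hA, hB, hαdef, hma, hmb]
        push_cast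
        field_simp
        ring
      have hkeyC : ((Ra : ℝ) : ℂ) - ((Rb : ℝ) : ℂ) + ((q.eval (n : ℝ) : ℝ) : ℂ)
          = ((p.eval (n : ℝ) : ℝ) : ℂ) * (t : ℂ) := by
        exact_mod_cast congrArg Complex.ofReal hkey
      push_cast
      linear_combination (2 * (Real.pi : ℂ) * Complex.I) * hkeyC
    linear_combination (-(g1 ((T.toEquiv ^ ma) x) * g2 ((T.toEquiv ^ mb) x))) * hphase
  rw [heq]
  exact hL
end
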